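/- arXiv:2508.06940 — 4 statements merged into one kernel-verified Lean document; each statement's English description precedes it below -/
import Mathlib

section
/- Let q ∈ [2,∞) be real, ρ ∈ (0,1), and set λ := ln( μ*·(1+ρ·(1/μ*−1))^q + (1−μ*)·(1−ρ)^q ) / ((q−1)·ln(1/μ*)). For a nonnegative function f : Ω → ℝ, equality holds in ‖T_ρ f‖_q ≤ ‖f‖_1^{1−λ} · ‖f‖_q^{λ} if and only if f is constant, or f has exactly one nonzero value, attained at a point x* with μ(x*) = μ*. -/
open Finset

/-- Expectation of `f` under the probability mass function `μ` on a finite set. -/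
noncomputable def expct {Ω : Type*} [Fintype Ω] (μ : Ω → ℝ) (f : Ω → ℝ) : ℝ :=
  ∑ x, μ x * f x

/-- The noise operator `T_ρ f = ρ f + (1-ρ) E[f]`. -/
noncomputable def noiseOp {Ω : Type*} [Fintype Ω] (μ : Ω → ℝ) (ρ : ℝ) (f : Ω → ℝ) : Ω → ℝ :=
  fun x => ρ * f x + (1 - ρ) * expct μ f

/-- The `q`-norm `(E_{x∼μ} |f(x)|^q)^{1/q}`. -/
noncomputable def qNorm {Ω : Type*} [Fintype Ω] (μ : Ω → ℝ) (q : ℝ) (f : Ω → ℝ) : ℝ :=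
  (∑ x, μ x * |f x| ^ q) ^ (1 / q)


open Real

lemma two_vec_hoelder {a b c d v : ℝ} (ha : 0 ≤ a) (hb : 0 ≤ b) (hc : 0 ≤ c) (hd : 0 ≤ d)
    (hv0 : 0 ≤ v) (hv1 : v ≤ 1) :
    a ^ (1 - v) * b ^ v + c ^ (1 - v) * d ^ v ≤ (a + c) ^ (1 - v) * (b + d) ^ v := by
  rcases eq_or_lt_of_le hv0 with rfl | hv0'
  · simp
  rcases eq_or_lt_of_le hv1 with rfl | hv1'
  · simp
  have h1v : (0:ℝ) < 1 - v := by linarith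
  by_cases hac : a + c = 0
  · have ha0 : a = 0 := by linarith [hc, ha]
    have hc0 : c = 0 := by linarith [hc, ha]
    simp [ha0, hc0, zero_rpow (ne_of_gt h1v)]
  by_cases hbd : b + d = 0
  · have hb0 : b = 0 := by linarith [hb, hd]
    have hd0 : d = 0 := by linarith [hb, hd]
    simp [hb0, hd0, zero_rpow (ne_of_gt hv0')]
  have hacp : 0 < a + c := lt_of_le_of_ne (by positivity) (Ne.symm hac)
  have hbdp : 0 < b + d := lt_of_le_of_ne (by positivity) (Ne.symm hbd)
  have key : ∀ x y : ℝ, 0 ≤ x → 0 ≤ y →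
      x ^ (1-v) * y ^ v ≤ ((1-v) * (x/(a+c)) + v * (y/(b+d))) * ((a+c)^(1-v) * (b+d)^v) := by
    intro x y hx hy
    have h := Real.geom_mean_le_arith_mean2_weighted (le_of_lt h1v) (le_of_lt hv0')
      (div_nonneg hx hacp.le) (div_nonneg hy hbdp.le) (by ring)
    have e1 : (x/(a+c)) ^ (1-v) * (y/(b+d)) ^ v
        = (x ^ (1-v) * y ^ v) / ((a+c)^(1-v) * (b+d)^v) := by
      rw [Real.div_rpow hx hacp.le, Real.div_rpow hy hbdp.le]
      ring
    rw [e1, div_le_iff₀ (by positivity)] at h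
    linarith [h]
  have k1 := key a b ha hb
  have k2 := key c d hc hd
  have sum1 : ((1-v) * (a/(a+c)) + v * (b/(b+d))) + ((1-v) * (c/(a+c)) + v * (d/(b+d))) = 1 := by
    field_simp
    ring
  calc a ^ (1 - v) * b ^ v + c ^ (1 - v) * d ^ v
      ≤ (((1-v) * (a/(a+c)) + v * (b/(b+d))) + ((1-v) * (c/(a+c)) + v * (d/(b+d))))
        * ((a+c)^(1-v) * (b+d)^v) := by rw [add_mul]; exact add_le_add k1 k2
    _ = (a + c) ^ (1 - v) * (b + d) ^ v := by rw [sum1, one_mul]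

lemma two_vec_hoelder_lt {a b c d v : ℝ} (ha : 0 < a) (hb : 0 < b) (hc : 0 < c) (hd : 0 < d)
    (hv0 : 0 < v) (hv1 : v < 1) (hne : b * c ≠ a * d) :
    a ^ (1 - v) * b ^ v + c ^ (1 - v) * d ^ v < (a + c) ^ (1 - v) * (b + d) ^ v := by
  have hsc := Real.strictConcaveOn_rpow hv0 hv1
  have hxy : b / a ≠ d / c := by
    intro h
    apply hne
    field_simp at h
    linarith [h]
  have hacp : 0 < a + c := by linarith
  have h := hsc.2 (Set.mem_Ici.2 (by positivity : (0:ℝ) ≤ b / a))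
    (Set.mem_Ici.2 (by positivity : (0:ℝ) ≤ d / c)) hxy
    (by positivity : 0 < a / (a + c)) (by positivity : 0 < c / (a + c))
    (by field_simp)
  simp only [smul_eq_mul] at h
  have e1 : a / (a + c) * (b / a) + c / (a + c) * (d / c) = (b + d) / (a + c) := by
    field_simp
  rw [e1] at h
  have h2 := mul_lt_mul_of_pos_left h hacp
  calc a ^ (1 - v) * b ^ v + c ^ (1 - v) * d ^ v
      = (a + c) * (a / (a + c) * (b / a) ^ v + c / (a + c) * (d / c) ^ v) := by
        rw [Real.div_rpow hb.le ha.le, Real.div_rpow hd.le hc.le]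
        rw [Real.rpow_sub ha, Real.rpow_sub hc, Real.rpow_one, Real.rpow_one]
        field_simp
    _ < (a + c) * ((b + d) / (a + c)) ^ v := h2
    _ = (a + c) ^ (1 - v) * (b + d) ^ v := by
        rw [Real.div_rpow (by linarith : (0:ℝ) ≤ b + d) hacp.le,
          Real.rpow_sub hacp, Real.rpow_one]
        field_simp

lemma rpow_le_rpow_iff_exp {a b e : ℝ} (ha : 0 ≤ a) (hb : 0 ≤ b) (he : 0 < e) :
    a ^ e ≤ b ^ e ↔ a ≤ b := by
  constructor
  · intro h
    by_contra hab
    push_neg at hab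
    exact absurd h (not_le.2 (Real.rpow_lt_rpow hb hab he))
  · intro h
    exact Real.rpow_le_rpow ha h he.le

lemma ftc_pow {β q ρ s : ℝ} (hβ : 0 < β) (hq : 1 ≤ q) (hρ : 0 ≤ ρ) (hs : 0 < s) :
    ∫ r in (0:ℝ)..ρ, (β + r * s) ^ (q - 1) = ((β + ρ * s) ^ q - β ^ q) / (q * s) := by
  have hq0 : (0:ℝ) < q := by linarith
  have hderiv : ∀ r ∈ Set.uIcc (0:ℝ) ρ,
      HasDerivAt (fun r => (β + r * s) ^ q / (q * s)) ((β + r * s) ^ (q - 1)) r := by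
    intro r hr
    rw [Set.uIcc_of_le hρ] at hr
    have hrpos : 0 < β + r * s := by
      have : 0 ≤ r * s := mul_nonneg hr.1 hs.le
      linarith
    have hinner : HasDerivAt (fun r : ℝ => β + r * s) s r := by
      simpa using ((hasDerivAt_id r).mul_const s).const_add β
    have houter := hinner.rpow_const (p := q) (Or.inl hrpos.ne')
    have := houter.div_const (q * s)
    refine this.congr_deriv ?_
    rw [div_eq_iff (mul_ne_zero hq0.ne' hs.ne')]
    ring
  have hint : IntervalIntegrable (fun r => (β + r * s) ^ (q - 1)) MeasureTheory.volume 0 ρ := by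
    apply Continuous.intervalIntegrable
    apply Continuous.rpow_const
    · continuity
    · intro r; right; linarith
  have := intervalIntegral.integral_eq_sub_of_hasDerivAt hderiv hint
  rw [this]
  simp only [zero_mul, add_zero]
  ring

noncomputable def thc (ρ q t : ℝ) : ℝ :=
  (q * ρ * t * (ρ*t+(1-ρ))^(q-1) - (ρ*t+(1-ρ))^q + (1-ρ)^q) / ((q-1) * t^q)

noncomputable def bbc (ρ q t : ℝ) : ℝ :=
  q * ρ * (ρ*t+(1-ρ))^(q-1) - q * thc ρ q t * t^(q-1)

lemma thc_ge {ρ q t : ℝ} (hρ0 : 0 < ρ) (hρ1 : ρ < 1) (hq : 2 ≤ q) (ht : 1 ≤ t) :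
    ρ*ρ*(ρ*t+(1-ρ))^(q-2) ≤ thc ρ q t * t^(q-2) := by
  have ht0 : (0:ℝ) < t := by linarith
  have hβ0 : (0:ℝ) < 1 - ρ := by linarith
  set β := 1 - ρ with hβ
  set w := ρ*t + β with hwdef
  have hw0 : (0:ℝ) < w := by positivity
  have hq1 : (1:ℝ) < q := by linarith
  have hq1' : q - 1 ≠ 0 := by linarith
  -- AM-GM
  have am := Real.geom_mean_le_arith_mean2_weighted
    (div_nonneg (by linarith : (0:ℝ) ≤ q - 2) (by linarith : (0:ℝ) ≤ q - 1))
    (div_nonneg zero_le_one (by linarith : (0:ℝ) ≤ q - 1))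
    (Real.rpow_nonneg hw0.le (q-1)) (Real.rpow_nonneg hβ0.le (q-1))
    (by rw [← add_div, show q-2+1 = q-1 by ring, div_self hq1'])
  have e1 : (w^(q-1)) ^ ((q-2)/(q-1)) = w^(q-2) := by
    rw [← Real.rpow_mul hw0.le]
    congr 1
    rw [mul_comm, div_mul_cancel₀ _ hq1']
  have e2 : ((β:ℝ)^(q-1)) ^ ((1:ℝ)/(q-1)) = β := by
    rw [← Real.rpow_mul hβ0.le, mul_one_div, div_self hq1', Real.rpow_one]
  rw [e1, e2] at am
  have star : (q-1) * β * (w^(q-2)) ≤ (q-2) * (w^(q-1)) + β^(q-1) := by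
    have h := mul_le_mul_of_nonneg_left am (by linarith : (0:ℝ) ≤ q - 1)
    calc (q-1) * β * (w^(q-2)) = (q-1) * (w^(q-2) * β) := by ring
      _ ≤ (q-1) * ((q-2)/(q-1) * w^(q-1) + 1/(q-1) * β^(q-1)) := h
      _ = (q-2) * (w^(q-1)) + β^(q-1) := by field_simp
  set X := w^(q-2) with hXdef
  have hX0 : 0 ≤ X := Real.rpow_nonneg hw0.le _
  have hP : w^(q-1) = X*w := by
    rw [hXdef, show q-1 = (q-2)+1 by ring, Real.rpow_add hw0, Real.rpow_one]
  have hB : (β:ℝ)^q = β^(q-1)*β := by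
    conv_lhs => rw [show q = (q-1)+1 by ring]
    rw [Real.rpow_add hβ0, Real.rpow_one]
  have hW : w^q = X*w*w := by
    conv_lhs => rw [show q = ((q-2)+1)+1 by ring]
    rw [Real.rpow_add hw0, Real.rpow_add hw0, Real.rpow_one, hXdef]
  have htq : t^q = t^(q-2)*(t*t) := by
    conv_lhs => rw [show q = ((q-2)+1)+1 by ring]
    rw [Real.rpow_add ht0, Real.rpow_add ht0, Real.rpow_one]
    ring
  have htq2 : (0:ℝ) < t^(q-2) := Real.rpow_pos_of_pos ht0 _
  rw [thc, div_mul_eq_mul_div, le_div_iff₀ (by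
    apply mul_pos (by linarith : (0:ℝ) < q - 1) (Real.rpow_pos_of_pos ht0 q))]
  rw [hP] at star
  rw [hP, hW, hB, htq]
  have hρt : ρ * t = w - β := by rw [hwdef]; ring
  have e3 : q*ρ*t*(X*w) = q*(w-β)*(X*w) := by rw [← hρt]; ring
  have e4 : ρ*ρ*X*((q-1)*(t^(q-2)*(t*t))) = (q-1)*((w-β)*(w-β))*X*t^(q-2) := by
    rw [← hρt]; ring
  rw [e4, e3]
  have key2 := mul_le_mul_of_nonneg_left (mul_le_mul_of_nonneg_left star hβ0.le) htq2.le
  nlinarith [key2]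

lemma thc_pos {ρ q t : ℝ} (hρ0 : 0 < ρ) (hρ1 : ρ < 1) (hq : 2 ≤ q) (ht : 1 ≤ t) :
    0 < thc ρ q t := by
  have ht0 : (0:ℝ) < t := by linarith
  have h := thc_ge hρ0 hρ1 hq ht
  have h1 : (0:ℝ) < ρ*ρ*(ρ*t+(1-ρ))^(q-2) := by
    have : (0:ℝ) < ρ*t+(1-ρ) := by nlinarith
    positivity
  have h2 : (0:ℝ) < t^(q-2) := Real.rpow_pos_of_pos ht0 _
  nlinarith

lemma sprop {ρ q t x y : ℝ} (hρ0 : 0 < ρ) (hρ1 : ρ < 1) (hq : 2 ≤ q) (ht : 1 ≤ t)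
    (hx : 0 < x) (hxy : x ≤ y)
    (hsx : ρ*ρ*(ρ*x+(1-ρ))^(q-2) ≤ thc ρ q t * x^(q-2)) :
    ρ*ρ*(ρ*y+(1-ρ))^(q-2) ≤ thc ρ q t * y^(q-2) := by
  have hy : (0:ℝ) < y := lt_of_lt_of_le hx hxy
  have hβ0 : (0:ℝ) < 1 - ρ := by linarith
  have hthc := thc_pos hρ0 hρ1 hq ht
  rcases eq_or_lt_of_le hq with hq2 | hq2
  · rw [← hq2] at hsx ⊢
    norm_num at hsx ⊢
    linarith
  · set e := q - 2 with he
    have he0 : 0 < e := by rw [he]; linarith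
    set u := (thc ρ q t) ^ (1/e) with hu
    set p := (ρ*ρ) ^ (1/e) with hp
    have hu0 : 0 < u := Real.rpow_pos_of_pos hthc _
    have hp0 : 0 < p := Real.rpow_pos_of_pos (by positivity) _
    have hue : u ^ e = thc ρ q t := by
      rw [hu, ← Real.rpow_mul hthc.le, one_div, inv_mul_cancel₀ (ne_of_gt he0), Real.rpow_one]
    have hpe : p ^ e = ρ*ρ := by
      rw [hp, ← Real.rpow_mul (by positivity : (0:ℝ) ≤ ρ*ρ), one_div,
        inv_mul_cancel₀ (ne_of_gt he0), Real.rpow_one]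
    have conv : ∀ z : ℝ, 0 ≤ z → (ρ*ρ*(ρ*z+(1-ρ))^e ≤ thc ρ q t * z^e ↔ p*(ρ*z+(1-ρ)) ≤ u*z) := by
      intro z hz
      have hbz : (0:ℝ) ≤ ρ*z+(1-ρ) := by nlinarith
      rw [← hue, ← hpe, ← Real.mul_rpow hp0.le hbz, ← Real.mul_rpow hu0.le hz]
      exact rpow_le_rpow_iff_exp (by positivity) (by positivity) he0
    rw [conv x hx.le] at hsx
    rw [conv y hy.le]
    have hslope : 0 < u - p * ρ := by
      have h1 : p*ρ*x + p*(1-ρ) ≤ u*x := by nlinarith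
      nlinarith [mul_pos hp0 hβ0]
    nlinarith

lemma monoOn_Icc {f f' : ℝ → ℝ} {a b : ℝ}
    (hd : ∀ x ∈ Set.Icc a b, HasDerivAt f (f' x) x)
    (h0 : ∀ x ∈ Set.Ioo a b, 0 ≤ f' x) : MonotoneOn f (Set.Icc a b) := by
  apply monotoneOn_of_deriv_nonneg (convex_Icc a b)
  · exact fun x hx => (hd x hx).continuousAt.continuousWithinAt
  · intro x hx
    rw [interior_Icc] at hx
    exact ((hd x (Set.Ioo_subset_Icc_self hx)).differentiableAt).differentiableWithinAt
  · intro x hx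
    rw [interior_Icc] at hx
    rw [(hd x (Set.Ioo_subset_Icc_self hx)).deriv]
    exact h0 x hx

lemma antiOn_Icc {f f' : ℝ → ℝ} {a b : ℝ}
    (hd : ∀ x ∈ Set.Icc a b, HasDerivAt f (f' x) x)
    (h0 : ∀ x ∈ Set.Ioo a b, f' x ≤ 0) : AntitoneOn f (Set.Icc a b) := by
  apply antitoneOn_of_deriv_nonpos (convex_Icc a b)
  · exact fun x hx => (hd x hx).continuousAt.continuousWithinAt
  · intro x hx
    rw [interior_Icc] at hx
    exact ((hd x (Set.Ioo_subset_Icc_self hx)).differentiableAt).differentiableWithinAt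
  · intro x hx
    rw [interior_Icc] at hx
    rw [(hd x (Set.Ioo_subset_Icc_self hx)).deriv]
    exact h0 x hx

lemma majorant {ρ q t : ℝ} (hρ0 : 0 < ρ) (hρ1 : ρ < 1) (hq : 2 ≤ q) (ht : 1 ≤ t)
    {x : ℝ} (hx : 0 ≤ x) :
    (ρ*x+(1-ρ))^q ≤ (1-ρ)^q + bbc ρ q t * x + thc ρ q t * x^q := by
  have ht0 : (0:ℝ) < t := by linarith
  have hq1 : (1:ℝ) < q := by linarith
  have hβ0 : (0:ℝ) < 1 - ρ := by linarith
  set th := thc ρ q t with hth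
  set bb := bbc ρ q t with hbb
  set D : ℝ → ℝ := fun y => (1-ρ)^q + bb*y + th*y^q - (ρ*y+(1-ρ))^q with hD
  set D1 : ℝ → ℝ := fun y => bb + q*th*y^(q-1) - q*ρ*(ρ*y+(1-ρ))^(q-1) with hD1
  set D2 : ℝ → ℝ := fun y => q*(q-1)*(th*y^(q-2) - ρ*ρ*(ρ*y+(1-ρ))^(q-2)) with hD2
  have hDd : ∀ y : ℝ, HasDerivAt D (D1 y) y := by
    intro y
    have h1 : HasDerivAt (fun y:ℝ => y ^ q) (q * y^(q-1)) y :=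
      Real.hasDerivAt_rpow_const (Or.inr (by linarith))
    have h2 : HasDerivAt (fun y:ℝ => ρ*y+(1-ρ)) ρ y := by
      simpa using ((hasDerivAt_id y).const_mul ρ).add_const (1-ρ)
    have h3 := h2.rpow_const (p := q) (Or.inr (by linarith))
    have h4 : HasDerivAt (fun y:ℝ => (1-ρ)^q + bb*y + th*y^q)
        (bb + th*(q*y^(q-1))) y := by
      simpa [Pi.add_def] using (((hasDerivAt_id y).const_mul bb).const_add ((1-ρ)^q)).add (h1.const_mul th)
    have := h4.sub h3
    refine this.congr_deriv ?_
    simp only [hD1]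
    ring
  have hD1d : ∀ y : ℝ, HasDerivAt D1 (D2 y) y := by
    intro y
    have h1 : HasDerivAt (fun y:ℝ => y ^ (q-1)) ((q-1) * y^(q-1-1)) y :=
      Real.hasDerivAt_rpow_const (Or.inr (by linarith))
    have h2 : HasDerivAt (fun y:ℝ => ρ*y+(1-ρ)) ρ y := by
      simpa using ((hasDerivAt_id y).const_mul ρ).add_const (1-ρ)
    have h3 := h2.rpow_const (p := q-1) (Or.inr (by linarith))
    have h4 : HasDerivAt (fun y:ℝ => bb + q*th*y^(q-1)) (q*th*((q-1) * y^(q-1-1))) y := by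
      simpa using (h1.const_mul (q*th)).const_add bb
    have := h4.sub ((h3.const_mul (q*ρ)))
    refine this.congr_deriv ?_
    simp only [hD2]
    rw [show q-1-1 = q-2 by ring]
    ring
  have hNum : th * ((q-1) * t^q) = q*ρ*t*(ρ*t+(1-ρ))^(q-1) - (ρ*t+(1-ρ))^q + (1-ρ)^q := by
    rw [hth, thc, div_mul_cancel₀]
    exact ne_of_gt (mul_pos (by linarith : (0:ℝ) < q-1) (Real.rpow_pos_of_pos ht0 q))
  have htt : t^(q-1)*t = t^q := by
    conv_rhs => rw [show q = (q-1)+1 by ring, Real.rpow_add ht0, Real.rpow_one]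
  have hD1t : D1 t = 0 := by
    simp only [hD1, hbb, bbc, ← hth]
    ring
  have hDt : D t = 0 := by
    simp only [hD, hbb, bbc, ← hth]
    linear_combination (-(q * th)) * htt + (-1) * hNum
  have hD0 : D 0 = 0 := by
    simp only [hD]
    rw [Real.zero_rpow (by linarith : q ≠ 0)]
    ring_nf
  have hst : ρ*ρ*(ρ*t+(1-ρ))^(q-2) ≤ th * t^(q-2) := thc_ge hρ0 hρ1 hq ht
  have key : 0 ≤ D x := by
    rcases le_or_gt t x with hcase | hcase
    · -- x ≥ t
      have m1 : MonotoneOn D1 (Set.Icc t x) := by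
        apply monoOn_Icc (fun y _ => hD1d y)
        intro y hy
        have := sprop hρ0 hρ1 hq ht ht0 hy.1.le hst
        simp only [hD2]
        have h5 : (0:ℝ) ≤ th*y^(q-2) - ρ*ρ*(ρ*y+(1-ρ))^(q-2) := by linarith
        exact mul_nonneg (mul_nonneg (by linarith : (0:ℝ) ≤ q) (by linarith : (0:ℝ) ≤ q-1)) h5
      have hD1ge : ∀ y ∈ Set.Icc t x, 0 ≤ D1 y := by
        intro y hy
        have := m1 (Set.mem_Icc.2 ⟨le_refl t, hcase⟩) hy hy.1
        linarith [hD1t]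
      have m2 : MonotoneOn D (Set.Icc t x) :=
        monoOn_Icc (fun y _ => hDd y) (fun y hy => hD1ge y (Set.Ioo_subset_Icc_self hy))
      have := m2 (Set.mem_Icc.2 ⟨le_refl t, hcase⟩) (Set.mem_Icc.2 ⟨hcase, le_refl x⟩) hcase
      linarith [hDt]
    · -- x < t
      by_cases hall : ∀ y ∈ Set.Icc x t, D1 y ≤ 0
      · have m3 : AntitoneOn D (Set.Icc x t) :=
          antiOn_Icc (fun y _ => hDd y) (fun y hy => hall y (Set.Ioo_subset_Icc_self hy))
        have := m3 (Set.mem_Icc.2 ⟨le_refl x, hcase.le⟩)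
          (Set.mem_Icc.2 ⟨hcase.le, le_refl t⟩) hcase.le
        linarith [hDt]
      · push_neg at hall
        obtain ⟨y, hy, hy0⟩ := hall
        have hposs : ∀ z ∈ Set.Ioo (0:ℝ) x, 0 ≤ D1 z := by
          intro z hz
          by_contra hneg
          push_neg at hneg
          have hzy : z < y := lt_of_lt_of_le hz.2 hy.1
          obtain ⟨ξ, hξ, hslope⟩ := exists_hasDerivAt_eq_slope D1 D2 hzy
            (fun u _ => (hD1d u).continuousAt.continuousWithinAt)
            (fun u _ => hD1d u)
          have hsl : 0 < D2 ξ := by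
            rw [hslope]
            apply div_pos (by linarith) (by linarith)
          have hsξ : ρ*ρ*(ρ*ξ+(1-ρ))^(q-2) ≤ th * ξ^(q-2) := by
            simp only [hD2] at hsl
            by_contra hcon
            push_neg at hcon
            nlinarith [mul_pos (show (0:ℝ) < q*(q-1) by nlinarith)
              (show (0:ℝ) < ρ*ρ*(ρ*ξ+(1-ρ))^(q-2) - th*ξ^(q-2) by linarith)]
          have hm : MonotoneOn D1 (Set.Icc ξ t) := by
            apply monoOn_Icc (fun u _ => hD1d u)
            intro u hu
            have h6 := sprop hρ0 hρ1 hq ht (hz.1.trans hξ.1) hu.1.le hsξ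
            simp only [hD2]
            have h5 : (0:ℝ) ≤ th*u^(q-2) - ρ*ρ*(ρ*u+(1-ρ))^(q-2) := by linarith
            exact mul_nonneg (mul_nonneg (by linarith : (0:ℝ) ≤ q) (by linarith : (0:ℝ) ≤ q-1)) h5
          have hyt : y ≤ t := hy.2
          have hξt : ξ ≤ t := le_trans hξ.2.le hyt
          have := hm (Set.mem_Icc.2 ⟨hξ.2.le, hyt⟩) (Set.mem_Icc.2 ⟨hξt, le_refl t⟩) hyt
          linarith [hD1t]
        have m4 : MonotoneOn D (Set.Icc 0 x) :=
          monoOn_Icc (fun y _ => hDd y) (fun z hz => hposs z hz)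
        have := m4 (Set.mem_Icc.2 ⟨le_refl 0, hx⟩) (Set.mem_Icc.2 ⟨hx, le_refl x⟩) hx
        linarith [hD0]
  simp only [hD] at key
  linarith

lemma rpow_swap {x a b : ℝ} (hx : 0 ≤ x) : (x^a)^b = (x^b)^a := by
  rw [← Real.rpow_mul hx, mul_comm, Real.rpow_mul hx]

lemma kappa_lt {ρ q T v : ℝ} (hρ0 : 0 < ρ) (hρ1 : ρ < 1) (hq : 2 ≤ q) (hT : 1 < T)
    (hv0 : 0 < v) (hv1 : v < 1) :
    (1-ρ)^q + ((ρ*T^v+(1-ρ))^q - (1-ρ)^q)/T^v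
      < ((1-ρ)^q + ((ρ*T+(1-ρ))^q - (1-ρ)^q)/T)^v := by
  have hβ0 : (0:ℝ) < 1 - ρ := by linarith
  have hβ1 : (1:ℝ) - ρ < 1 := by linarith
  set β := 1 - ρ with hβ
  have hq0 : (0:ℝ) < q := by linarith
  have hq1 : (1:ℝ) < q := by linarith
  have hT0 : (0:ℝ) < T := by linarith
  have hTv0 : (0:ℝ) < T^v := Real.rpow_pos_of_pos hT0 v
  have hβq : (0:ℝ) < β^q := Real.rpow_pos_of_pos hβ0 q
  have hβq1 : β^q < 1 := Real.rpow_lt_one hβ0.le hβ1 hq0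
  have hAint : (∫ r in (0:ℝ)..ρ, (β + r*1)^(q-1)) = (1-β^q)/q := by
    rw [ftc_pow hβ0 hq1.le hρ0.le one_pos, mul_one, hβ, show (1:ℝ)-ρ+ρ = 1 by ring,
      Real.one_rpow, mul_one]
  have hBint : (∫ r in (0:ℝ)..ρ, (β + r*T)^(q-1)) = ((β+ρ*T)^q - β^q)/(q*T) :=
    ftc_pow hβ0 hq1.le hρ0.le hT0
  have hCint : (∫ r in (0:ℝ)..ρ, (β + r*(T^v))^(q-1))
      = ((β+ρ*(T^v))^q - β^q)/(q*(T^v)) :=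
    ftc_pow hβ0 hq1.le hρ0.le hTv0
  have hA0 : (0:ℝ) < (1-β^q)/q := div_pos (by linarith) hq0
  have hbrT0 : β < β + ρ*T := by nlinarith
  have hB0 : (0:ℝ) < ((β+ρ*T)^q - β^q)/(q*T) :=
    div_pos (by linarith [Real.rpow_lt_rpow hβ0.le hbrT0 hq0]) (by positivity)
  have hAB : (1-β^q)/q < ((β+ρ*T)^q - β^q)/(q*T) := by
    rw [div_lt_div_iff₀ hq0 (by positivity)]
    have bern1 : 1 + q*(ρ*(T-1)) < (1+ρ*(T-1))^q :=
      one_add_mul_self_lt_rpow_one_add (by nlinarith)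
        (ne_of_gt (by nlinarith : (0:ℝ) < ρ*(T-1))) hq1
    rw [show (1:ℝ)+ρ*(T-1) = β+ρ*T by rw [hβ]; ring] at bern1
    have bern2 : 1 + q*(-ρ) ≤ (1+(-ρ))^q :=
      one_add_mul_self_le_rpow_one_add (by linarith) hq1.le
    rw [show (1:ℝ)+(-ρ) = β by rw [hβ]; ring] at bern2
    nlinarith [mul_nonneg (sub_nonneg.2 hT.le) (show (0:ℝ) ≤ β^q - (1-q*ρ) by linarith)]
  set A := (1-β^q)/q with hAdef
  set B := ((β+ρ*T)^q - β^q)/(q*T) with hBdef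
  have hKA : β^q + q*A = 1 := by rw [hAdef]; field_simp; ring
  have hKB : β^q + q*B = β^q + ((ρ*T+β)^q - β^q)/T := by
    rw [hBdef, show β+ρ*T = ρ*T+β by ring]
    field_simp
  clear_value A B
  clear hAdef hBdef
  set c1 := (1-v)*(A^(1-v)*B^v)/A with hc1
  set c2 := v*(A^(1-v)*B^v)/B with hc2
  have hP0 : 0 < A^(1-v)*B^v := by positivity
  have hpoint : ∀ r ∈ Set.Icc (0:ℝ) ρ,
      (β + r*(T^v))^(q-1) ≤ c1*(β+r*1)^(q-1) + c2*(β+r*T)^(q-1) := by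
    intro r hr
    have hr0 : 0 ≤ r := hr.1
    rw [mul_one]
    have hbr : (0:ℝ) < β + r := by linarith
    have hbrT : (0:ℝ) < β + r*T := by nlinarith
    have step_a : β + r*(T^v) ≤ (β+r)^(1-v)*(β+r*T)^v := by
      have h0 := two_vec_hoelder hβ0.le hβ0.le hr0 (mul_nonneg hr0 hT0.le) hv0.le hv1.le
      have e1 : β^(1-v)*β^v = β := by
        rw [← Real.rpow_add hβ0, show (1:ℝ)-v+v = 1 by ring, Real.rpow_one]
      have e2 : r^(1-v)*(r*T)^v = r*(T^v) := by
        rw [Real.mul_rpow hr0 hT0.le, ← mul_assoc,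
          ← Real.rpow_add' hr0 (by norm_num : (1:ℝ)-v+v ≠ 0),
          show (1:ℝ)-v+v = 1 by ring, Real.rpow_one]
      rw [e1, e2] at h0
      exact h0
    have step_b : (β + r*(T^v))^(q-1) ≤ ((β+r)^(1-v)*(β+r*T)^v)^(q-1) :=
      Real.rpow_le_rpow (by positivity) step_a (by linarith)
    have step_c : ((β+r)^(1-v)*(β+r*T)^v)^(q-1)
        = ((β+r)^(q-1))^(1-v)*((β+r*T)^(q-1))^v := by
      rw [Real.mul_rpow (Real.rpow_nonneg hbr.le _) (Real.rpow_nonneg hbrT.le _),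
        rpow_swap hbr.le, rpow_swap hbrT.le]
    set F := (β+r)^(q-1) with hF
    set G := (β+r*T)^(q-1) with hG
    have hF0 : 0 < F := Real.rpow_pos_of_pos hbr _
    have hG0 : 0 < G := Real.rpow_pos_of_pos hbrT _
    have gm := Real.geom_mean_le_arith_mean2_weighted (by linarith : (0:ℝ) ≤ 1-v) hv0.le
      (div_nonneg hF0.le hA0.le) (div_nonneg hG0.le hB0.le) (by ring)
    have e3 : (F/A)^(1-v)*(G/B)^v = (F^(1-v)*G^v)/(A^(1-v)*B^v) := by
      rw [Real.div_rpow hF0.le hA0.le, Real.div_rpow hG0.le hB0.le]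
      ring
    rw [e3, div_le_iff₀ hP0] at gm
    have e4 : ((1-v)*(F/A) + v*(G/B))*(A^(1-v)*B^v) = c1*F + c2*G := by
      rw [hc1, hc2]
      field_simp
    rw [e4] at gm
    calc (β + r*(T^v))^(q-1) ≤ ((β+r)^(1-v)*(β+r*T)^v)^(q-1) := step_b
      _ = F^(1-v)*G^v := step_c
      _ ≤ c1*F + c2*G := gm
  have contS : ∀ s : ℝ, Continuous (fun r : ℝ => (β+r*s)^(q-1)) := by
    intro s
    have h : Continuous (fun r : ℝ => β + r*s) :=
      continuous_const.add (continuous_id.mul continuous_const)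
    exact h.rpow_const (fun r => Or.inr (by linarith))
  have intRHS : IntervalIntegrable (fun r => c1*(β+r*1)^(q-1) + c2*(β+r*T)^(q-1))
      MeasureTheory.volume 0 ρ :=
    ((continuous_const.mul (contS 1)).add (continuous_const.mul (contS T))).intervalIntegrable 0 ρ
  have mono := intervalIntegral.integral_mono_on hρ0.le
    ((contS (T^v)).intervalIntegrable 0 ρ) intRHS hpoint
  have hRHSint : (∫ r in (0:ℝ)..ρ, (c1*(β+r*1)^(q-1) + c2*(β+r*T)^(q-1)))
      = c1*A + c2*B := by
    rw [intervalIntegral.integral_add (f := fun r => c1*(β+r*1)^(q-1)) (g := fun r => c2*(β+r*T)^(q-1))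
      ((continuous_const.mul (contS 1)).intervalIntegrable 0 ρ)
      ((continuous_const.mul (contS T)).intervalIntegrable 0 ρ),
      intervalIntegral.integral_const_mul, intervalIntegral.integral_const_mul,
      hAint, hBint]
  have hCAB : c1*A + c2*B = A^(1-v)*B^v := by
    rw [hc1, hc2]
    field_simp
    ring
  rw [hCint, hRHSint, hCAB] at mono
  have step1 : β^q + ((ρ*T^v+β)^q - β^q)/T^v ≤ β^q + q*(A^(1-v)*B^v) := by
    rw [show ρ*T^v+β = β+ρ*(T^v) by ring]
    have h2 : ((β+ρ*(T^v))^q - β^q)/T^v = q * (((β+ρ*(T^v))^q - β^q)/(q*(T^v))) := by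
      field_simp
    rw [h2]
    have := mul_le_mul_of_nonneg_left mono hq0.le
    linarith
  have hne : β^q * (q*A) ≠ β^q * (q*B) := by
    intro h
    have h2 := mul_left_cancel₀ (ne_of_gt hβq) h
    have h3 := mul_left_cancel₀ (ne_of_gt hq0) h2
    exact (ne_of_lt hAB) h3
  have step2 : (β^q)^(1-v)*(β^q)^v + (q*A)^(1-v)*(q*B)^v
      < (β^q + q*A)^(1-v)*(β^q + q*B)^v :=
    two_vec_hoelder_lt hβq hβq (mul_pos hq0 hA0) (mul_pos hq0 hB0) hv0 hv1 hne
  have e5 : (β^q)^(1-v)*(β^q)^v = β^q := by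
    rw [← Real.rpow_add hβq, show (1:ℝ)-v+v = 1 by ring, Real.rpow_one]
  have e6 : (q*A)^(1-v)*(q*B)^v = q*(A^(1-v)*B^v) := by
    rw [Real.mul_rpow hq0.le hA0.le, Real.mul_rpow hq0.le hB0.le,
      show q^(1-v)*A^(1-v)*(q^v*B^v) = (q^(1-v)*q^v)*(A^(1-v)*B^v) by ring,
      ← Real.rpow_add hq0, show (1:ℝ)-v+v = 1 by ring, Real.rpow_one]
  rw [e5, e6, hKA, hKB, Real.one_rpow, one_mul] at step2
  linarith

lemma core_lt {Ω : Type*} [Fintype Ω] (μ : Ω → ℝ) (hμpos : ∀ x, 0 < μ x)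
    (hμsum : ∑ x, μ x = 1)
    {q ρ T : ℝ} (hq : 2 ≤ q) (hρ0 : 0 < ρ) (hρ1 : ρ < 1) (hT : 1 < T)
    (f : Ω → ℝ) (hf : ∀ x, 0 ≤ f x) (hEf : ∑ x, μ x * f x = 1)
    (hm1 : 1 < ∑ x, μ x * (f x)^q) (hmM : ∑ x, μ x * (f x)^q < T^(q-1)) :
    ∑ x, μ x * (ρ * f x + (1-ρ))^q
      < (∑ x, μ x * (f x)^q) ^
        (Real.log ((1-ρ)^q + ((ρ*T+(1-ρ))^q - (1-ρ)^q)/T) / ((q-1) * Real.log T)) := by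
  have hq1 : (1:ℝ) < q := by linarith
  have hqm1 : (0:ℝ) < q - 1 := by linarith
  have hq1' : q - 1 ≠ 0 := ne_of_gt hqm1
  have hT0 : (0:ℝ) < T := by linarith
  have hβ0 : (0:ℝ) < 1 - ρ := by linarith
  set m := ∑ x, μ x * (f x)^q with hmdef
  have hm0 : (0:ℝ) < m := by linarith
  set t := m^(1/(q-1)) with htdef
  have ht0 : (0:ℝ) < t := Real.rpow_pos_of_pos hm0 _
  have ht1 : 1 < t := by
    rw [htdef]
    exact (Real.one_lt_rpow_iff_of_pos hm0).2 (Or.inl ⟨hm1, by positivity⟩)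
  have hTq : (T^(q-1))^(1/(q-1)) = T := by
    rw [← Real.rpow_mul hT0.le, mul_one_div, div_self hq1', Real.rpow_one]
  have htT : t < T := by
    rw [htdef, ← hTq]
    exact Real.rpow_lt_rpow hm0.le hmM (by positivity)
  have hmt : t^(q-1) = m := by
    rw [htdef, ← Real.rpow_mul hm0.le, one_div, inv_mul_cancel₀ hq1', Real.rpow_one]
  set w := ρ*t+(1-ρ) with hwdef
  have hw0 : (0:ℝ) < w := by nlinarith
  -- step 1 : sum bound
  have sum1 : ∑ x, μ x * (ρ * f x + (1-ρ))^q
      ≤ ∑ x, μ x * ((1-ρ)^q + bbc ρ q t * f x + thc ρ q t * (f x)^q) :=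
    Finset.sum_le_sum (fun x _ =>
      mul_le_mul_of_nonneg_left (majorant hρ0 hρ1 hq ht1.le (hf x)) (hμpos x).le)
  have sum2 : ∑ x, μ x * ((1-ρ)^q + bbc ρ q t * f x + thc ρ q t * (f x)^q)
      = (1-ρ)^q + bbc ρ q t + thc ρ q t * m := by
    rw [Finset.sum_congr rfl (fun x _ => show μ x * ((1-ρ)^q + bbc ρ q t * f x
        + thc ρ q t * (f x)^q) = (1-ρ)^q * μ x + bbc ρ q t * (μ x * f x)
        + thc ρ q t * (μ x * (f x)^q) by ring)]
    rw [Finset.sum_add_distrib, Finset.sum_add_distrib, ← Finset.mul_sum, ← Finset.mul_sum,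
      ← Finset.mul_sum, hμsum, hEf, ← hmdef]
    ring
  -- kappa identity
  have htq : t^q = t^(q-1)*t := by
    conv_lhs => rw [show q = (q-1)+1 by ring, Real.rpow_add ht0, Real.rpow_one]
  have hkap : (1-ρ)^q + bbc ρ q t + thc ρ q t * t^(q-1)
      = (1-ρ)^q + ((ρ*t+(1-ρ))^q - (1-ρ)^q)/t := by
    have htne : t ≠ 0 := ne_of_gt ht0
    have htqne : t^(q-1) ≠ 0 := ne_of_gt (Real.rpow_pos_of_pos ht0 _)
    rw [bbc, thc, htq]
    field_simp
    ring
  -- step 2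
  have hlogT : 0 < Real.log T := Real.log_pos hT
  have hlogt : 0 < Real.log t := Real.log_pos ht1
  set v := Real.log t / Real.log T with hvdef
  have hv0 : 0 < v := div_pos hlogt hlogT
  have hv1 : v < 1 := (div_lt_one hlogT).2 (Real.log_lt_log ht0 htT)
  have hTv : T^v = t := by
    rw [Real.rpow_def_of_pos hT0, hvdef, mul_div_cancel₀ _ (ne_of_gt hlogT),
      Real.exp_log ht0]
  have hklt := kappa_lt hρ0 hρ1 hq hT hv0 hv1
  rw [hTv] at hklt
  -- K' positivity
  set K := (1-ρ)^q + ((ρ*T+(1-ρ))^q - (1-ρ)^q)/T with hKdef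
  have hK0 : 0 < K := by
    have h1 : (1-ρ)^q < (ρ*T+(1-ρ))^q :=
      Real.rpow_lt_rpow hβ0.le (by nlinarith) (by linarith)
    have h2 : 0 < ((ρ*T+(1-ρ))^q - (1-ρ)^q)/T := div_pos (by linarith) hT0
    positivity
  have hfin : m ^ (Real.log K / ((q-1) * Real.log T)) = K ^ v := by
    rw [Real.rpow_def_of_pos hm0, Real.rpow_def_of_pos hK0]
    congr 1
    have hlogm : Real.log m = (q-1)*Real.log t := by rw [← hmt, Real.log_rpow ht0]
    rw [hlogm, hvdef]
    field_simp
  rw [hfin]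
  calc ∑ x, μ x * (ρ * f x + (1-ρ))^q
      ≤ (1-ρ)^q + bbc ρ q t + thc ρ q t * m := by rw [← sum2]; exact sum1
    _ = (1-ρ)^q + ((ρ*t+(1-ρ))^q - (1-ρ)^q)/t := by rw [← hkap, hmt]
    _ < K ^ v := hklt

lemma normalized_cases {Ω : Type*} [Fintype Ω] (μ : Ω → ℝ) (hμpos : ∀ x, 0 < μ x)
    (hμsum : ∑ x, μ x = 1) (μs : ℝ) (hμs_le : ∀ x, μs ≤ μ x)
    (hμs0 : 0 < μs) (hμs1 : μs < 1)
    {q ρ lam : ℝ} (hq : 2 ≤ q) (hρ0 : 0 < ρ) (hρ1 : ρ < 1)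
    (hlamT : lam = Real.log ((1-ρ)^q + ((ρ*(1/μs)+(1-ρ))^q - (1-ρ)^q)/(1/μs))
      / ((q-1) * Real.log (1/μs)))
    (g : Ω → ℝ) (hg : ∀ x, 0 ≤ g x) (hEg : ∑ x, μ x * g x = 1)
    (heqg : ∑ x, μ x * (ρ * g x + (1-ρ))^q = (∑ x, μ x * (g x)^q) ^ lam) :
    (∀ x, g x = 1) ∨ (∃ xs, μ xs = μs ∧ g xs = 1/μs ∧ ∀ y, y ≠ xs → g y = 0) := by
  classical
  have hq1 : (1:ℝ) < q := by linarith
  have hqm1 : (0:ℝ) < q - 1 := by linarith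
  set T := 1/μs with hTdef
  have hT0 : (0:ℝ) < T := by positivity
  have hT1 : (1:ℝ) < T := by rw [hTdef, lt_div_iff₀ hμs0]; linarith
  have hμsT : μs * T = 1 := by rw [hTdef]; field_simp
  -- pointwise Bernoulli
  have hbern : ∀ x, 1 + q*(g x - 1) ≤ (g x)^q := by
    intro x
    have := one_add_mul_self_le_rpow_one_add (by linarith [hg x] : (-1:ℝ) ≤ g x - 1) hq1.le
    rwa [show (1:ℝ) + (g x - 1) = g x by ring] at this
  set m := ∑ x, μ x * (g x)^q with hmdef
  have hm1 : 1 ≤ m := by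
    have h1 : ∑ x, μ x * (1 + q*(g x - 1)) ≤ m := by
      apply Finset.sum_le_sum
      exact fun x _ => mul_le_mul_of_nonneg_left (hbern x) (hμpos x).le
    have h2 : ∑ x, μ x * (1 + q*(g x - 1)) = 1 := by
      rw [Finset.sum_congr rfl (fun x _ => show μ x * (1 + q*(g x - 1))
          = (1 - q)*μ x + q*(μ x * g x) by ring), Finset.sum_add_distrib,
        ← Finset.mul_sum, ← Finset.mul_sum, hμsum, hEg]
      ring
    linarith
  -- pointwise upper bound g ≤ T
  have hgT : ∀ x, g x ≤ T := by
    intro x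
    have h1 : μ x * g x ≤ 1 := by
      rw [← hEg]
      exact Finset.single_le_sum (f := fun x => μ x * g x)
        (fun i _ => mul_nonneg (hμpos i).le (hg i)) (Finset.mem_univ x)
    have h2 := hμs_le x
    rw [hTdef]
    rw [le_div_iff₀ hμs0]
    nlinarith [hμpos x, hg x]
  have hgq : ∀ x, (g x)^q ≤ T^(q-1) * g x := by
    intro x
    rcases eq_or_lt_of_le (hg x) with h0 | h0
    · rw [← h0, Real.zero_rpow (by linarith : q ≠ 0)]
      simp
    · have e1 : (g x)^q = (g x)^(q-1) * g x := by
        conv_lhs => rw [show q = (q-1)+1 by ring, Real.rpow_add h0, Real.rpow_one]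
      rw [e1]
      exact mul_le_mul_of_nonneg_right (Real.rpow_le_rpow (hg x) (hgT x) hqm1.le) (hg x)
  have hmM : m ≤ T^(q-1) := by
    have h1 : m ≤ ∑ x, μ x * (T^(q-1) * g x) := by
      apply Finset.sum_le_sum
      exact fun x _ => mul_le_mul_of_nonneg_left (hgq x) (hμpos x).le
    have h2 : ∑ x, μ x * (T^(q-1) * g x) = T^(q-1) := by
      rw [Finset.sum_congr rfl (fun x _ => show μ x * (T^(q-1) * g x)
          = T^(q-1) * (μ x * g x) by ring), ← Finset.mul_sum, hEg, mul_one]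
    linarith
  -- dichotomy
  rcases eq_or_lt_of_le hm1 with hc1 | hc1
  · -- m = 1 : g constant 1
    left
    intro x
    by_contra hne
    have hstrict : 1 + q*(g x - 1) < (g x)^q := by
      have := one_add_mul_self_lt_rpow_one_add (by linarith [hg x] : (-1:ℝ) ≤ g x - 1)
        (by intro h; exact hne (by linarith [sub_eq_zero.1 h]) ) hq1
      rwa [show (1:ℝ) + (g x - 1) = g x by ring] at this
    have h1 : ∑ y, μ y * (1 + q*(g y - 1)) < m := by
      apply Finset.sum_lt_sum
      · exact fun y _ => mul_le_mul_of_nonneg_left (hbern y) (hμpos y).le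
      · exact ⟨x, Finset.mem_univ x, mul_lt_mul_of_pos_left hstrict (hμpos x)⟩
    have h2 : ∑ y, μ y * (1 + q*(g y - 1)) = 1 := by
      rw [Finset.sum_congr rfl (fun y _ => show μ y * (1 + q*(g y - 1))
          = (1 - q)*μ y + q*(μ y * g y) by ring), Finset.sum_add_distrib,
        ← Finset.mul_sum, ← Finset.mul_sum, hμsum, hEg]
      ring
    rw [← hc1] at h1
    linarith
  rcases eq_or_lt_of_le hmM with hcM | hcM
  · -- m = T^(q-1) : indicator case
    right
    have hpt : ∀ x, (g x)^q = T^(q-1) * g x := by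
      have hsum0 : ∑ x, μ x * (T^(q-1) * g x - (g x)^q) = 0 := by
        rw [Finset.sum_congr rfl (fun x _ => show μ x * (T^(q-1) * g x - (g x)^q)
            = T^(q-1) * (μ x * g x) - μ x * (g x)^q by ring),
          Finset.sum_sub_distrib, ← Finset.mul_sum, hEg, ← hmdef, ← hcM, mul_one]
        ring
      have hterm := (Finset.sum_eq_zero_iff_of_nonneg (fun x _ =>
        mul_nonneg (hμpos x).le (by linarith [hgq x]))).1 hsum0
      intro x
      have := hterm x (Finset.mem_univ x)
      have hμx := hμpos x
      have : T^(q-1) * g x - (g x)^q = 0 := by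
        rcases mul_eq_zero.1 this with h | h
        · exact absurd h (ne_of_gt hμx)
        · exact h
      linarith
    have hdich : ∀ x, g x = 0 ∨ g x = T := by
      intro x
      rcases eq_or_lt_of_le (hg x) with h0 | h0
      · exact Or.inl h0.symm
      · right
        have he : (g x)^(q-1) * g x = T^(q-1) * g x := by
          rw [← hpt x]
          conv_rhs => rw [show q = (q-1)+1 by ring, Real.rpow_add h0, Real.rpow_one]
        have he2 : (g x)^(q-1) = T^(q-1) := mul_right_cancel₀ (ne_of_gt h0) he
        by_contra hne
        rcases lt_or_gt_of_ne hne with hlt | hgt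
        · exact absurd he2 (ne_of_lt (Real.rpow_lt_rpow (hg x) hlt hqm1))
        · exact absurd he2.symm (ne_of_lt (Real.rpow_lt_rpow hT0.le hgt hqm1))
    set S := Finset.univ.filter (fun x => g x = T) with hSdef
    have hSsum : ∑ x ∈ S, μ x = μs := by
      have h1 : ∑ x ∈ S, μ x * g x + ∑ x ∈ Finset.univ.filter (fun x => ¬(g x = T)), μ x * g x
          = 1 := by rw [Finset.sum_filter_add_sum_filter_not, hEg]
      have h2 : ∑ x ∈ S, μ x * g x = T * ∑ x ∈ S, μ x := by
        rw [Finset.mul_sum]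
        apply Finset.sum_congr rfl
        intro x hx
        rw [hSdef] at hx
        rw [(Finset.mem_filter.1 hx).2]
        ring
      have h3 : ∑ x ∈ Finset.univ.filter (fun x => ¬(g x = T)), μ x * g x = 0 := by
        apply Finset.sum_eq_zero
        intro x hx
        have := (Finset.mem_filter.1 hx).2
        rcases hdich x with h | h
        · rw [h, mul_zero]
        · exact absurd h this
      rw [h2, h3, add_zero] at h1
      have hT0' : T ≠ 0 := ne_of_gt hT0
      rw [hTdef, one_div, inv_mul_eq_iff_eq_mul₀ hμs0.ne', mul_one] at h1
      linarith [h1]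
    have hSne : S.Nonempty := by
      by_contra hemp
      rw [Finset.not_nonempty_iff_eq_empty] at hemp
      rw [hemp, Finset.sum_empty] at hSsum
      linarith
    obtain ⟨xs, hxs⟩ := hSne
    have hsing : ∀ y ∈ S, y = xs := by
      intro y hy
      by_contra hne
      have hsub : {xs, y} ⊆ S := by
        intro z hz
        rcases Finset.mem_insert.1 hz with h | h
        · rwa [h]
        · rw [Finset.mem_singleton.1 h]; exact hy
      have hpair : μ xs + μ y ≤ ∑ x ∈ S, μ x := by
        rw [← Finset.sum_pair (Ne.symm hne)]
        exact Finset.sum_le_sum_of_subset_of_nonneg hsub (fun i _ _ => (hμpos i).le)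
      rw [hSsum] at hpair
      have := hμs_le xs
      have := hμs_le y
      linarith
    have hμxs : μ xs = μs := by
      have h1 : μ xs ≤ ∑ x ∈ S, μ x :=
        Finset.single_le_sum (fun i _ => (hμpos i).le) hxs
      rw [hSsum] at h1
      exact le_antisymm h1 (hμs_le xs)
    refine ⟨xs, hμxs, ?_, ?_⟩
    · have := (Finset.mem_filter.1 hxs).2
      rw [this, hTdef]
    · intro y hy
      rcases hdich y with h | h
      · exact h
      · exfalso
        apply hy
        apply hsing
        rw [hSdef, Finset.mem_filter]
        exact ⟨Finset.mem_univ y, h⟩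
  · -- 1 < m < T^(q-1) : contradiction with strict inequality
    exfalso
    have hlt := core_lt μ hμpos hμsum hq hρ0 hρ1 hT1 g hg hEg hc1 hcM
    rw [← hmdef] at hlt
    rw [heqg, hlamT, hTdef] at hlt
    exact lt_irrefl _ hlt

theorem stmt1 {Ω : Type*} [Fintype Ω] (hΩ : 2 ≤ Fintype.card Ω)
    (μ : Ω → ℝ) (hμpos : ∀ x, 0 < μ x) (hμsum : ∑ x, μ x = 1)
    (μs : ℝ) (hμs_le : ∀ x, μs ≤ μ x) (hμs_mem : ∃ x, μ x = μs)
    (q ρ lam : ℝ) (hq : 2 ≤ q) (hρ0 : 0 < ρ) (hρ1 : ρ < 1)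
    (hlam : lam = Real.log (μs * (1 + ρ * (1 / μs - 1)) ^ q + (1 - μs) * (1 - ρ) ^ q) /
      ((q - 1) * Real.log (1 / μs)))
    (f : Ω → ℝ) (hf : ∀ x, 0 ≤ f x) :
    qNorm μ q (noiseOp μ ρ f) = qNorm μ 1 f ^ (1 - lam) * qNorm μ q f ^ lam ↔
      (∃ c : ℝ, ∀ x, f x = c) ∨
        (∃ xs, μ xs = μs ∧ f xs ≠ 0 ∧ ∀ y, y ≠ xs → f y = 0) := by
  classical
  obtain ⟨x₀, hx₀⟩ := hμs_mem
  have hμs0 : 0 < μs := hx₀ ▸ hμpos x₀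
  have hμs1 : μs < 1 := by
    obtain ⟨y₀, hy₀⟩ := Fintype.exists_ne_of_one_lt_card (by omega) x₀
    have hpair : μ x₀ + μ y₀ ≤ ∑ x, μ x := by
      rw [← Finset.sum_pair hy₀.symm]
      exact Finset.sum_le_sum_of_subset_of_nonneg (Finset.subset_univ _)
        (fun i _ _ => (hμpos i).le)
    rw [hμsum] at hpair
    have h1 := hμs_le x₀
    have h2 := hμs_le y₀
    linarith
  have hq0 : (0:ℝ) < q := by linarith
  have hq1 : (1:ℝ) < q := by linarith
  have hβ0 : (0:ℝ) < 1 - ρ := by linarith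
  have hqne : q ≠ 0 := ne_of_gt hq0
  -- lam conversions
  have hKeq : μs * (1 + ρ * (1 / μs - 1)) ^ q + (1 - μs) * (1 - ρ) ^ q
      = (1-ρ)^q + ((ρ*(1/μs)+(1-ρ))^q - (1-ρ)^q)/(1/μs) := by
    rw [show (1:ℝ) + ρ * (1 / μs - 1) = ρ*(1/μs)+(1-ρ) by ring,
      show ((ρ*(1/μs)+(1-ρ))^q - (1-ρ)^q)/(1/μs) = ((ρ*(1/μs)+(1-ρ))^q - (1-ρ)^q)*μs from by
        rw [one_div, div_inv_eq_mul]]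
    ring
  have hlamT : lam = Real.log ((1-ρ)^q + ((ρ*(1/μs)+(1-ρ))^q - (1-ρ)^q)/(1/μs))
      / ((q-1) * Real.log (1/μs)) := by rw [hlam, hKeq]
  have hTb0 : (0:ℝ) < ρ*(1/μs)+(1-ρ) := by positivity
  -- helper: (x^q)^(1/q) = x
  have hqinv : ∀ x : ℝ, 0 ≤ x → (x^q)^(1/q) = x := by
    intro x hx
    rw [← Real.rpow_mul hx, mul_one_div, div_self hqne, Real.rpow_one]
  constructor
  · -- forward
    intro heq
    have ha0 : 0 ≤ expct μ f :=
      Finset.sum_nonneg (fun x _ => mul_nonneg (hμpos x).le (hf x))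
    rcases eq_or_lt_of_le ha0 with ha | ha
    · -- expectation zero: f ≡ 0
      left
      refine ⟨0, fun x => ?_⟩
      have := (Finset.sum_eq_zero_iff_of_nonneg
        (fun x _ => mul_nonneg (hμpos x).le (hf x))).1 ha.symm x (Finset.mem_univ x)
      rcases mul_eq_zero.1 this with h | h
      · exact absurd h (ne_of_gt (hμpos x))
      · exact h
    · set a := expct μ f with hadef
      set g : Ω → ℝ := fun x => f x / a with hgdef
      have hgf : ∀ x, f x = a * g x := by
        intro x
        rw [hgdef]
        field_simp
      have hg0 : ∀ x, 0 ≤ g x := fun x => div_nonneg (hf x) ha.le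
      have hEg : ∑ x, μ x * g x = 1 := by
        rw [Finset.sum_congr rfl (fun x _ => show μ x * g x = (μ x * f x)/a by
          rw [hgdef]; ring), ← Finset.sum_div]
        rw [show ∑ x, μ x * f x = a from rfl]
        field_simp
      -- compute the three norms
      have hS1 : ∑ x, μ x * |ρ * f x + (1 - ρ) * a| ^ q
          = a^q * ∑ x, μ x * (ρ * g x + (1-ρ))^q := by
        rw [Finset.mul_sum]
        apply Finset.sum_congr rfl
        intro x _
        have harg : ρ * f x + (1 - ρ) * a = a * (ρ * g x + (1-ρ)) := by
          rw [hgf x]; ring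
        have hgx : (0:ℝ) ≤ ρ * g x + (1-ρ) := add_nonneg (mul_nonneg hρ0.le (hg0 x)) hβ0.le
        rw [harg, abs_of_nonneg (mul_nonneg ha.le hgx), Real.mul_rpow ha.le hgx]
        ring
      have hSq : ∑ x, μ x * |f x| ^ q = a^q * ∑ x, μ x * (g x)^q := by
        rw [Finset.mul_sum]
        apply Finset.sum_congr rfl
        intro x _
        rw [abs_of_nonneg (hf x), hgf x, Real.mul_rpow ha.le (hg0 x)]
        ring
      have hSg0 : (0:ℝ) ≤ ∑ x, μ x * (ρ * g x + (1-ρ))^q :=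
        Finset.sum_nonneg (fun x _ => mul_nonneg (hμpos x).le (Real.rpow_nonneg
          (add_nonneg (mul_nonneg hρ0.le (hg0 x)) hβ0.le) q))
      have hmg0 : (0:ℝ) ≤ ∑ x, μ x * (g x)^q :=
        Finset.sum_nonneg (fun x _ => mul_nonneg (hμpos x).le (Real.rpow_nonneg (hg0 x) q))
      have hL : qNorm μ q (noiseOp μ ρ f)
          = a * (∑ x, μ x * (ρ * g x + (1-ρ))^q)^(1/q) := by
        rw [qNorm]
        simp only [noiseOp]
        rw [← hadef, hS1, Real.mul_rpow (by positivity) hSg0, hqinv a ha.le]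
      have hN1 : qNorm μ 1 f = a := by
        rw [qNorm, show (1:ℝ)/1 = 1 by norm_num, Real.rpow_one,
          Finset.sum_congr rfl (fun x _ => by rw [Real.rpow_one, abs_of_nonneg (hf x)])]
        rfl
      have hNq : qNorm μ q f = a * (∑ x, μ x * (g x)^q)^(1/q) := by
        rw [qNorm, hSq, Real.mul_rpow (by positivity) hmg0, hqinv a ha.le]
      rw [hL, hN1, hNq] at heq
      -- derive normalized equality
      have heqg : ∑ x, μ x * (ρ * g x + (1-ρ))^q = (∑ x, μ x * (g x)^q) ^ lam := by
        have e1 : (a * (∑ x, μ x * (g x)^q)^(1/q))^lam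
            = a^lam * ((∑ x, μ x * (g x)^q)^(1/q))^lam :=
          Real.mul_rpow ha.le (Real.rpow_nonneg hmg0 _)
        rw [e1] at heq
        have e2 : a ^ (1-lam) * (a^lam * ((∑ x, μ x * (g x)^q)^(1/q))^lam)
            = a * ((∑ x, μ x * (g x)^q)^lam)^(1/q) := by
          rw [← mul_assoc, ← Real.rpow_add ha, show (1:ℝ)-lam+lam = 1 by ring,
            Real.rpow_one, ← Real.rpow_mul hmg0, ← Real.rpow_mul hmg0, mul_comm (1/q) lam]
        rw [e2] at heq
        have e3 : (∑ x, μ x * (ρ * g x + (1-ρ))^q)^(1/q)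
            = ((∑ x, μ x * (g x)^q)^lam)^(1/q) := by
          have := mul_left_cancel₀ (ne_of_gt ha) heq
          exact this
        have e4 := congrArg (fun z => z^q) e3
        rw [← Real.rpow_mul hSg0, ← Real.rpow_mul (Real.rpow_nonneg hmg0 _),
          one_div, inv_mul_cancel₀ hqne, Real.rpow_one, Real.rpow_one] at e4
        exact e4
      rcases normalized_cases μ hμpos hμsum μs hμs_le hμs0 hμs1 hq hρ0 hρ1 hlamT
        g hg0 hEg heqg with hcase | ⟨xs, hμxs, hgxs, hgy⟩
      · left
        exact ⟨a, fun x => by rw [hgf x, hcase x, mul_one]⟩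
      · right
        refine ⟨xs, hμxs, ?_, ?_⟩
        · rw [hgf xs, hgxs]
          positivity
        · intro y hy
          rw [hgf y, hgy y hy, mul_zero]
  · -- backward
    intro hcases
    rcases hcases with ⟨c, hc⟩ | ⟨xs, hμxs, hfxs, hfy⟩
    · -- constant
      have : Nonempty Ω := Fintype.card_pos_iff.1 (by omega)
      obtain ⟨x₁⟩ := this
      have hc0 : 0 ≤ c := hc x₁ ▸ hf x₁
      have hexp : expct μ f = c := by
        rw [expct, Finset.sum_congr rfl (fun x _ => by rw [hc x]), ← Finset.sum_mul,
          hμsum, one_mul]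
      have hqn : ∀ r : ℝ, r ≠ 0 → qNorm μ r f = c := by
        intro r hr
        rw [qNorm, Finset.sum_congr rfl (fun x _ => by rw [hc x]), ← Finset.sum_mul,
          hμsum, one_mul, abs_of_nonneg hc0, ← Real.rpow_mul hc0, mul_one_div,
          div_self hr, Real.rpow_one]
      have hqnoise : qNorm μ q (noiseOp μ ρ f) = c := by
        rw [qNorm]
        have : ∀ x, μ x * |noiseOp μ ρ f x| ^ q = μ x * c ^ q := by
          intro x
          rw [show noiseOp μ ρ f x = ρ * f x + (1-ρ) * expct μ f from rfl, hc x, hexp,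
            show ρ * c + (1-ρ)*c = c by ring, abs_of_nonneg hc0]
        rw [Finset.sum_congr rfl (fun x _ => this x), ← Finset.sum_mul, hμsum, one_mul,
          hqinv c hc0]
      rw [hqnoise, hqn 1 one_ne_zero, hqn q hqne]
      rcases eq_or_lt_of_le hc0 with h0 | h0
      · rw [← h0]
        by_cases hl : lam = 0
        · rw [hl]
          norm_num
        · rw [Real.zero_rpow hl, mul_zero]
      · rw [← Real.rpow_add h0, show (1:ℝ)-lam+lam = 1 by ring, Real.rpow_one]
    · -- indicator
      set d := f xs with hddef
      have hd0 : 0 < d := lt_of_le_of_ne (hf xs) (Ne.symm hfxs)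
      have herase : ∀ F : Ω → ℝ, ∑ y ∈ Finset.univ.erase xs, F y + F xs = ∑ y, F y :=
        fun F => Finset.sum_erase_add Finset.univ F (Finset.mem_univ xs)
      have hμerase : ∑ y ∈ Finset.univ.erase xs, μ y = 1 - μs := by
        have := herase μ
        rw [hμsum] at this
        rw [← hμxs]
        linarith
      have hexp : expct μ f = μs * d := by
        rw [expct, ← herase (fun y => μ y * f y)]
        rw [Finset.sum_eq_zero (fun y hy => by
          rw [hfy y (Finset.ne_of_mem_erase hy), mul_zero]), zero_add, hμxs]
      have hN1 : qNorm μ 1 f = μs * d := by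
        rw [qNorm, show (1:ℝ)/1 = 1 by norm_num, Real.rpow_one,
          ← herase (fun y => μ y * |f y| ^ (1:ℝ))]
        rw [Finset.sum_eq_zero (fun y hy => by
          rw [hfy y (Finset.ne_of_mem_erase hy)]
          simp), zero_add, Real.rpow_one, abs_of_nonneg hd0.le, hμxs]
      have hNq : qNorm μ q f = μs^(1/q) * d := by
        rw [qNorm, ← herase (fun y => μ y * |f y| ^ q)]
        rw [Finset.sum_eq_zero (fun y hy => by
          rw [hfy y (Finset.ne_of_mem_erase hy)]
          rw [abs_zero, Real.zero_rpow hqne, mul_zero]), zero_add, hμxs,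
          abs_of_nonneg hd0.le, Real.mul_rpow hμs0.le (Real.rpow_nonneg hd0.le q),
          hqinv d hd0.le]
      set K0 := μs*(ρ*(1/μs)+(1-ρ))^q + (1-μs)*(1-ρ)^q with hK0def
      have hK00 : 0 < K0 := by
        have h1 : (0:ℝ) < (ρ*(1/μs)+(1-ρ))^q := Real.rpow_pos_of_pos hTb0 q
        have h2 : (0:ℝ) < (1-ρ)^q := Real.rpow_pos_of_pos hβ0 q
        have h3 : (0:ℝ) < 1 - μs := by linarith
        positivity
      have hL : qNorm μ q (noiseOp μ ρ f) = μs * d * K0^(1/q) := by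
        rw [qNorm, ← herase (fun y => μ y * |noiseOp μ ρ f y| ^ q)]
        have hval : ∀ y, y ≠ xs → noiseOp μ ρ f y = (1-ρ)*(μs*d) := by
          intro y hy
          rw [show noiseOp μ ρ f y = ρ * f y + (1-ρ) * expct μ f from rfl, hfy y hy,
            hexp]
          ring
        have hvalxs : noiseOp μ ρ f xs = (μs*d)*(ρ*(1/μs)+(1-ρ)) := by
          rw [show noiseOp μ ρ f xs = ρ * f xs + (1-ρ) * expct μ f from rfl, hexp,
            ← hddef]
          field_simp
        have e1 : ∑ y ∈ Finset.univ.erase xs, μ y * |noiseOp μ ρ f y| ^ q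
            = (1-μs) * ((μs*d)^q * (1-ρ)^q) := by
          rw [Finset.sum_congr rfl (fun y hy => by
            rw [hval y (Finset.ne_of_mem_erase hy), abs_of_nonneg (by positivity),
              Real.mul_rpow hβ0.le (by positivity)]), ← Finset.sum_mul, hμerase]
          ring
        have e2 : μ xs * |noiseOp μ ρ f xs| ^ q = μs * ((μs*d)^q * (ρ*(1/μs)+(1-ρ))^q) := by
          rw [hvalxs, abs_of_nonneg (by positivity), hμxs,
            Real.mul_rpow (by positivity) hTb0.le]
        rw [e1, e2, show (1-μs) * ((μs*d)^q * (1-ρ)^q) + μs * ((μs*d)^q * (ρ*(1/μs)+(1-ρ))^q)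
          = (μs*d)^q * K0 by rw [hK0def]; ring,
          Real.mul_rpow (by positivity) hK00.le, hqinv (μs*d) (by positivity)]
      rw [hL, hN1, hNq]
      -- K0 = μs ^ (-(lam*(q-1)))
      have hlog : Real.log (1/μs) = - Real.log μs := by
        rw [one_div, Real.log_inv]
      have hlogμs : Real.log μs ≠ 0 := by
        intro h
        rcases Real.log_eq_zero.mp h with h | h | h
        · linarith
        · linarith
        · linarith
      have hK0lam : lam * ((q-1) * Real.log (1/μs)) = Real.log K0 := by
        rw [hlam, show μs * (1 + ρ * (1 / μs - 1)) ^ q + (1 - μs) * (1 - ρ) ^ q = K0 from by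
          rw [hK0def, show (1:ℝ)+ρ*(1/μs-1) = ρ*(1/μs)+(1-ρ) by ring]]
        rw [div_mul_cancel₀]
        apply mul_ne_zero (by linarith : q - 1 ≠ 0)
        rw [hlog]
        exact neg_ne_zero.2 hlogμs
      have hKexp : K0 = μs ^ (-(lam*(q-1))) := by
        rw [Real.rpow_def_of_pos hμs0,
          show Real.log μs * (-(lam*(q-1))) = lam*((q-1)*(-Real.log μs)) by ring,
          ← hlog, hK0lam, Real.exp_log hK00]
      have eL : μs * d * K0^(1/q) = μs^(1+(-(lam*(q-1)))*(1/q)) * d := by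
        rw [hKexp, ← Real.rpow_mul hμs0.le, Real.rpow_add hμs0, Real.rpow_one]
        ring
      have eR : (μs*d)^(1-lam) * (μs^(1/q)*d)^lam = μs^(1-lam+(1/q)*lam) * d := by
        rw [Real.mul_rpow hμs0.le hd0.le, Real.mul_rpow (Real.rpow_nonneg hμs0.le _) hd0.le,
          ← Real.rpow_mul hμs0.le]
        rw [show μs^(1-lam)*d^(1-lam)*(μs^((1/q)*lam)*d^lam)
          = (μs^(1-lam)*μs^((1/q)*lam))*(d^(1-lam)*d^lam) by ring,
          ← Real.rpow_add hμs0, ← Real.rpow_add hd0,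
          show (1:ℝ)-lam+lam = 1 by ring, Real.rpow_one]
      rw [eL, eR, show (1:ℝ)+(-(lam*(q-1)))*(1/q) = 1-lam+(1/q)*lam from by
        field_simp
        ring]
end

section
/- Let 0 ≤ ρ ≤ 1 and set λ := ln(ρ·(1/μ*) + 1−ρ) / ln(1/μ*). Then for every nonnegative function f : Ω → ℝ it holds that ‖T_ρ f‖_∞ ≤ ‖f‖_1^{1−λ} · ‖f‖_∞^{λ}. Moreover, for 0 < ρ < 1, equality holds if and only if f is constant, or f has exactly one nonzero value, attained at a point x* with μ(x*) = μ*. -/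
open Finset

/-- The `∞`-norm `max_{x∈Ω} |f(x)|`. -/
noncomputable def infNorm {Ω : Type*} [Fintype Ω] (f : Ω → ℝ) : ℝ :=
  ⨆ x, |f x|

lemma infNorm_exists_max {Ω : Type*} [Fintype Ω] [Nonempty Ω] (f : Ω → ℝ) (hf : ∀ x, 0 ≤ f x) :
    ∃ x0, infNorm f = f x0 ∧ ∀ y, f y ≤ f x0 := by
  obtain ⟨x0, hx0⟩ := Finite.exists_max f
  refine ⟨x0, le_antisymm (ciSup_le fun y => ?_) ?_, hx0⟩
  · rw [abs_of_nonneg (hf y)]; exact hx0 y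
  · have := le_ciSup (Set.Finite.bddAbove (Set.finite_range (fun x => |f x|))) x0
    rwa [abs_of_nonneg (hf x0)] at this

lemma line_le_rpow {p m t : ℝ} (hp0 : 0 ≤ p) (hp1 : p ≤ 1) (hm0 : 0 < m) (hm1 : m < 1)
    (htm : m ≤ t) (ht1 : t ≤ 1) :
    (1 - t) / (1 - m) * m ^ p + (t - m) / (1 - m) ≤ t ^ p := by
  have h := (Real.concaveOn_rpow hp0 hp1).2 (Set.mem_Ici.2 hm0.le) (Set.mem_Ici.2 (zero_le_one))
    (show (0:ℝ) ≤ (1 - t) / (1 - m) from div_nonneg (by linarith) (by linarith))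
    (show (0:ℝ) ≤ (t - m) / (1 - m) from div_nonneg (by linarith) (by linarith))
    (show (1 - t) / (1 - m) + (t - m) / (1 - m) = 1 by
      rw [← add_div, show 1 - t + (t - m) = 1 - m by ring, div_self (show (1:ℝ) - m ≠ 0 by linarith)])
  simp only [smul_eq_mul] at h
  have ht : (1 - t) / (1 - m) * m + (t - m) / (1 - m) * 1 = t := by
    rw [mul_one, div_mul_eq_mul_div, ← add_div,
      div_eq_iff (show (1:ℝ) - m ≠ 0 by linarith)]
    ring
  rw [ht] at h
  simpa [Real.one_rpow] using h

lemma line_lt_rpow {p m t : ℝ} (hp0 : 0 < p) (hp1 : p < 1) (hm0 : 0 < m)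
    (htm : m < t) (ht1 : t < 1) :
    (1 - t) / (1 - m) * m ^ p + (t - m) / (1 - m) < t ^ p := by
  have h := (Real.strictConcaveOn_rpow hp0 hp1).2 (Set.mem_Ici.2 hm0.le)
    (Set.mem_Ici.2 (zero_le_one)) (by intro h; linarith [htm, ht1] : m ≠ (1:ℝ))
    (show (0:ℝ) < (1 - t) / (1 - m) from div_pos (by linarith) (by linarith))
    (show (0:ℝ) < (t - m) / (1 - m) from div_pos (by linarith) (by linarith))
    (show (1 - t) / (1 - m) + (t - m) / (1 - m) = 1 by
      rw [← add_div, show 1 - t + (t - m) = 1 - m by ring, div_self (show (1:ℝ) - m ≠ 0 by linarith)])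
  simp only [smul_eq_mul] at h
  have ht : (1 - t) / (1 - m) * m + (t - m) / (1 - m) * 1 = t := by
    rw [mul_one, div_mul_eq_mul_div, ← add_div,
      div_eq_iff (show (1:ℝ) - m ≠ 0 by linarith)]
    ring
  rw [ht] at h
  simpa [Real.one_rpow] using h

set_option maxHeartbeats 2000000 in
theorem stmt2 {Ω : Type*} [Fintype Ω] [Nonempty Ω] (hΩ : 2 ≤ Fintype.card Ω)
    (μ : Ω → ℝ) (hμpos : ∀ x, 0 < μ x) (hμsum : ∑ x, μ x = 1)
    (μs : ℝ) (hμs_le : ∀ x, μs ≤ μ x) (hμs_mem : ∃ x, μ x = μs)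
    (ρ lam : ℝ) (hρ0 : 0 ≤ ρ) (hρ1 : ρ ≤ 1)
    (hlam : lam = Real.log (ρ * (1 / μs) + 1 - ρ) / Real.log (1 / μs))
    (f : Ω → ℝ) (hf : ∀ x, 0 ≤ f x) :
    infNorm (noiseOp μ ρ f) ≤ qNorm μ 1 f ^ (1 - lam) * infNorm f ^ lam ∧
      (0 < ρ → ρ < 1 →
        (infNorm (noiseOp μ ρ f) = qNorm μ 1 f ^ (1 - lam) * infNorm f ^ lam ↔
          (∃ c : ℝ, ∀ x, f x = c) ∨
            (∃ xs, μ xs = μs ∧ f xs ≠ 0 ∧ ∀ y, y ≠ xs → f y = 0))) := by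
  classical
  obtain ⟨xm0, hxm0⟩ := hμs_mem
  have hμs0 : 0 < μs := hxm0 ▸ hμpos xm0
  have hμs1 : μs < 1 := by
    obtain ⟨a, b, hab⟩ := Fintype.exists_pair_of_one_lt_card (α := Ω) (by omega)
    have h1 : μ a < ∑ x, μ x :=
      Finset.single_lt_sum hab.symm (Finset.mem_univ a) (Finset.mem_univ b) (hμpos b)
        (fun k _ _ => (hμpos k).le)
    have := hμs_le a
    linarith [hμsum ▸ h1]
  obtain ⟨xM, hMeq, hMax⟩ := infNorm_exists_max f hf
  have hM0 : 0 ≤ f xM := hf xM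
  have hE0 : 0 ≤ expct μ f := Finset.sum_nonneg fun x _ => mul_nonneg (hμpos x).le (hf x)
  have hEleM : expct μ f ≤ f xM := by
    calc expct μ f = ∑ x, μ x * f x := rfl
      _ ≤ ∑ x, μ x * f xM :=
          Finset.sum_le_sum fun x _ => mul_le_mul_of_nonneg_left (hMax x) (hμpos x).le
      _ = f xM := by rw [← Finset.sum_mul, hμsum, one_mul]
  have hEgeμsM : μs * f xM ≤ expct μ f := by
    have h1 : μ xM * f xM ≤ expct μ f :=
      Finset.single_le_sum (f := fun x => μ x * f x)
        (fun x _ => mul_nonneg (hμpos x).le (hf x)) (Finset.mem_univ xM)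
    have h2 := mul_le_mul_of_nonneg_right (hμs_le xM) hM0
    linarith
  have hq : qNorm μ 1 f = expct μ f := by
    unfold qNorm
    rw [Finset.sum_congr rfl fun x _ => by
      rw [Real.rpow_one, abs_of_nonneg (hf x)]]
    rw [show (1:ℝ)/1 = 1 by norm_num, Real.rpow_one]
    rfl
  have hT : infNorm (noiseOp μ ρ f) = ρ * f xM + (1 - ρ) * expct μ f := by
    have hnn : ∀ y, 0 ≤ noiseOp μ ρ f y := fun y =>
      add_nonneg (mul_nonneg hρ0 (hf y)) (mul_nonneg (by linarith) hE0)
    apply le_antisymm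
    · apply ciSup_le
      intro y
      rw [abs_of_nonneg (hnn y)]
      exact add_le_add (mul_le_mul_of_nonneg_left (hMax y) hρ0) le_rfl
    · have h := le_ciSup (Set.Finite.bddAbove (Set.finite_range (fun x => |noiseOp μ ρ f x|))) xM
      rw [abs_of_nonneg (hnn xM)] at h
      exact h
  -- lambda facts
  have hinv1 : 1 < 1/μs := one_lt_one_div hμs0 hμs1
  have hL : 0 < Real.log (1/μs) := Real.log_pos hinv1
  have hA1 : 1 ≤ ρ * (1/μs) + 1 - ρ := by
    nlinarith [mul_nonneg hρ0 (show (0:ℝ) ≤ 1/μs - 1 by linarith)]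
  have hAle : ρ * (1/μs) + 1 - ρ ≤ 1/μs := by
    nlinarith [mul_nonneg (show (0:ℝ) ≤ 1-ρ by linarith) (show (0:ℝ) ≤ 1/μs - 1 by linarith)]
  have hApos : 0 < ρ * (1/μs) + 1 - ρ := by linarith
  have hlam0 : 0 ≤ lam := by
    rw [hlam]; exact div_nonneg (Real.log_nonneg hA1) hL.le
  have hlam1 : lam ≤ 1 := by
    rw [hlam, div_le_one hL]
    exact (Real.log_le_log_iff hApos (by linarith)).2 hAle
  have hkey : μs ^ (1 - lam) = ρ + (1 - ρ) * μs := by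
    have hlog : Real.log μs = -Real.log (1/μs) := by
      rw [one_div, Real.log_inv]; ring
    have hexp : Real.log μs * (1 - lam) = Real.log μs + Real.log (ρ * (1/μs) + 1 - ρ) := by
      rw [hlam, hlog]
      field_simp
      ring
    rw [Real.rpow_def_of_pos hμs0, hexp, Real.exp_add, Real.exp_log hμs0, Real.exp_log hApos]
    field_simp
    ring
  by_cases hMz : f xM = 0
  · have hf0 : ∀ x, f x = 0 := fun x => le_antisymm (hMz ▸ hMax x) (hf x)
    have hE0' : expct μ f = 0 := by
      unfold expct
      rw [Finset.sum_congr rfl fun x _ => by rw [hf0 x, mul_zero]]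
      exact Finset.sum_const_zero
    have hIf : infNorm f = 0 := by rw [hMeq, hMz]
    have hlhs : infNorm (noiseOp μ ρ f) = 0 := by rw [hT, hMz, hE0']; ring
    have hrhs : qNorm μ 1 f ^ (1-lam) * infNorm f ^ lam = 0 := by
      rw [hq, hE0', hIf]
      rcases eq_or_lt_of_le hlam1 with h | h
      · rw [h, sub_self, Real.rpow_zero, Real.rpow_one, one_mul]
      · rw [Real.zero_rpow (show (1:ℝ) - lam ≠ 0 from (sub_pos.2 h).ne'), zero_mul]
    refine ⟨by rw [hlhs, hrhs], fun _ _ => ?_⟩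
    rw [hlhs, hrhs]
    exact iff_of_true rfl (Or.inl ⟨0, hf0⟩)
  · have hMpos : 0 < f xM := lt_of_le_of_ne hM0 (Ne.symm hMz)
    have hEpos : 0 < expct μ f := lt_of_lt_of_le (by positivity) hEgeμsM
    set t := expct μ f / f xM with htdef
    have hEtM : expct μ f = t * f xM := by
      rw [htdef, div_mul_cancel₀ _ hMpos.ne']
    have ht0 : 0 < t := div_pos hEpos hMpos
    have htm : μs ≤ t := (le_div_iff₀ hMpos).2 hEgeμsM
    have ht1 : t ≤ 1 := (div_le_one hMpos).2 hEleM
    have hrhs : qNorm μ 1 f ^ (1 - lam) * infNorm f ^ lam = t ^ (1 - lam) * f xM := by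
      rw [hq, hMeq, hEtM, Real.mul_rpow ht0.le hMpos.le, mul_assoc,
        ← Real.rpow_add hMpos]
      norm_num
    have hlhs : infNorm (noiseOp μ ρ f) = (ρ + (1-ρ)*t) * f xM := by
      rw [hT, hEtM]; ring
    have hlinecalc : ρ + (1 - ρ) * t
        = (1 - t) / (1 - μs) * (μs ^ (1 - lam)) + (t - μs)/(1 - μs) := by
      rw [hkey, div_mul_eq_mul_div, ← add_div,
        eq_div_iff (show (1:ℝ) - μs ≠ 0 by linarith)]
      ring
    have hcore : ρ + (1 - ρ) * t ≤ t ^ (1 - lam) := by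
      rw [hlinecalc]
      exact line_le_rpow (by linarith) (by linarith) hμs0 hμs1 htm ht1
    have hineq : infNorm (noiseOp μ ρ f) ≤ qNorm μ 1 f ^ (1 - lam) * infNorm f ^ lam := by
      rw [hlhs, hrhs]
      exact mul_le_mul_of_nonneg_right hcore hMpos.le
    refine ⟨hineq, fun hρp hρlt => ?_⟩
    have hlamp : 0 < lam := by
      rw [hlam]
      refine div_pos (Real.log_pos ?_) hL
      nlinarith [mul_pos hρp (show (0:ℝ) < 1/μs - 1 by linarith)]
    have hlamlt : lam < 1 := by
      rw [hlam, div_lt_one hL]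
      refine Real.log_lt_log hApos ?_
      nlinarith [mul_pos (show (0:ℝ) < 1-ρ by linarith) (show (0:ℝ) < 1/μs - 1 by linarith)]
    constructor
    · intro heq
      rw [hlhs, hrhs] at heq
      have heq' : ρ + (1-ρ)*t = t ^ (1-lam) := mul_right_cancel₀ hMpos.ne' heq
      rcases eq_or_lt_of_le htm with htm' | htm'
      · -- t = μs
        right
        have hEeq : expct μ f = μs * f xM := by
          rw [hEtM, ← htm']
        have hsplit : μ xM * f xM + ∑ y ∈ Finset.univ.erase xM, μ y * f y = expct μ f := by
          unfold expct
          exact Finset.add_sum_erase _ (fun y => μ y * f y) (Finset.mem_univ xM)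
        have hsum : μ xM * f xM + ∑ y ∈ Finset.univ.erase xM, μ y * f y = μs * f xM := by
          rw [hsplit, hEeq]
        have h2 : 0 ≤ ∑ y ∈ Finset.univ.erase xM, μ y * f y :=
          Finset.sum_nonneg fun y _ => mul_nonneg (hμpos y).le (hf y)
        have h1 : 0 ≤ (μ xM - μs) * f xM :=
          mul_nonneg (by linarith [hμs_le xM]) hM0
        have hexpand : (μ xM - μs) * f xM = μ xM * f xM - μs * f xM := by ring
        have h1' : (μ xM - μs) * f xM = 0 := by linarith
        have h2' : ∑ y ∈ Finset.univ.erase xM, μ y * f y = 0 := by linarith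
        have hμxM : μ xM = μs := by
          rcases mul_eq_zero.1 h1' with h | h
          · linarith
          · exact absurd h hMz
        refine ⟨xM, hμxM, hMz, fun y hy => ?_⟩
        have hz := (Finset.sum_eq_zero_iff_of_nonneg
          (fun y _ => mul_nonneg (hμpos y).le (hf y))).1 h2' y
          (Finset.mem_erase.2 ⟨hy, Finset.mem_univ y⟩)
        rcases mul_eq_zero.1 hz with h | h
        · exact absurd h (hμpos y).ne'
        · exact h
      · rcases eq_or_lt_of_le ht1 with ht1' | ht1'
        · -- t = 1
          left
          have hEeq : expct μ f = f xM := by rw [hEtM, ht1', one_mul]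
          refine ⟨f xM, fun x => ?_⟩
          have hsum0 : ∑ x, μ x * (f xM - f x) = 0 := by
            have hswap : ∑ x, μ x * (f xM - f x)
                = (∑ x, μ x) * f xM - ∑ x, μ x * f x := by
              rw [Finset.sum_mul, ← Finset.sum_sub_distrib]
              exact Finset.sum_congr rfl fun x _ => by ring
            rw [hswap, hμsum, one_mul]
            have : ∑ x, μ x * f x = expct μ f := rfl
            rw [this, hEeq, sub_self]
          have hz := (Finset.sum_eq_zero_iff_of_nonneg
            (fun x _ => mul_nonneg (hμpos x).le (by linarith [hMax x]))).1 hsum0 x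
            (Finset.mem_univ x)
          rcases mul_eq_zero.1 hz with h | h
          · exact absurd h (hμpos x).ne'
          · linarith
        · exfalso
          have hstrict := line_lt_rpow (show (0:ℝ) < 1 - lam by linarith)
            (show 1 - lam < 1 by linarith) hμs0 htm' ht1'
          rw [← hlinecalc] at hstrict
          linarith [heq'.le, heq'.ge, hstrict]
    · rintro (⟨c, hc⟩ | ⟨xs, hμxs, hfxs, hzero⟩)
      · have hMc : f xM = c := hc xM
        have hEc : expct μ f = c := by
          unfold expct
          rw [Finset.sum_congr rfl fun x _ => by rw [hc x], ← Finset.sum_mul, hμsum, one_mul]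
        have htone : t = 1 := by
          rw [htdef, hEc, hMc, div_self (by rw [← hMc]; exact hMpos.ne')]
        rw [hlhs, hrhs, htone, Real.one_rpow]
        ring
      · have hxMxs : xM = xs := by
          by_contra hne
          exact hMz (hzero xM hne)
        have hfsM : f xs = f xM := by rw [hxMxs]
        have hEeq : expct μ f = μs * f xM := by
          unfold expct
          rw [Finset.sum_eq_single xs (fun y _ hy => by rw [hzero y hy, mul_zero])
            (fun h => absurd (Finset.mem_univ xs) h), hμxs, hfsM]
        have htμs : t = μs := by
          rw [htdef, hEeq, mul_div_assoc, div_self hMpos.ne', mul_one]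
        rw [hlhs, hrhs, htμs, hkey]
end

section
/- Let −μ*/(1−μ*) ≤ ρ < 0 and set λ := −ln(1−ρ) / ln(1−μ*). Then for every nonnegative function f : Ω → ℝ it holds that ‖T_ρ f‖_∞ ≤ ‖f‖_1^{1−λ} · ‖f‖_∞^{λ}. Moreover, if −μ*/(1−μ*) < ρ < 0, equality holds if and only if f is constant, or there exists a point x* with μ(x*) = μ* such that f(x*) = 0 and f is constant on Ω∖{x*}. -/
open Finset

private lemma infNorm_eq {Ω : Type*} [Fintype Ω] [Nonempty Ω] (f : Ω → ℝ) (x0 : Ω)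
    (hnn : ∀ x, 0 ≤ f x) (hmax : ∀ x, f x ≤ f x0) : infNorm f = f x0 := by
  unfold infNorm
  apply le_antisymm
  · exact ciSup_le fun x => by rw [abs_of_nonneg (hnn x)]; exact hmax x
  · calc f x0 = |f x0| := (abs_of_nonneg (hnn x0)).symm
      _ ≤ ⨆ x, |f x| := le_ciSup (f := fun x => |f x|)
        (Set.Finite.bddAbove (Set.finite_range _)) x0

private lemma core_ineq {μs ρ lam m E M : ℝ}
    (hμs0 : 0 < μs) (hμs1 : μs < 1) (hρ1 : ρ < 0)
    (hpow : (1 - μs) ^ (-lam) = 1 - ρ)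
    (hlam0 : 0 < lam) (hlam1 : lam ≤ 1)
    (hm0 : 0 ≤ m) (hmM : m ≤ M) (hmE : m ≤ E)
    (hEM : E ≤ μs * m + (1 - μs) * M) :
    ρ * m + (1 - ρ) * E ≤ E ^ (1 - lam) * M ^ lam := by
  have h1μ : 0 < 1 - μs := by linarith
  have hρ' : (0:ℝ) < 1 - ρ := by linarith
  have hE0 : 0 ≤ E := hm0.trans hmE
  have hM0 : 0 ≤ M := hm0.trans hmM
  have hEleM : E ≤ M := by nlinarith
  rcases eq_or_lt_of_le hE0 with hE | hE
  · have hm : m = 0 := le_antisymm (hmE.trans hE.symm.le) hm0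
    have hz : ρ * m + (1 - ρ) * E = 0 := by rw [hm, ← hE]; ring
    rw [hz]
    positivity
  · by_cases hc : E ≤ (1 - μs) * M
    · have hMpos : 0 < M := by nlinarith
      have hinv : (1 - ρ) = ((1 - μs)⁻¹) ^ lam := by
        rw [← hpow, Real.rpow_neg h1μ.le, ← Real.inv_rpow h1μ.le]
      have h2 : (1 - μs)⁻¹ ≤ M / E := by
        rw [show (1 - μs)⁻¹ = 1 / (1 - μs) from (one_div _).symm, div_le_div_iff₀ h1μ hE]
        nlinarith
      have h3 : ((1 - μs)⁻¹) ^ lam ≤ (M / E) ^ lam :=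
        Real.rpow_le_rpow (by positivity) h2 hlam0.le
      have h4 : (M / E) ^ lam * E = E ^ (1 - lam) * M ^ lam := by
        rw [Real.div_rpow hM0 hE0, Real.rpow_sub hE, Real.rpow_one]; ring
      have h5 : ρ * m ≤ 0 := mul_nonpos_of_nonpos_of_nonneg hρ1.le hm0
      calc ρ * m + (1 - ρ) * E ≤ (1 - ρ) * E := by linarith
        _ = ((1 - μs)⁻¹) ^ lam * E := by rw [hinv]
        _ ≤ (M / E) ^ lam * E := mul_le_mul_of_nonneg_right h3 hE0
        _ = E ^ (1 - lam) * M ^ lam := h4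
    · push_neg at hc
      have hMpos : 0 < M := by nlinarith
      have hμM : 0 < μs * M := by positivity
      set a := (M - E) / (μs * M) with ha_def
      set b := (E - (1 - μs) * M) / (μs * M) with hb_def
      have ha : 0 ≤ a := div_nonneg (by linarith) hμM.le
      have hb : 0 < b := div_pos (by linarith) hμM
      have hab : a + b = 1 := by rw [ha_def, hb_def]; field_simp; ring
      have hcomb : a * (1 - μs) + b * 1 = E / M := by
        rw [ha_def, hb_def]; field_simp; ring
      set p := 1 - lam with hp_def
      have hp0 : 0 ≤ p := by rw [hp_def]; linarith
      have hp1 : p ≤ 1 := by rw [hp_def]; linarith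
      have hconc := (Real.concaveOn_rpow hp0 hp1).2 (Set.mem_Ici.mpr h1μ.le)
        (Set.mem_Ici.mpr zero_le_one) ha hb.le hab
      simp only [smul_eq_mul, Real.one_rpow, mul_one] at hconc
      rw [show a * (1 - μs) + b = E / M by linarith [hcomb]] at hconc
      have hpows : (1 - μs) ^ p = (1 - μs) * (1 - ρ) := by
        rw [hp_def, show (1:ℝ) - lam = 1 + -lam by ring, Real.rpow_add h1μ, Real.rpow_one, hpow]
      have hmb : b * M ≤ m := by
        rw [hb_def, div_mul_eq_mul_div, div_le_iff₀ hμM]; nlinarith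
      have hid1 : ρ * (b * M) + (1 - ρ) * E = M * (a * ((1 - μs) * (1 - ρ)) + b) := by
        rw [ha_def, hb_def]; field_simp; ring
      have hMp : M ^ lam = M / M ^ p := by
        rw [show lam = 1 - p by rw [hp_def]; ring, Real.rpow_sub hMpos, Real.rpow_one]
      have hid2 : M * (E / M) ^ p = E ^ p * M ^ lam := by
        rw [Real.div_rpow hE0 hMpos.le, hMp]; ring
      calc ρ * m + (1 - ρ) * E ≤ ρ * (b * M) + (1 - ρ) * E := by
            nlinarith [mul_le_mul_of_nonpos_left hmb hρ1.le]
        _ = M * (a * ((1 - μs) * (1 - ρ)) + b) := hid1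
        _ = M * (a * (1 - μs) ^ p + b) := by rw [hpows]
        _ ≤ M * ((E / M) ^ p) := by
            apply mul_le_mul_of_nonneg_left _ hMpos.le
            exact hconc
        _ = E ^ p * M ^ lam := hid2

private lemma core_rev2 {μs ρ lam M : ℝ} (h1μ : 0 < 1 - μs) (hM : 0 ≤ M)
    (hpow : (1 - μs) ^ (-lam) = 1 - ρ) (hlam0 : 0 < lam) (hlam1 : lam < 1) :
    ρ * 0 + (1 - ρ) * ((1 - μs) * M) = ((1 - μs) * M) ^ (1 - lam) * M ^ lam := by
  rcases eq_or_lt_of_le hM with h | h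
  · rw [← h]
    rw [Real.zero_rpow hlam0.ne', mul_zero, mul_zero, mul_zero, mul_zero, add_zero]
  · rw [Real.mul_rpow h1μ.le h.le]
    have h1 : M ^ (1 - lam) * M ^ lam = M := by
      rw [← Real.rpow_add h]; norm_num
    have h2 : (1 - μs) ^ (1 - lam) = (1 - μs) * (1 - ρ) := by
      rw [show (1:ℝ) - lam = 1 + -lam by ring, Real.rpow_add h1μ, Real.rpow_one, hpow]
    rw [show (1 - μs) ^ (1-lam) * M ^ (1-lam) * M ^ lam
        = (1 - μs) ^ (1-lam) * (M ^ (1-lam) * M ^ lam) by ring, h1, h2]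
    ring

set_option maxHeartbeats 1000000 in
private lemma core_eq {μs ρ lam m E M : ℝ}
    (hμs0 : 0 < μs) (hμs1 : μs < 1) (hρ1 : ρ < 0)
    (hpow : (1 - μs) ^ (-lam) = 1 - ρ)
    (hlam0 : 0 < lam) (hlam1 : lam < 1)
    (hm0 : 0 ≤ m) (hmM : m ≤ M) (hmE : m ≤ E)
    (hEM : E ≤ μs * m + (1 - μs) * M) (hME : μs * M ≤ E)
    (heq : ρ * m + (1 - ρ) * E = E ^ (1 - lam) * M ^ lam) :
    m = M ∨ (m = 0 ∧ E = (1 - μs) * M) := by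
  have h1μ : 0 < 1 - μs := by linarith
  have hρ' : (0:ℝ) < 1 - ρ := by linarith
  have hM0 : 0 ≤ M := hm0.trans hmM
  rcases eq_or_lt_of_le hM0 with hM | hMpos
  · left; linarith
  have hE : 0 < E := lt_of_lt_of_le (by positivity) hME
  have hEleM : E ≤ M := by nlinarith
  by_cases hc : E ≤ (1 - μs) * M
  · right
    have hinv : (1 - ρ) = ((1 - μs)⁻¹) ^ lam := by
      rw [← hpow, Real.rpow_neg h1μ.le, ← Real.inv_rpow h1μ.le]
    have h2 : (1 - μs)⁻¹ ≤ M / E := by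
      rw [show (1 - μs)⁻¹ = 1 / (1 - μs) from (one_div _).symm, div_le_div_iff₀ h1μ hE]
      nlinarith
    have h4 : (M / E) ^ lam * E = E ^ (1 - lam) * M ^ lam := by
      rw [Real.div_rpow hM0 hE.le, Real.rpow_sub hE, Real.rpow_one]; ring
    have h3 : ((1 - μs)⁻¹) ^ lam ≤ (M / E) ^ lam :=
      Real.rpow_le_rpow (by positivity) h2 hlam0.le
    have h5 : (1 - ρ) * E ≤ E ^ (1 - lam) * M ^ lam := by
      rw [hinv, ← h4]; exact mul_le_mul_of_nonneg_right h3 hE.le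
    have h6 : ρ * m = 0 := by
      have := mul_nonpos_of_nonpos_of_nonneg hρ1.le hm0
      linarith
    have hm' : m = 0 := by
      rcases mul_eq_zero.mp h6 with h | h
      · exact absurd h hρ1.ne
      · exact h
    refine ⟨hm', ?_⟩
    have h7 : ((1 - μs)⁻¹) ^ lam * E = (M / E) ^ lam * E := by
      rw [← hinv, h4]; linarith
    have h8 : ((1 - μs)⁻¹) ^ lam = (M / E) ^ lam := mul_right_cancel₀ hE.ne' h7
    have h9 : (1 - μs)⁻¹ = M / E := by
      by_contra hne
      exact absurd h8 (ne_of_lt (Real.rpow_lt_rpow (by positivity)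
        (lt_of_le_of_ne h2 hne) hlam0))
    have h10 : E = (1 - μs) * M := by
      field_simp at h9
      linarith
    exact h10
  · push_neg at hc
    left
    have hμM : 0 < μs * M := by positivity
    set a := (M - E) / (μs * M) with ha_def
    set b := (E - (1 - μs) * M) / (μs * M) with hb_def
    have ha : 0 ≤ a := div_nonneg (by linarith) hμM.le
    have hb : 0 < b := div_pos (by linarith) hμM
    have hab : a + b = 1 := by rw [ha_def, hb_def]; field_simp; ring
    have hcomb : a * (1 - μs) + b * 1 = E / M := by
      rw [ha_def, hb_def]; field_simp; ring
    set p := 1 - lam with hp_def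
    have hp0 : 0 < p := by rw [hp_def]; linarith
    have hp1 : p < 1 := by rw [hp_def]; linarith
    have hconc := (Real.concaveOn_rpow hp0.le hp1.le).2 (Set.mem_Ici.mpr h1μ.le)
      (Set.mem_Ici.mpr zero_le_one) ha hb.le hab
    simp only [smul_eq_mul, Real.one_rpow, mul_one] at hconc
    rw [show a * (1 - μs) + b = E / M by linarith [hcomb]] at hconc
    have hpows : (1 - μs) ^ p = (1 - μs) * (1 - ρ) := by
      rw [hp_def, show (1:ℝ) - lam = 1 + -lam by ring, Real.rpow_add h1μ, Real.rpow_one, hpow]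
    have hmb : b * M ≤ m := by
      rw [hb_def, div_mul_eq_mul_div, div_le_iff₀ hμM]; nlinarith
    have hid1 : ρ * (b * M) + (1 - ρ) * E = M * (a * ((1 - μs) * (1 - ρ)) + b) := by
      rw [ha_def, hb_def]; field_simp; ring
    have hMp : M ^ lam = M / M ^ p := by
      rw [show lam = 1 - p by rw [hp_def]; ring, Real.rpow_sub hMpos, Real.rpow_one]
    have hid2 : M * (E / M) ^ p = E ^ p * M ^ lam := by
      rw [Real.div_rpow hE.le hMpos.le, hMp]; ring
    have hch1 : ρ * m ≤ ρ * (b * M) := by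
      nlinarith [mul_le_mul_of_nonpos_left hmb hρ1.le]
    have hch3 : M * (a * (1 - μs) ^ p + b) ≤ M * ((E / M) ^ p) :=
      mul_le_mul_of_nonneg_left hconc hMpos.le
    have heq2 : M * (a * (1 - μs) ^ p + b) = M * ((E / M) ^ p) := by
      have e1 : ρ * (b * M) + (1 - ρ) * E = M * (a * (1 - μs) ^ p + b) := by
        rw [hid1, hpows]
      have e2 : M * ((E / M) ^ p) = E ^ p * M ^ lam := hid2
      linarith [heq, hch1, hch3, e1, e2]
    have hceq : a * (1 - μs) ^ p + b = (E / M) ^ p := mul_left_cancel₀ hMpos.ne' heq2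
    have ha0 : a = 0 := by
      by_contra hane
      have ha' : 0 < a := lt_of_le_of_ne ha (Ne.symm hane)
      have hne1 : (1 - μs) ≠ (1:ℝ) := by intro h; linarith
      have hstrict := (Real.strictConcaveOn_rpow hp0 hp1).2 (Set.mem_Ici.mpr h1μ.le)
        (Set.mem_Ici.mpr zero_le_one) hne1 ha' hb hab
      simp only [smul_eq_mul, Real.one_rpow, mul_one] at hstrict
      rw [show a * (1 - μs) + b = E / M by linarith [hcomb]] at hstrict
      exact absurd hceq (ne_of_lt hstrict)
    have hME2 : M = E := by
      rw [ha_def] at ha0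
      rcases div_eq_zero_iff.mp ha0 with h | h
      · linarith
      · exact absurd h hμM.ne'
    have hmeq : ρ * m = ρ * (b * M) := by
      have e1 : ρ * (b * M) + (1 - ρ) * E = M * (a * (1 - μs) ^ p + b) := by
        rw [hid1, hpows]
      linarith [heq, hch3, hid2, e1]
    have hm_eq : m = b * M := mul_left_cancel₀ hρ1.ne hmeq
    have hb1 : b = 1 := by
      rw [hb_def, ← hME2]
      field_simp
      ring
    rw [hm_eq, hb1, one_mul]

set_option maxHeartbeats 4000000 in
theorem stmt3 {Ω : Type*} [Fintype Ω] [Nonempty Ω] (hΩ : 2 ≤ Fintype.card Ω)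
    (μ : Ω → ℝ) (hμpos : ∀ x, 0 < μ x) (hμsum : ∑ x, μ x = 1)
    (μs : ℝ) (hμs_le : ∀ x, μs ≤ μ x) (hμs_mem : ∃ x, μ x = μs)
    (ρ lam : ℝ) (hρ0 : -(μs / (1 - μs)) ≤ ρ) (hρ1 : ρ < 0)
    (hlam : lam = -(Real.log (1 - ρ) / Real.log (1 - μs)))
    (f : Ω → ℝ) (hf : ∀ x, 0 ≤ f x) :
    infNorm (noiseOp μ ρ f) ≤ qNorm μ 1 f ^ (1 - lam) * infNorm f ^ lam ∧
      (-(μs / (1 - μs)) < ρ →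
        (infNorm (noiseOp μ ρ f) = qNorm μ 1 f ^ (1 - lam) * infNorm f ^ lam ↔
          (∃ c : ℝ, ∀ x, f x = c) ∨
            (∃ xs, μ xs = μs ∧ f xs = 0 ∧
              ∀ y z, y ≠ xs → z ≠ xs → f y = f z))) := by
  classical
  obtain ⟨x0, hx0⟩ := hμs_mem
  have hμs0 : 0 < μs := hx0 ▸ hμpos x0
  obtain ⟨y0, hy0⟩ := Fintype.exists_ne_of_one_lt_card (by omega) x0
  have hpair : μ x0 + μ y0 ≤ 1 := by
    rw [← hμsum, ← Finset.sum_pair (Ne.symm hy0)]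
    exact Finset.sum_le_sum_of_subset_of_nonneg (Finset.subset_univ _)
      (fun i _ _ => (hμpos i).le)
  have hμs1 : μs < 1 := by
    have := hμpos y0
    rw [← hx0]; linarith
  have h1μ : 0 < 1 - μs := by linarith
  have hρpos : (0:ℝ) < 1 - ρ := by linarith
  have hρ0' : -μs ≤ ρ * (1 - μs) := by
    have h := mul_le_mul_of_nonneg_right hρ0 h1μ.le
    rwa [neg_mul, div_mul_cancel₀ _ h1μ.ne'] at h
  have hlog1μ : Real.log (1 - μs) < 0 := Real.log_neg (by linarith) (by linarith)
  have hlogρ : 0 < Real.log (1 - ρ) := Real.log_pos (by linarith)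
  have hlam0 : 0 < lam := by
    have : Real.log (1 - ρ) / Real.log (1 - μs) < 0 := div_neg_of_pos_of_neg hlogρ hlog1μ
    rw [hlam]; linarith
  have hpow : (1 - μs) ^ (-lam) = 1 - ρ := by
    rw [Real.rpow_def_of_pos h1μ, hlam, neg_neg,
      show Real.log (1 - μs) * (Real.log (1 - ρ) / Real.log (1 - μs)) = Real.log (1 - ρ) by
        rw [mul_comm, div_mul_cancel₀ _ hlog1μ.ne]]
    exact Real.exp_log hρpos
  have hloglog : Real.log (1 - ρ) ≤ -Real.log (1 - μs) := by
    have h1 : (1 - ρ) * (1 - μs) ≤ 1 := by nlinarith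
    have h2 : 1 - ρ ≤ (1 - μs)⁻¹ := by
      rw [show (1 - μs)⁻¹ = 1 / (1 - μs) from (one_div _).symm, le_div_iff₀ h1μ]
      linarith
    calc Real.log (1 - ρ) ≤ Real.log ((1 - μs)⁻¹) := Real.log_le_log hρpos h2
      _ = -Real.log (1 - μs) := Real.log_inv _
  have hlam_le1 : lam ≤ 1 := by
    rw [hlam, neg_le, le_div_iff_of_neg hlog1μ]
    linarith
  -- max and min of f
  obtain ⟨xM, hxM0⟩ := Finite.exists_max f
  obtain ⟨xm, hxm0⟩ := Finite.exists_min f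
  obtain ⟨m, hm_def⟩ : ∃ m, f xm = m := ⟨f xm, rfl⟩
  obtain ⟨M, hM_def⟩ : ∃ M, f xM = M := ⟨f xM, rfl⟩
  obtain ⟨E, hE_def⟩ : ∃ E, ∑ x, μ x * f x = E := ⟨∑ x, μ x * f x, rfl⟩
  have hxm : ∀ x, m ≤ f x := fun x => hm_def ▸ hxm0 x
  have hxM : ∀ x, f x ≤ M := fun x => hM_def ▸ hxM0 x
  have hm0 : 0 ≤ m := hm_def ▸ hf xm
  have hmM : m ≤ M := (hxm xM).trans (hxM xM)
  have hqE : qNorm μ 1 f = E := by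
    unfold qNorm
    rw [Finset.sum_congr rfl (fun x _ => by
      rw [Real.rpow_one, abs_of_nonneg (hf x)] : ∀ x ∈ univ, μ x * |f x| ^ (1:ℝ) = μ x * f x)]
    rw [show (1:ℝ)/1 = 1 by norm_num, Real.rpow_one]
    exact hE_def
  have hiM : infNorm f = M := (infNorm_eq f xM hf hxM0).trans hM_def
  have hEsingle : ∀ x, μ x * f x ≤ E := fun x => hE_def ▸
    Finset.single_le_sum (f := fun x => μ x * f x)
      (fun i _ => mul_nonneg (hμpos i).le (hf i)) (Finset.mem_univ x)
  have hT_val : ∀ x, noiseOp μ ρ f x = ρ * f x + (1 - ρ) * E := fun x => by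
    unfold noiseOp expct
    rw [hE_def]
  have hTnn : ∀ x, 0 ≤ noiseOp μ ρ f x := fun x => by
    rw [hT_val]
    have h1 : μ x * f x ≤ E := hEsingle x
    have h2 : μs ≤ μ x := hμs_le x
    have key : 0 ≤ ρ + (1 - ρ) * μ x := by
      nlinarith [mul_le_mul_of_nonneg_left h2 hρpos.le]
    nlinarith [mul_nonneg (hf x) key, mul_le_mul_of_nonneg_left h1 hρpos.le]
  have hTmax : ∀ x, noiseOp μ ρ f x ≤ noiseOp μ ρ f xm := fun x => by
    rw [hT_val, hT_val]
    have := mul_le_mul_of_nonpos_left (hxm0 x) hρ1.le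
    linarith
  have hiT : infNorm (noiseOp μ ρ f) = ρ * m + (1 - ρ) * E := by
    rw [infNorm_eq (noiseOp μ ρ f) xm hTnn hTmax, hT_val, hm_def]
  have hmE : m ≤ E := by
    rw [← hE_def]
    calc m = (∑ x, μ x) * m := by rw [hμsum, one_mul]
      _ = ∑ x, μ x * m := by rw [Finset.sum_mul]
      _ ≤ ∑ x, μ x * f x := Finset.sum_le_sum
        (fun x _ => mul_le_mul_of_nonneg_left (hxm x) (hμpos x).le)
  have heraseμ : ∀ x1 : Ω, ∑ x ∈ univ.erase x1, μ x = 1 - μ x1 := fun x1 => by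
    have h := Finset.sum_erase_add univ μ (Finset.mem_univ x1)
    rw [hμsum] at h
    linarith
  have heraseE : ∀ x1 : Ω, ∑ x ∈ univ.erase x1, μ x * f x = E - μ x1 * f x1 := fun x1 => by
    have h := Finset.sum_erase_add univ (fun x => μ x * f x) (Finset.mem_univ x1)
    rw [hE_def] at h
    linarith
  have hsum_erase_le : ∀ x1 : Ω, ∑ x ∈ univ.erase x1, μ x * f x ≤ (1 - μ x1) * M := by
    intro x1
    calc ∑ x ∈ univ.erase x1, μ x * f x ≤ ∑ x ∈ univ.erase x1, μ x * M :=
          Finset.sum_le_sum (fun x _ => mul_le_mul_of_nonneg_left (hxM x) (hμpos x).le)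
      _ = (1 - μ x1) * M := by rw [← Finset.sum_mul, heraseμ x1]
  have hEM : E ≤ μs * m + (1 - μs) * M := by
    have h1 := hsum_erase_le xm
    rw [heraseE xm, hm_def] at h1
    have h2 : μs ≤ μ xm := hμs_le xm
    nlinarith [mul_nonneg (sub_nonneg.mpr h2) (sub_nonneg.mpr hmM)]
  have hME : μs * M ≤ E := by
    have h1 := hEsingle xM
    rw [hM_def] at h1
    nlinarith [mul_nonneg (sub_nonneg.mpr (hμs_le xM)) (hm0.trans hmM)]
  refine ⟨?_, ?_⟩
  · rw [hiT, hqE, hiM]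
    exact core_ineq hμs0 hμs1 hρ1 hpow hlam0 hlam_le1 hm0 hmM hmE hEM
  · intro hstrict
    have hlam_lt1 : lam < 1 := by
      have h1 : (1 - ρ) * (1 - μs) < 1 := by
        have h := mul_lt_mul_of_pos_right hstrict h1μ
        rw [neg_mul, div_mul_cancel₀ _ h1μ.ne'] at h
        nlinarith
      have h2 : 1 - ρ < (1 - μs)⁻¹ := by
        rw [show (1 - μs)⁻¹ = 1 / (1 - μs) from (one_div _).symm, lt_div_iff₀ h1μ]
        linarith
      have h3 : Real.log (1 - ρ) < -Real.log (1 - μs) := by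
        calc Real.log (1 - ρ) < Real.log ((1 - μs)⁻¹) := Real.log_lt_log hρpos h2
          _ = -Real.log (1 - μs) := Real.log_inv _
      rw [hlam, neg_lt, lt_div_iff_of_neg hlog1μ]
      linarith
    constructor
    · intro heq
      rw [hiT, hqE, hiM] at heq
      rcases core_eq hμs0 hμs1 hρ1 hpow hlam0 hlam_lt1 hm0 hmM hmE hEM hME heq with
        hcase | ⟨hma, hEa⟩
      · refine Or.inl ⟨m, fun x => le_antisymm ?_ (hxm x)⟩
        rw [hcase]; exact hxM x
      · rcases eq_or_lt_of_le (hm0.trans hmM) with hM | hMpos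
        · refine Or.inl ⟨0, fun x => le_antisymm ?_ (hf x)⟩
          rw [hM]; exact hxM x
        · have hμxm : μ xm = μs := by
            have h1 := hsum_erase_le xm
            rw [heraseE xm, hm_def, hma, mul_zero, sub_zero, hEa] at h1
            have h2 := hμs_le xm
            apply le_antisymm _ h2
            nlinarith
          right
          refine ⟨xm, hμxm, hm_def.trans hma, ?_⟩
          have h3 : ∑ x ∈ univ.erase xm, μ x * (M - f x) = 0 := by
            have e1 : ∑ x ∈ univ.erase xm, μ x * (M - f x)
                = (∑ x ∈ univ.erase xm, μ x * M) - ∑ x ∈ univ.erase xm, μ x * f x := by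
              rw [← Finset.sum_sub_distrib]
              exact Finset.sum_congr rfl (fun x _ => by ring)
            rw [e1, heraseE xm, hm_def, hma, mul_zero, sub_zero, hEa,
              ← Finset.sum_mul, heraseμ xm, hμxm]
            ring
          have h4 : ∀ x ∈ univ.erase xm, μ x * (M - f x) = 0 :=
            (Finset.sum_eq_zero_iff_of_nonneg
              (fun i _ => mul_nonneg (hμpos i).le (sub_nonneg.mpr (hxM i)))).mp h3
          have h5 : ∀ x, x ≠ xm → f x = M := by
            intro x hx
            have := h4 x (Finset.mem_erase.mpr ⟨hx, Finset.mem_univ x⟩)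
            rcases mul_eq_zero.mp this with h | h
            · exact absurd h (hμpos x).ne'
            · linarith
          intro y z hy hz
          rw [h5 y hy, h5 z hz]
    · intro hcase
      rw [hiT, hqE, hiM]
      rcases hcase with ⟨c, hc⟩ | ⟨xs, hμxs, hfxs, hconst⟩
      · have hcM : M = c := hM_def ▸ hc xM
        have hcm : m = c := hm_def ▸ hc xm
        have hcE : E = c := by
          rw [← hE_def, Finset.sum_congr rfl (fun x _ => by rw [hc x] : ∀ x ∈ univ,
            μ x * f x = μ x * c), ← Finset.sum_mul, hμsum, one_mul]
        rw [hcM, hcm, hcE]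
        have hc0 : 0 ≤ c := hcM ▸ (hm0.trans hmM)
        rcases eq_or_lt_of_le hc0 with h | h
        · rw [← h, Real.zero_rpow hlam0.ne', mul_zero, mul_zero, mul_zero, add_zero]
        · have hcc : c ^ (1 - lam) * c ^ lam = c := by
            rw [← Real.rpow_add h]; norm_num
          rw [hcc]; ring
      · have hfall : ∀ x, x ≠ xs → f x = M := by
          intro x hx
          rcases eq_or_ne xM xs with h | h
          · have hMz : M = 0 := by rw [← hM_def, h, hfxs]
            exact le_antisymm (hMz ▸ hxM x) (hMz ▸ hf x)
          · exact (hconst x xM hx h).trans hM_def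
        have hmz : m = 0 := le_antisymm (hm_def ▸ (hfxs ▸ hxm0 xs)) hm0
        have hEz : E = (1 - μs) * M := by
          have h := heraseE xs
          rw [hfxs, mul_zero, sub_zero] at h
          rw [← h, show (∑ x ∈ univ.erase xs, μ x * f x)
              = ∑ x ∈ univ.erase xs, μ x * M from Finset.sum_congr rfl
                (fun x hx => by rw [hfall x (Finset.mem_erase.mp hx).1]),
            ← Finset.sum_mul, heraseμ xs, hμxs]
        rw [hmz, hEz]
        exact core_rev2 h1μ (hm0.trans hmM) hpow hlam0 hlam_lt1
end

section
/- Let q ∈ [2,∞) be real, 0 ≤ ρ ≤ 1, and set λ := ln( μ*·(1+ρ·(1/μ*−1))^q + (1−μ*)·(1−ρ)^q ) / ((q−1)·ln(1/μ*)). Then for every nonnegative function f : Ω^n → ℝ it holds that ‖T_ρ f‖_q ≤ ∏_{S⊆{1,…,n}} ‖E(f|S)‖_q^{λ^{|S|}·(1−λ)^{n−|S|}} (with the convention 0^0 = 1 in the exponents). -/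
open Finset

/-- Expectation of `f : Ω^n → ℝ` under the product measure `μ^{⊗n}`. -/
noncomputable def pExpct {Ω : Type*} [Fintype Ω] (μ : Ω → ℝ) {n : ℕ}
    (f : (Fin n → Ω) → ℝ) : ℝ :=
  ∑ x : Fin n → Ω, (∏ i, μ (x i)) * f x

/-- Conditional expectation on the coordinates in `S`:
`E(f|S)(x) = E_{y∼μ^{⊗n}} f(z)` where `z_i = x_i` for `i ∈ S` and `z_i = y_i` otherwise. -/
noncomputable def condExp {Ω : Type*} [Fintype Ω] (μ : Ω → ℝ) {n : ℕ}
    (S : Finset (Fin n)) (f : (Fin n → Ω) → ℝ) : (Fin n → Ω) → ℝ :=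
  fun x => pExpct μ (fun y => f (S.piecewise x y))

/-- The noise operator on all `n` coordinates:
`T_ρ f = Σ_S ρ^{|S|} (1-ρ)^{n-|S|} E(f|S)`. -/
noncomputable def noiseOpN {Ω : Type*} [Fintype Ω] (μ : Ω → ℝ) {n : ℕ}
    (ρ : ℝ) (f : (Fin n → Ω) → ℝ) : (Fin n → Ω) → ℝ :=
  fun x => ∑ S : Finset (Fin n), ρ ^ S.card * (1 - ρ) ^ (n - S.card) * condExp μ S f x

/-- The `q`-norm with respect to the product measure. -/
noncomputable def pqNorm {Ω : Type*} [Fintype Ω] (μ : Ω → ℝ) {n : ℕ}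
    (q : ℝ) (f : (Fin n → Ω) → ℝ) : ℝ :=
  (∑ x : Fin n → Ω, (∏ i, μ (x i)) * |f x| ^ q) ^ (1 / q)

namespace S4
open Real Set

noncomputable def phi (q ρ t : ℝ) : ℝ := (ρ*t + (1-ρ)) ^ q
noncomputable def phi0 (q ρ : ℝ) : ℝ := (1-ρ) ^ q
noncomputable def Nd (q ρ t : ℝ) : ℝ := q*ρ*(ρ*t + (1-ρ))^(q-1)
noncomputable def Ndd (q ρ t : ℝ) : ℝ := q*(q-1)*ρ^2*(ρ*t + (1-ρ))^(q-2)
noncomputable def Pf (q ρ t : ℝ) : ℝ := t * Nd q ρ t - phi q ρ t + phi0 q ρ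
noncomputable def Qf (q ρ t : ℝ) : ℝ := phi q ρ t - phi0 q ρ + t * phi0 q ρ
noncomputable def Qd (q ρ t : ℝ) : ℝ := Nd q ρ t + phi0 q ρ
noncomputable def Sf (q ρ t : ℝ) : ℝ := t * Ndd q ρ t / Qd q ρ t
noncomputable def Zf (q ρ t : ℝ) : ℝ := Sf q ρ t * Qf q ρ t - Pf q ρ t
noncomputable def Rf (q ρ t : ℝ) : ℝ := Pf q ρ t / Qf q ρ t

variable {q ρ : ℝ}

lemma zpos (hρ0 : 0 ≤ ρ) (hρ1 : ρ < 1) {t : ℝ} (ht : 0 ≤ t) : 0 < ρ*t + (1-ρ) := by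
  nlinarith

lemma hasDerivAt_z (t : ℝ) : HasDerivAt (fun s => ρ*s + (1-ρ)) ρ t := by
  simpa using ((hasDerivAt_id t).const_mul ρ).add_const (1-ρ)

lemma hasDerivAt_phi (hρ0 : 0 ≤ ρ) (hρ1 : ρ < 1) {t : ℝ} (ht : 0 ≤ t) :
    HasDerivAt (phi q ρ) (Nd q ρ t) t := by
  have hz := zpos hρ0 hρ1 ht
  have h := (Real.hasDerivAt_rpow_const (p := q) (Or.inl hz.ne')).comp t (hasDerivAt_z t)
  exact h.congr_deriv (by unfold Nd; ring)

lemma hasDerivAt_Nd (hρ0 : 0 ≤ ρ) (hρ1 : ρ < 1) {t : ℝ} (ht : 0 ≤ t) :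
    HasDerivAt (Nd q ρ) (Ndd q ρ t) t := by
  have hz := zpos hρ0 hρ1 ht
  have h := ((Real.hasDerivAt_rpow_const (p := q-1) (Or.inl hz.ne')).comp t
    (hasDerivAt_z t)).const_mul (q*ρ)
  have e : Ndd q ρ t = q*ρ*((q-1) * (ρ*t+(1-ρ))^(q-1-1) * ρ) := by
    have h2 : q-1-1 = q-2 := by ring
    simp only [Ndd, h2]; ring
  have hfun : Nd q ρ = (fun y => q * ρ * ((ρ * y + (1-ρ)) ^ (q-1))) := by
    funext y; simp only [Nd]
  rw [hfun, e]
  simpa [mul_comm, mul_assoc, mul_left_comm] using h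

lemma hasDerivAt_Ndd (hρ0 : 0 ≤ ρ) (hρ1 : ρ < 1) {t : ℝ} (ht : 0 ≤ t) :
    HasDerivAt (Ndd q ρ) (q*(q-1)*(q-2)*ρ^3*(ρ*t + (1-ρ))^(q-3)) t := by
  have hz := zpos hρ0 hρ1 ht
  have h := ((Real.hasDerivAt_rpow_const (p := q-2) (Or.inl hz.ne')).comp t
    (hasDerivAt_z t)).const_mul (q*(q-1)*ρ^2)
  have e : q*(q-1)*(q-2)*ρ^3*(ρ*t + (1-ρ))^(q-3) =
      q*(q-1)*ρ^2*((q-2) * (ρ*t+(1-ρ))^(q-2-1) * ρ) := by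
    have h2 : q-2-1 = q-3 := by ring
    rw [h2]; ring
  have hfun : Ndd q ρ = (fun y => q * (q-1) * ρ^2 * ((ρ * y + (1-ρ)) ^ (q-2))) := by
    funext y; simp only [Ndd]
  rw [hfun, e]
  simpa [mul_comm, mul_assoc, mul_left_comm] using h

lemma hasDerivAt_P (hρ0 : 0 ≤ ρ) (hρ1 : ρ < 1) {t : ℝ} (ht : 0 ≤ t) :
    HasDerivAt (Pf q ρ) (t * Ndd q ρ t) t := by
  have h1 : HasDerivAt (fun s => s * Nd q ρ s) (1 * Nd q ρ t + t * Ndd q ρ t) t :=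
    (hasDerivAt_id t).mul (hasDerivAt_Nd hρ0 hρ1 ht)
  have h : HasDerivAt (Pf q ρ)
      (1 * Nd q ρ t + t * Ndd q ρ t - Nd q ρ t) t :=
    (h1.sub (hasDerivAt_phi hρ0 hρ1 ht)).add_const (phi0 q ρ)
  simpa using h.congr_deriv (by ring)

lemma hasDerivAt_Q (hρ0 : 0 ≤ ρ) (hρ1 : ρ < 1) {t : ℝ} (ht : 0 ≤ t) :
    HasDerivAt (Qf q ρ) (Qd q ρ t) t := by
  have h : HasDerivAt (Qf q ρ) (Nd q ρ t + (1 * phi0 q ρ)) t :=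
    ((hasDerivAt_phi hρ0 hρ1 ht).sub_const (phi0 q ρ)).add
      ((hasDerivAt_id t).mul_const (phi0 q ρ))
  simpa [Qd] using h.congr_deriv (by ring)



/-! helpers -/

lemma monoOn_Ici {f f' : ℝ → ℝ} {a : ℝ} (hd : ∀ t, a ≤ t → HasDerivAt f (f' t) t)
    (h0 : ∀ t, a < t → 0 ≤ f' t) : MonotoneOn f (Set.Ici a) := by
  refine monotoneOn_of_deriv_nonneg (convex_Ici a)
    (fun t ht => (hd t ht).continuousAt.continuousWithinAt) (fun t ht => ?_) (fun t ht => ?_)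
  · have ht' : a < t := by simpa [interior_Ici] using ht
    exact (hd t ht'.le).differentiableAt.differentiableWithinAt
  · have ht' : a < t := by simpa [interior_Ici] using ht
    rw [(hd t ht'.le).deriv]; exact h0 t ht'

lemma monoOn_Icc {f f' : ℝ → ℝ} {a b : ℝ} (hd : ∀ t, t ∈ Set.Icc a b → HasDerivAt f (f' t) t)
    (h0 : ∀ t, t ∈ Set.Ioo a b → 0 ≤ f' t) : MonotoneOn f (Set.Icc a b) := by
  refine monotoneOn_of_deriv_nonneg (convex_Icc a b)
    (fun t ht => (hd t ht).continuousAt.continuousWithinAt) (fun t ht => ?_) (fun t ht => ?_)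
  · have ht' : t ∈ Set.Ioo a b := by simpa [interior_Icc] using ht
    exact (hd t (Set.mem_Icc_of_Ioo ht')).differentiableAt.differentiableWithinAt
  · have ht' : t ∈ Set.Ioo a b := by simpa [interior_Icc] using ht
    rw [(hd t (Set.mem_Icc_of_Ioo ht')).deriv]; exact h0 t ht'

lemma antiOn_Icc {f f' : ℝ → ℝ} {a b : ℝ} (hd : ∀ t, t ∈ Set.Icc a b → HasDerivAt f (f' t) t)
    (h0 : ∀ t, t ∈ Set.Ioo a b → f' t ≤ 0) : AntitoneOn f (Set.Icc a b) := by
  refine antitoneOn_of_deriv_nonpos (convex_Icc a b)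
    (fun t ht => (hd t ht).continuousAt.continuousWithinAt) (fun t ht => ?_) (fun t ht => ?_)
  · have ht' : t ∈ Set.Ioo a b := by simpa [interior_Icc] using ht
    exact (hd t (Set.mem_Icc_of_Ioo ht')).differentiableAt.differentiableWithinAt
  · have ht' : t ∈ Set.Ioo a b := by simpa [interior_Icc] using ht
    rw [(hd t (Set.mem_Icc_of_Ioo ht')).deriv]; exact h0 t ht'

/-! basic positivity -/

lemma phi0_pos (hρ1 : ρ < 1) : 0 < phi0 q ρ :=
  Real.rpow_pos_of_pos (by linarith) q

lemma phi0_nonneg (hρ1 : ρ ≤ 1) : 0 ≤ phi0 q ρ := Real.rpow_nonneg (by linarith) q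

lemma phi_pos (hρ0 : 0 ≤ ρ) (hρ1 : ρ < 1) {t : ℝ} (ht : 0 ≤ t) : 0 < phi q ρ t :=
  Real.rpow_pos_of_pos (zpos (ρ := ρ) hρ0 hρ1 ht) q

lemma Nd_nonneg (hq : 2 ≤ q) (hρ0 : 0 ≤ ρ) (hρ1 : ρ < 1) {t : ℝ} (ht : 0 ≤ t) :
    0 ≤ Nd q ρ t := by
  have := zpos (ρ := ρ) hρ0 hρ1 ht
  have : (0:ℝ) ≤ (ρ*t+(1-ρ))^(q-1) := (Real.rpow_pos_of_pos this (q-1)).le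
  unfold Nd; positivity

lemma Ndd_nonneg (hq : 2 ≤ q) (hρ0 : 0 ≤ ρ) (hρ1 : ρ < 1) {t : ℝ} (ht : 0 ≤ t) :
    0 ≤ Ndd q ρ t := by
  have := zpos (ρ := ρ) hρ0 hρ1 ht
  have : (0:ℝ) ≤ (ρ*t+(1-ρ))^(q-2) := (Real.rpow_pos_of_pos this (q-2)).le
  have hq1 : (0:ℝ) ≤ q - 1 := by linarith
  unfold Ndd; positivity

lemma Qd_pos (hq : 2 ≤ q) (hρ0 : 0 ≤ ρ) (hρ1 : ρ < 1) {t : ℝ} (ht : 0 ≤ t) :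
    0 < Qd q ρ t :=
  add_pos_of_nonneg_of_pos (Nd_nonneg hq hρ0 hρ1 ht) (phi0_pos hρ1)

lemma phi_ge_phi0 (hq : 2 ≤ q) (hρ0 : 0 ≤ ρ) (hρ1 : ρ < 1) {t : ℝ} (ht : 0 ≤ t) :
    phi0 q ρ ≤ phi q ρ t := by
  unfold phi phi0
  exact Real.rpow_le_rpow (by linarith) (by nlinarith) (by linarith)

lemma Q_nonneg (hq : 2 ≤ q) (hρ0 : 0 ≤ ρ) (hρ1 : ρ < 1) {t : ℝ} (ht : 0 ≤ t) :
    0 ≤ Qf q ρ t := by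
  have h1 := phi_ge_phi0 hq hρ0 hρ1 ht
  have h2 := phi0_pos (q := q) hρ1
  unfold Qf; nlinarith

lemma Q_pos (hq : 2 ≤ q) (hρ0 : 0 ≤ ρ) (hρ1 : ρ < 1) {t : ℝ} (ht : 0 < t) :
    0 < Qf q ρ t := by
  have h1 := phi_ge_phi0 hq hρ0 hρ1 ht.le
  have h2 := phi0_pos (q := q) hρ1
  unfold Qf; nlinarith

lemma P_zero : Pf q ρ 0 = 0 := by
  simp [Pf, phi, phi0]

lemma Q_zero : Qf q ρ 0 = 0 := by
  simp [Qf, phi, phi0]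

lemma P_nonneg (hq : 2 ≤ q) (hρ0 : 0 ≤ ρ) (hρ1 : ρ < 1) {t : ℝ} (ht : 0 ≤ t) :
    0 ≤ Pf q ρ t := by
  have hm : MonotoneOn (Pf q ρ) (Set.Ici 0) :=
    monoOn_Ici (fun s hs => hasDerivAt_P hρ0 hρ1 hs)
      (fun s hs => mul_nonneg hs.le (Ndd_nonneg hq hρ0 hρ1 hs.le))
  have := hm (Set.self_mem_Ici) ht ht
  rwa [P_zero] at this

lemma P_pos (hq : 2 ≤ q) (hρ0 : 0 < ρ) (hρ1 : ρ < 1) {t : ℝ} (ht : 0 < t) :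
    0 < Pf q ρ t := by
  have hm : StrictMonoOn (Pf q ρ) (Set.Ici 0) := by
    refine strictMonoOn_of_deriv_pos (convex_Ici 0)
      (fun s hs => (hasDerivAt_P hρ0.le hρ1 hs).continuousAt.continuousWithinAt)
      (fun s hs => ?_)
    have hs' : (0:ℝ) < s := by simpa [interior_Ici] using hs
    rw [(hasDerivAt_P hρ0.le hρ1 hs'.le).deriv]
    have hz := zpos (ρ := ρ) hρ0.le hρ1 hs'.le
    have : (0:ℝ) < (ρ*s+(1-ρ))^(q-2) := Real.rpow_pos_of_pos hz (q-2)
    unfold Ndd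
    have hq1 : (0:ℝ) < q - 1 := by linarith
    positivity
  have := hm (Set.self_mem_Ici) (Set.mem_Ici.2 ht.le) ht
  rwa [P_zero] at this


lemma rpow_split1 {z : ℝ} (hz : 0 < z) : z^(q-2) = z^(q-3) * z := by
  rw [show q-2 = (q-3)+1 by ring, Real.rpow_add hz, Real.rpow_one]

lemma rpow_split2 {z : ℝ} (hz : 0 < z) : z^(q-1) = z^(q-3) * z * z := by
  rw [show q-1 = ((q-3)+1)+1 by ring, Real.rpow_add hz, Real.rpow_add hz, Real.rpow_one]

lemma nu_nonneg (hq : 2 ≤ q) (hρ0 : 0 ≤ ρ) (hρ1 : ρ < 1) {t : ℝ} (ht : 0 ≤ t) :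
    0 ≤ (Ndd q ρ t + t*(q*(q-1)*(q-2)*ρ^3*(ρ*t+(1-ρ))^(q-3))) * Qd q ρ t
      - t * Ndd q ρ t * Ndd q ρ t := by
  have hz := zpos (ρ := ρ) hρ0 hρ1 ht
  set z := ρ*t+(1-ρ) with hzdef
  set c := z^(q-3) with hcdef
  have hc : 0 ≤ c := (Real.rpow_pos_of_pos hz _).le
  have hphi0 : 0 ≤ phi0 q ρ := phi0_nonneg hρ1.le
  have key : (Ndd q ρ t + t*(q*(q-1)*(q-2)*ρ^3*c)) * Qd q ρ t - t * Ndd q ρ t * Ndd q ρ t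
      = q^2*(q-1)*ρ^3*(1-ρ)*(c*z)^2*t + q^2*(q-1)*ρ^3*(1-ρ)*(c*z)^2*(1-t)
        + c*(phi0 q ρ)*(q*(q-1)*ρ^2*z + q*(q-1)*(q-2)*ρ^3*t) := by
    simp only [Ndd, Qd, Nd, ← hzdef]
    simp only [rpow_split1 (q := q) hz, rpow_split2 (q := q) hz, ← hcdef]
    simp only [hzdef]
    ring
  rw [key]
  have h1 : (0:ℝ) ≤ q^2*(q-1)*ρ^3*(1-ρ)*(c*z)^2*t + q^2*(q-1)*ρ^3*(1-ρ)*(c*z)^2*(1-t) := by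
    have : q^2*(q-1)*ρ^3*(1-ρ)*(c*z)^2*t + q^2*(q-1)*ρ^3*(1-ρ)*(c*z)^2*(1-t)
        = q^2*(q-1)*ρ^3*(1-ρ)*(c*z)^2 := by ring
    rw [this]
    have hq1 : (0:ℝ) ≤ q - 1 := by linarith
    have hρ1' : (0:ℝ) ≤ 1 - ρ := by linarith
    positivity
  have h2 : (0:ℝ) ≤ c*(phi0 q ρ)*(q*(q-1)*ρ^2*z + q*(q-1)*(q-2)*ρ^3*t) := by
    have hq1 : (0:ℝ) ≤ q - 1 := by linarith
    have hq2 : (0:ℝ) ≤ q - 2 := by linarith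
    have hb : (0:ℝ) ≤ q*(q-1)*ρ^2*z + q*(q-1)*(q-2)*ρ^3*t := by positivity
    positivity
  linarith

lemma hasDerivAt_S (hq : 2 ≤ q) (hρ0 : 0 ≤ ρ) (hρ1 : ρ < 1) {t : ℝ} (ht : 0 ≤ t) :
    HasDerivAt (Sf q ρ)
      (((Ndd q ρ t + t*(q*(q-1)*(q-2)*ρ^3*(ρ*t+(1-ρ))^(q-3))) * Qd q ρ t
        - t * Ndd q ρ t * Ndd q ρ t) / (Qd q ρ t)^2) t := by
  have hnum : HasDerivAt (fun s => s * Ndd q ρ s)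
      (1 * Ndd q ρ t + t*(q*(q-1)*(q-2)*ρ^3*(ρ*t+(1-ρ))^(q-3))) t :=
    (hasDerivAt_id t).mul (hasDerivAt_Ndd hρ0 hρ1 ht)
  have hden : HasDerivAt (Qd q ρ) (Ndd q ρ t) t :=
    (hasDerivAt_Nd hρ0 hρ1 ht).add_const (phi0 q ρ)
  have h := hnum.div hden (Qd_pos hq hρ0 hρ1 ht).ne'
  exact h.congr_deriv (by ring)

lemma S_mul_Qd (hq : 2 ≤ q) (hρ0 : 0 ≤ ρ) (hρ1 : ρ < 1) {t : ℝ} (ht : 0 ≤ t) :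
    Sf q ρ t * Qd q ρ t = t * Ndd q ρ t := by
  unfold Sf
  field_simp [(Qd_pos hq hρ0 hρ1 ht).ne']

lemma Z_zero : Zf q ρ 0 = 0 := by
  simp [Zf, Sf, P_zero, Q_zero]

lemma Z_nonneg (hq : 2 ≤ q) (hρ0 : 0 ≤ ρ) (hρ1 : ρ < 1) {t : ℝ} (ht : 0 ≤ t) :
    0 ≤ Zf q ρ t := by
  have hm : MonotoneOn (Zf q ρ) (Set.Ici 0) := by
    refine monoOn_Ici (f' := fun s =>
      ((Ndd q ρ s + s*(q*(q-1)*(q-2)*ρ^3*(ρ*s+(1-ρ))^(q-3))) * Qd q ρ s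
        - s * Ndd q ρ s * Ndd q ρ s) / (Qd q ρ s)^2 * Qf q ρ s) (fun s hs => ?_) (fun s hs => ?_)
    · have h : HasDerivAt (fun y => Sf q ρ y * Qf q ρ y - Pf q ρ y)
          ((((Ndd q ρ s + s*(q*(q-1)*(q-2)*ρ^3*(ρ*s+(1-ρ))^(q-3))) * Qd q ρ s
            - s * Ndd q ρ s * Ndd q ρ s) / (Qd q ρ s)^2) * Qf q ρ s
            + Sf q ρ s * Qd q ρ s - s * Ndd q ρ s) s :=
        ((hasDerivAt_S hq hρ0 hρ1 hs).mul (hasDerivAt_Q hρ0 hρ1 hs)).sub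
          (hasDerivAt_P hρ0 hρ1 hs)
      have h2 : Zf q ρ = fun y => Sf q ρ y * Qf q ρ y - Pf q ρ y := rfl
      rw [h2]
      refine h.congr_deriv ?_
      rw [S_mul_Qd hq hρ0 hρ1 hs]; ring
    · exact mul_nonneg (div_nonneg (nu_nonneg hq hρ0 hρ1 hs.le) (by positivity))
        (Q_nonneg hq hρ0 hρ1 hs.le)
  have := hm (Set.self_mem_Ici) (Set.mem_Ici.2 ht) ht
  rwa [Z_zero] at this

lemma PQd_le (hq : 2 ≤ q) (hρ0 : 0 ≤ ρ) (hρ1 : ρ < 1) {t : ℝ} (ht : 0 ≤ t) :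
    Pf q ρ t * Qd q ρ t ≤ t * Ndd q ρ t * Qf q ρ t := by
  have hZ := Z_nonneg hq hρ0 hρ1 ht
  have hP : Pf q ρ t ≤ Sf q ρ t * Qf q ρ t := by unfold Zf at hZ; linarith
  have hQd := Qd_pos hq hρ0 hρ1 ht
  calc Pf q ρ t * Qd q ρ t ≤ (Sf q ρ t * Qf q ρ t) * Qd q ρ t := by
        exact mul_le_mul_of_nonneg_right hP hQd.le
    _ = (Sf q ρ t * Qd q ρ t) * Qf q ρ t := by ring
    _ = t * Ndd q ρ t * Qf q ρ t := by rw [S_mul_Qd hq hρ0 hρ1 ht]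

lemma R_mono (hq : 2 ≤ q) (hρ0 : 0 ≤ ρ) (hρ1 : ρ < 1) :
    MonotoneOn (Rf q ρ) (Set.Ici 1) := by
  refine monoOn_Ici (f' := fun s =>
    (s * Ndd q ρ s * Qf q ρ s - Pf q ρ s * Qd q ρ s) / (Qf q ρ s)^2)
    (fun s hs => ?_) (fun s hs => ?_)
  · have hs0 : (0:ℝ) ≤ s := by linarith
    exact (hasDerivAt_P hρ0 hρ1 hs0).div (hasDerivAt_Q hρ0 hρ1 hs0)
      (Q_pos hq hρ0 hρ1 (by linarith)).ne'
  · have hs0 : (0:ℝ) ≤ s := by linarith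
    exact div_nonneg (by linarith [PQd_le hq hρ0 hρ1 hs0]) (by positivity)

lemma Q_one : Qf q ρ 1 = 1 := by
  simp [Qf, phi, phi0]

lemma uQd_eq (t : ℝ) : t * Qd q ρ t = Pf q ρ t + Qf q ρ t := by
  simp only [Qd, Pf, Qf]; ring


lemma II_main (hq : 2 ≤ q) (hρ0 : 0 ≤ ρ) (hρ1 : ρ < 1) {T x : ℝ} (hT : 1 ≤ T)
    (hx1 : 1 ≤ x) (hxT : x ≤ T) :
    Real.log T * Real.log (Qf q ρ x / x) ≤ Real.log (Qf q ρ T / T) * Real.log x := by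
  have hT0 : (0:ℝ) < T := by linarith
  have hx0 : (0:ℝ) < x := by linarith
  have hQT : 0 < Qf q ρ T := Q_pos hq hρ0 hρ1 hT0
  have hQx : 0 < Qf q ρ x := Q_pos hq hρ0 hρ1 hx0
  have hlnT : 0 ≤ Real.log T := Real.log_nonneg hT
  set lnT := Real.log T with hlnTdef
  set lnK := Real.log (Qf q ρ T / T) with hlnKdef
  set D : ℝ → ℝ := fun u => (lnK + lnT) * Real.log u - lnT * Real.log (Qf q ρ u) with hDdef
  have hDderiv : ∀ u : ℝ, 1 ≤ u →
      HasDerivAt D ((lnK - lnT * Rf q ρ u) / u) u := by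
    intro u hu
    have hu0 : (0:ℝ) < u := by linarith
    have hQu : 0 < Qf q ρ u := Q_pos hq hρ0 hρ1 hu0
    have h1 : HasDerivAt (fun y => (lnK + lnT) * Real.log y) ((lnK + lnT) * u⁻¹) u :=
      (Real.hasDerivAt_log hu0.ne').const_mul (lnK + lnT)
    have h2 : HasDerivAt (fun y => lnT * Real.log (Qf q ρ y))
        (lnT * (Qd q ρ u / Qf q ρ u)) u :=
      ((hasDerivAt_Q hρ0 hρ1 hu0.le).log hQu.ne').const_mul lnT
    refine (h1.sub h2).congr_deriv ?_
    have hid := uQd_eq (q := q) (ρ := ρ) u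
    unfold Rf
    rw [show Pf q ρ u = u * Qd q ρ u - Qf q ρ u by linarith]
    field_simp
    ring
  have hD1 : D 1 = 0 := by simp [hDdef, Q_one]
  have hDT : D T = 0 := by
    have : lnK = Real.log (Qf q ρ T) - lnT := by
      rw [hlnKdef, Real.log_div hQT.ne' hT0.ne']
    simp only [hDdef, this]; ring
  have hgoal : 0 ≤ D x := by
    rcases le_or_gt 0 (lnK - lnT * Rf q ρ x) with hc | hc
    · have hmono : MonotoneOn D (Set.Icc 1 x) := by
        refine monoOn_Icc (f' := fun u => (lnK - lnT * Rf q ρ u) / u)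
          (fun t ht => hDderiv t ht.1) (fun t ht => ?_)
        have hR : Rf q ρ t ≤ Rf q ρ x :=
          R_mono hq hρ0 hρ1 (Set.mem_Ici.2 ht.1.le) (Set.mem_Ici.2 hx1) ht.2.le
        have : 0 ≤ lnK - lnT * Rf q ρ t := by nlinarith
        have ht0 : (0:ℝ) < t := by linarith [ht.1]
        positivity
      have := hmono (Set.left_mem_Icc.2 hx1) (Set.right_mem_Icc.2 hx1) hx1
      rwa [hD1] at this
    · have hanti : AntitoneOn D (Set.Icc x T) := by
        refine antiOn_Icc (f' := fun u => (lnK - lnT * Rf q ρ u) / u)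
          (fun t ht => hDderiv t (by linarith [ht.1])) (fun t ht => ?_)
        have hR : Rf q ρ x ≤ Rf q ρ t :=
          R_mono hq hρ0 hρ1 (Set.mem_Ici.2 hx1) (Set.mem_Ici.2 (by linarith [ht.1])) ht.1.le
        have hnum : lnK - lnT * Rf q ρ t ≤ 0 := by nlinarith
        have ht0 : (0:ℝ) < t := by linarith [hx1, ht.1]
        exact div_nonpos_of_nonpos_of_nonneg hnum ht0.le
      have := hanti (Set.left_mem_Icc.2 hxT) (Set.right_mem_Icc.2 hxT) hxT
      rwa [hDT] at this
  have hlogdiv : Real.log (Qf q ρ x / x) = Real.log (Qf q ρ x) - Real.log x :=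
    Real.log_div hQx.ne' hx0.ne'
  rw [hlogdiv]
  simp only [hDdef] at hgoal
  nlinarith [hgoal]

lemma II_final (hq : 2 ≤ q) (hρ0 : 0 ≤ ρ) (hρ1 : ρ < 1) {T x : ℝ} (hT : 1 < T)
    (hx1 : 1 ≤ x) (hxT : x ≤ T) :
    Qf q ρ x / x ≤ x ^ (Real.log (Qf q ρ T / T) / Real.log T) := by
  have hx0 : (0:ℝ) < x := by linarith
  have hQx : 0 < Qf q ρ x := Q_pos hq hρ0 hρ1 hx0
  have hΨ : 0 < Qf q ρ x / x := by positivity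
  have hlnT : 0 < Real.log T := Real.log_pos hT
  rw [← Real.log_le_log_iff hΨ (Real.rpow_pos_of_pos hx0 _), Real.log_rpow hx0]
  have h := II_main hq hρ0 hρ1 hT.le hx1 hxT
  rw [div_mul_eq_mul_div, le_div_iff₀ hlnT]
  nlinarith [h]

noncomputable def Cc (q ρ u : ℝ) : ℝ := Pf q ρ u / ((q-1) * u^q)
noncomputable def Bb (q ρ u : ℝ) : ℝ := (phi q ρ u - phi0 q ρ - Cc q ρ u * u^q) / u
noncomputable def psi (q ρ u t : ℝ) : ℝ :=
  phi0 q ρ + Bb q ρ u * t + Cc q ρ u * t^q - phi q ρ t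
noncomputable def psid (q ρ u t : ℝ) : ℝ :=
  Bb q ρ u + q * Cc q ρ u * t^(q-1) - Nd q ρ t

lemma rpow_two' (x : ℝ) : x ^ (2:ℝ) = x * x := by
  rw [show (2:ℝ) = ((2:ℕ):ℝ) by norm_num, Real.rpow_natCast]; ring

lemma psi_at_u (hq : 2 ≤ q) {u : ℝ} (hu : 1 ≤ u) : psi q ρ u u = 0 := by
  have hu0 : (0:ℝ) < u := by linarith
  simp only [psi, Bb]
  field_simp
  ring

lemma psi_zero (hq : 2 ≤ q) {u : ℝ} : psi q ρ u 0 = 0 := by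
  have hq0 : q ≠ 0 := by linarith
  simp [psi, phi, phi0, Real.zero_rpow hq0]

lemma psid_at_u (hq : 2 ≤ q) (hρ0 : 0 ≤ ρ) (hρ1 : ρ < 1) {u : ℝ} (hu : 1 ≤ u) :
    psid q ρ u u = 0 := by
  have hu0 : (0:ℝ) < u := by linarith
  have hsplit : u^q = u^(q-1) * u := by
    rw [← Real.rpow_add_one hu0.ne' (q-1)]; norm_num
  have huq : (0:ℝ) < u^q := Real.rpow_pos_of_pos hu0 q
  have hq1 : q - 1 ≠ 0 := by linarith
  simp only [psid, Bb, Cc, Pf]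
  field_simp
  rw [hsplit]
  ring

lemma hasDerivAt_psi (hq : 2 ≤ q) (hρ0 : 0 ≤ ρ) (hρ1 : ρ < 1) {u : ℝ} {t : ℝ} (ht : 0 ≤ t) :
    HasDerivAt (psi q ρ u) (psid q ρ u t) t := by
  have h1 : HasDerivAt (fun s => phi0 q ρ + Bb q ρ u * s) (Bb q ρ u) t := by
    simpa using ((hasDerivAt_id t).const_mul (Bb q ρ u)).const_add (phi0 q ρ)
  have h2 : HasDerivAt (fun s : ℝ => s ^ q) (q * t^(q-1)) t :=
    Real.hasDerivAt_rpow_const (x := t) (p := q) (Or.inr (by linarith))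
  have h3 := (h1.add (h2.const_mul (Cc q ρ u))).sub (hasDerivAt_phi (q := q) (ρ := ρ) hρ0 hρ1 ht)
  have hfun : psi q ρ u = fun s => (phi0 q ρ + Bb q ρ u * s) + Cc q ρ u * s^q - phi q ρ s := rfl
  rw [hfun]
  exact h3.congr_deriv (by simp only [psid]; ring)

lemma hasDerivAt_psid (hq : 2 ≤ q) (hρ0 : 0 ≤ ρ) (hρ1 : ρ < 1) {u : ℝ} {t : ℝ} (ht : 0 ≤ t) :
    HasDerivAt (psid q ρ u) (q * (q-1) * Cc q ρ u * t^(q-2) - Ndd q ρ t) t := by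
  have h2 : HasDerivAt (fun s : ℝ => s ^ (q-1)) ((q-1) * t^(q-1-1)) t :=
    Real.hasDerivAt_rpow_const (x := t) (p := q-1) (Or.inr (by linarith))
  have h3 := ((h2.const_mul (q * Cc q ρ u)).const_add (Bb q ρ u)).sub (hasDerivAt_Nd (q := q) (ρ := ρ) hρ0 hρ1 ht)
  have hfun : psid q ρ u = fun s => Bb q ρ u + (q * Cc q ρ u) * s^(q-1) - Nd q ρ s := by
    funext s; simp only [psid]
  rw [hfun]
  refine h3.congr_deriv ?_
  have : q-1-1 = q-2 := by ring
  rw [this]; ring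

lemma w_nonneg (hq : 2 ≤ q) (hρ0 : 0 ≤ ρ) (hρ1 : ρ < 1) {t : ℝ} (ht : 0 ≤ t) :
    (q-1) * ρ^2 * (t^2 * (ρ*t+(1-ρ))^(q-2)) ≤ Pf q ρ t := by
  have key : MonotoneOn (fun s => Pf q ρ s - (q-1) * ρ^2 * (s^2 * (ρ*s+(1-ρ))^(q-2)))
      (Set.Ici 0) := by
    refine monoOn_Ici (f' := fun s => s * Ndd q ρ s -
      (q-1) * ρ^2 * (2*s * (ρ*s+(1-ρ))^(q-2) + s^2 * ((q-2) * (ρ*s+(1-ρ))^(q-2-1) * ρ)))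
      (fun s hs => ?_) (fun s hs => ?_)
    · have hz := zpos (ρ := ρ) hρ0 hρ1 hs
      have hsq : HasDerivAt (fun y : ℝ => y^2) (2*s) s := by
        simpa using hasDerivAt_pow 2 s
      have hzq : HasDerivAt (fun y => (ρ*y+(1-ρ))^(q-2)) ((q-2) * (ρ*s+(1-ρ))^(q-2-1) * ρ) s :=
        by have := (Real.hasDerivAt_rpow_const (p := q-2) (Or.inl hz.ne')).comp s (hasDerivAt_z (ρ := ρ) s); exact this
      have h := (hasDerivAt_P (q := q) (ρ := ρ) hρ0 hρ1 hs).sub ((hsq.mul hzq).const_mul ((q-1) * ρ^2))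
      exact h.congr_deriv (by ring)
    · have hz := zpos (ρ := ρ) hρ0 hρ1 hs.le
      have e : q-2-1 = q-3 := by ring
      rw [e]
      have key2 : s * Ndd q ρ s -
          (q-1) * ρ^2 * (2*s * (ρ*s+(1-ρ))^(q-2) + s^2 * ((q-2) * (ρ*s+(1-ρ))^(q-3) * ρ))
          = (q-1)*(q-2)*ρ^2*(1-ρ) * (s * (ρ*s+(1-ρ))^(q-3)) := by
        simp only [Ndd, rpow_split1 (q := q) hz]
        ring
      rw [key2]
      have h1 : (0:ℝ) ≤ (ρ*s+(1-ρ))^(q-3) := (Real.rpow_pos_of_pos hz _).le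
      have h2 : (0:ℝ) ≤ q - 1 := by linarith
      have h3 : (0:ℝ) ≤ q - 2 := by linarith
      have h4 : (0:ℝ) ≤ 1 - ρ := by linarith
      positivity
  have h0 : Pf q ρ 0 - (q-1) * ρ^2 * (0^2 * (ρ*0+(1-ρ))^(q-2)) = 0 := by
    simp [P_zero]
  have := key (Set.self_mem_Ici) (Set.mem_Ici.2 ht) ht
  simp only [] at this
  linarith

lemma C_pos (hq : 2 ≤ q) (hρ0 : 0 < ρ) (hρ1 : ρ < 1) {u : ℝ} (hu : 1 ≤ u) :
    0 < Cc q ρ u := by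
  have hu0 : (0:ℝ) < u := by linarith
  have := P_pos hq hρ0 hρ1 hu0
  have huq : (0:ℝ) < u^q := Real.rpow_pos_of_pos hu0 q
  have hq1 : (0:ℝ) < q - 1 := by linarith
  unfold Cc; positivity

lemma psi_nonneg_gt (hq : 2 < q) (hρ0 : 0 < ρ) (hρ1 : ρ < 1) {u : ℝ} (hu : 1 ≤ u)
    {t : ℝ} (ht : 0 ≤ t) : 0 ≤ psi q ρ u t := by
  have hq' : 2 ≤ q := hq.le
  have hu0 : (0:ℝ) < u := by linarith
  have hq2 : (0:ℝ) < q - 2 := by linarith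
  have hC := C_pos hq' hρ0 hρ1 hu
  set κ := (Cc q ρ u) ^ ((1:ℝ)/(q-2)) with hκdef
  set θ := ρ ^ ((2:ℝ)/(q-2)) with hθdef
  have hκ : 0 < κ := Real.rpow_pos_of_pos hC _
  have hθ : 0 < θ := Real.rpow_pos_of_pos hρ0 _
  have hκpow : κ ^ (q-2) = Cc q ρ u := by
    rw [hκdef, ← Real.rpow_mul hC.le, one_div, inv_mul_cancel₀ hq2.ne', Real.rpow_one]
  have hθpow : θ ^ (q-2) = ρ^2 := by
    rw [hθdef, ← Real.rpow_mul hρ0.le, div_mul_cancel₀ _ hq2.ne', rpow_two']; ring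
  -- second derivative sign characterization
  have hsign : ∀ s : ℝ, 0 ≤ s → θ * (ρ*s+(1-ρ)) ≤ κ * s →
      0 ≤ q * (q-1) * Cc q ρ u * s^(q-2) - Ndd q ρ s := by
    intro s hs hl
    have hz := zpos (ρ := ρ) hρ0.le hρ1 hs
    have h1 : (θ * (ρ*s+(1-ρ)))^(q-2) ≤ (κ * s)^(q-2) :=
      Real.rpow_le_rpow (by positivity) hl hq2.le
    rw [Real.mul_rpow hθ.le hz.le, Real.mul_rpow hκ.le hs, hκpow, hθpow] at h1
    have hq1 : (0:ℝ) < q - 1 := by linarith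
    unfold Ndd
    have h2 := mul_le_mul_of_nonneg_left h1 (by positivity : (0:ℝ) ≤ q*(q-1))
    linarith
  have hsign' : ∀ s : ℝ, 0 ≤ s → κ * s ≤ θ * (ρ*s+(1-ρ)) →
      q * (q-1) * Cc q ρ u * s^(q-2) - Ndd q ρ s ≤ 0 := by
    intro s hs hl
    have hz := zpos (ρ := ρ) hρ0.le hρ1 hs
    have h1 : (κ * s)^(q-2) ≤ (θ * (ρ*s+(1-ρ)))^(q-2) :=
      Real.rpow_le_rpow (by positivity) hl hq2.le
    rw [Real.mul_rpow hθ.le hz.le, Real.mul_rpow hκ.le hs, hκpow, hθpow] at h1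
    have hq1 : (0:ℝ) < q - 1 := by linarith
    unfold Ndd
    have h2 := mul_le_mul_of_nonneg_left h1 (by positivity : (0:ℝ) ≤ q*(q-1))
    linarith
  -- ψ''(u) ≥ 0, i.e. ℓ(u) ≥ 0
  have hlu : θ * (ρ*u+(1-ρ)) ≤ κ * u := by
    by_contra hcon
    push_neg at hcon
    have hzu := zpos (ρ := ρ) hρ0.le hρ1 hu0.le
    have h1 : (κ * u)^(q-2) < (θ * (ρ*u+(1-ρ)))^(q-2) :=
      Real.rpow_lt_rpow (by positivity) hcon hq2
    rw [Real.mul_rpow hθ.le hzu.le, Real.mul_rpow hκ.le hu0.le, hκpow, hθpow] at h1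
    -- h1 : Cc * u^(q-2) < ρ^2 * z^(q-2); contradict w_nonneg
    have hw := w_nonneg hq' hρ0.le hρ1 hu0.le
    have husplit : u^q = u^(q-2) * u^2 := by
      rw [← Real.rpow_natCast u 2, ← Real.rpow_add hu0]; norm_num
    have hCval : Cc q ρ u * ((q-1) * u^q) = Pf q ρ u := by
      unfold Cc
      have hq1 : q - 1 ≠ 0 := by intro h; linarith [hq2]
      have huq : u^q ≠ 0 := (Real.rpow_pos_of_pos hu0 q).ne'
      field_simp
    rw [husplit] at hCval
    have h3 := mul_lt_mul_of_pos_left h1 (mul_pos (by linarith : (0:ℝ) < q-1) (by positivity : (0:ℝ) < u^2))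
    nlinarith [h3, hw, hCval]
  -- slope positive, define t₀
  have hslope : 0 < κ - θ*ρ := by
    have h1 : θ * (ρ*u+(1-ρ)) ≤ κ * u := hlu
    nlinarith
  set t₀ := θ*(1-ρ) / (κ - θ*ρ) with ht₀def
  have ht₀pos : 0 < t₀ := by
    apply div_pos; nlinarith; exact hslope
  have ht₀u : t₀ ≤ u := by
    rw [ht₀def, div_le_iff₀ hslope]
    nlinarith
  have hlin : ∀ s : ℝ, κ * s - θ * (ρ*s+(1-ρ)) = (κ - θ*ρ) * (s - t₀) := by
    intro s
    rw [ht₀def, mul_sub, mul_div_assoc', mul_div_cancel_left₀ _ hslope.ne']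
    ring
  -- ψ' monotone on [t₀, ∞), ψ'(u) = 0
  have hpsid_mono : MonotoneOn (psid q ρ u) (Set.Ici t₀) := by
    refine monoOn_Ici (f' := fun s => q * (q-1) * Cc q ρ u * s^(q-2) - Ndd q ρ s)
      (fun s hs => hasDerivAt_psid hq' hρ0.le hρ1 (le_trans ht₀pos.le hs))
      (fun s hs => ?_)
    have hs0 : (0:ℝ) ≤ s := le_trans ht₀pos.le hs.le
    refine hsign s hs0 ?_
    nlinarith [hlin s, hs]
  have hpsid_anti : AntitoneOn (psid q ρ u) (Set.Icc 0 t₀) := by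
    refine antiOn_Icc (f' := fun s => q * (q-1) * Cc q ρ u * s^(q-2) - Ndd q ρ s)
      (fun s hs => hasDerivAt_psid hq' hρ0.le hρ1 hs.1)
      (fun s hs => ?_)
    refine hsign' s hs.1.le ?_
    nlinarith [hlin s, hs.2]
  have hpsidu : psid q ρ u u = 0 := psid_at_u hq' hρ0.le hρ1 hu
  -- ψ ≥ 0 on [u, ∞)
  have hpsi_mono : MonotoneOn (psi q ρ u) (Set.Ici u) := by
    refine monoOn_Ici (f' := psid q ρ u)
      (fun s hs => hasDerivAt_psi hq' hρ0.le hρ1 (le_trans hu0.le hs)) (fun s hs => ?_)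
    rw [← hpsidu]
    exact hpsid_mono (Set.mem_Ici.2 ht₀u) (Set.mem_Ici.2 (le_trans ht₀u hs.le)) hs.le
  have hpsi_anti : AntitoneOn (psi q ρ u) (Set.Icc t₀ u) := by
    refine antiOn_Icc (f' := psid q ρ u)
      (fun s hs => hasDerivAt_psi hq' hρ0.le hρ1 (le_trans ht₀pos.le hs.1)) (fun s hs => ?_)
    rw [← hpsidu]
    exact hpsid_mono (Set.mem_Ici.2 hs.1.le) (Set.mem_Ici.2 ht₀u) hs.2.le
  have hpsiu : psi q ρ u u = 0 := psi_at_u hq' hu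
  have hpsi_t₀ : 0 ≤ psi q ρ u t₀ := by
    have := hpsi_anti (Set.left_mem_Icc.2 ht₀u) (Set.right_mem_Icc.2 ht₀u) ht₀u
    rwa [hpsiu] at this
  -- now cases on t
  rcases le_or_gt u t with hcase | hcase
  · have := hpsi_mono (Set.self_mem_Ici) (Set.mem_Ici.2 hcase) hcase
    rwa [hpsiu] at this
  rcases le_or_gt t₀ t with hcase2 | hcase2
  · have := hpsi_anti (Set.mem_Icc.2 ⟨hcase2, hcase.le⟩) (Set.right_mem_Icc.2 ht₀u) hcase.le
    rwa [hpsiu] at this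
  -- t ∈ [0, t₀)
  rcases le_or_gt (psid q ρ u t) 0 with hc3 | hc3
  · -- ψ antitone on [t, t₀]
    have hanti : AntitoneOn (psi q ρ u) (Set.Icc t t₀) := by
      refine antiOn_Icc (f' := psid q ρ u)
        (fun s hs => hasDerivAt_psi hq' hρ0.le hρ1 (le_trans ht hs.1)) (fun s hs => ?_)
      have : psid q ρ u s ≤ psid q ρ u t :=
        hpsid_anti (Set.mem_Icc.2 ⟨ht, hcase2.le⟩)
          (Set.mem_Icc.2 ⟨le_trans ht hs.1.le, hs.2.le⟩) hs.1.le
      linarith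
    have := hanti (Set.left_mem_Icc.2 hcase2.le) (Set.right_mem_Icc.2 hcase2.le) hcase2.le
    linarith [hpsi_t₀]
  · -- ψ monotone on [0, t]
    have hmono : MonotoneOn (psi q ρ u) (Set.Icc 0 t) := by
      refine monoOn_Icc (f' := psid q ρ u)
        (fun s hs => hasDerivAt_psi hq' hρ0.le hρ1 hs.1) (fun s hs => ?_)
      have : psid q ρ u t ≤ psid q ρ u s :=
        hpsid_anti (Set.mem_Icc.2 ⟨hs.1.le, by linarith [hs.2]⟩)
          (Set.mem_Icc.2 ⟨ht, hcase2.le⟩) hs.2.le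
      linarith
    have := hmono (Set.left_mem_Icc.2 ht) (Set.right_mem_Icc.2 ht) ht
    rwa [psi_zero hq'] at this

lemma psi_nonneg_two (hρ0 : 0 < ρ) (hρ1 : ρ < 1) {u : ℝ} (hu : 1 ≤ u)
    {t : ℝ} (ht : 0 ≤ t) : 0 ≤ psi (2:ℝ) ρ u t := by
  have hu0 : (0:ℝ) < u := by linarith
  have hP : Pf 2 ρ u = ρ^2 * u^2 := by
    simp only [Pf, Nd, phi, phi0]
    norm_num
    ring
  have hC : Cc 2 ρ u = ρ^2 := by
    simp only [Cc, hP]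
    rw [rpow_two']
    have : (2:ℝ) - 1 = 1 := by norm_num
    rw [this]
    field_simp
  have hB : Bb 2 ρ u = 2*ρ*(1-ρ) := by
    simp only [Bb, hC, phi, phi0]
    rw [rpow_two', rpow_two', rpow_two']
    field_simp
    ring
  have : psi 2 ρ u t = 0 := by
    simp only [psi, hB, hC, phi, phi0]
    rw [rpow_two', rpow_two', rpow_two']
    ring
  linarith

lemma psi_nonneg (hq : 2 ≤ q) (hρ0 : 0 < ρ) (hρ1 : ρ < 1) {u : ℝ} (hu : 1 ≤ u)
    {t : ℝ} (ht : 0 ≤ t) : 0 ≤ psi q ρ u t := by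
  rcases eq_or_lt_of_le hq with h | h
  · subst h; exact psi_nonneg_two hρ0 hρ1 hu ht
  · exact psi_nonneg_gt h hρ0 hρ1 hu ht

lemma scalar_core_norm {Ω : Type*} [Fintype Ω] (μ : Ω → ℝ) (hμpos : ∀ x, 0 < μ x)
    (hμsum : ∑ x, μ x = 1) {μs : ℝ} (hμs_le : ∀ x, μs ≤ μ x) (hμs_pos : 0 < μs)
    (hμs1 : μs < 1)
    (hq : 2 ≤ q) (hρ0 : 0 < ρ) (hρ1 : ρ < 1)
    (g : Ω → ℝ) (hg : ∀ x, 0 ≤ g x) (hEg : ∑ x, μ x * g x = 1) :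
    ∑ x, μ x * (ρ * g x + (1-ρ))^q ≤
      (∑ x, μ x * (g x)^q) ^ (Real.log (Qf q ρ (1/μs) / (1/μs)) / Real.log (1/μs) / (q-1)) := by
  classical
  set T : ℝ := 1/μs with hTdef
  have hT1 : 1 < T := by
    rw [hTdef]; rw [lt_div_iff₀ hμs_pos]; linarith
  have hT0 : (0:ℝ) < T := by linarith
  have hq1 : (0:ℝ) < q - 1 := by linarith
  have hq0 : (0:ℝ) < q := by linarith
  set m : ℝ := ∑ x, μ x * (g x)^q with hmdef
  have hm0 : 0 ≤ m := Finset.sum_nonneg fun x _ =>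
    mul_nonneg (hμpos x).le (Real.rpow_nonneg (hg x) q)
  -- m ≥ 1
  have hm1 : 1 ≤ m := by
    have h := Real.arith_mean_le_rpow_mean Finset.univ μ g
      (fun x _ => (hμpos x).le) hμsum (fun x _ => hg x) (by linarith : (1:ℝ) ≤ q)
    rw [hEg] at h
    have h2 : (1:ℝ)^q ≤ (m^(1/q))^q :=
      Real.rpow_le_rpow zero_le_one h (by linarith)
    rwa [Real.one_rpow, ← Real.rpow_mul hm0, one_div, inv_mul_cancel₀ hq0.ne',
      Real.rpow_one] at h2
  -- g ≤ T pointwise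
  have hgT : ∀ x, g x ≤ T := by
    intro x
    have h1 : μ x * g x ≤ 1 := by
      rw [← hEg]
      refine Finset.single_le_sum (f := fun y => μ y * g y)
        (fun y _ => mul_nonneg (hμpos y).le (hg y)) (Finset.mem_univ x)
    have h2 : g x ≤ 1 / μ x := by
      rw [le_div_iff₀ (hμpos x)]; linarith [mul_comm (μ x) (g x)]
    have h3 : 1 / μ x ≤ T := by
      rw [hTdef]
      exact one_div_le_one_div_of_le hμs_pos (hμs_le x)
    linarith
  -- m ≤ T^(q-1)
  have hmT : m ≤ T^(q-1) := by
    have hpt : ∀ x, (g x)^q ≤ T^(q-1) * g x := by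
      intro x
      rcases eq_or_lt_of_le (hg x) with h0 | h0
      · rw [← h0, Real.zero_rpow hq0.ne']; simp
      · have e : (g x)^q = (g x)^(q-1) * g x := by
          rw [← Real.rpow_add_one h0.ne' (q-1)]; norm_num
        rw [e]
        have : (g x)^(q-1) ≤ T^(q-1) :=
          Real.rpow_le_rpow (hg x) (hgT x) (by linarith)
        exact mul_le_mul_of_nonneg_right this (hg x)
    calc m ≤ ∑ x, μ x * (T^(q-1) * g x) := by
          refine Finset.sum_le_sum fun x _ => ?_
          exact mul_le_mul_of_nonneg_left (hpt x) (hμpos x).le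
      _ = T^(q-1) * ∑ x, μ x * g x := by rw [Finset.mul_sum]; congr 1; funext x; ring
      _ = T^(q-1) := by rw [hEg, mul_one]
  -- define u
  set u : ℝ := m^(1/(q-1)) with hudef
  have hu0 : 0 < u := Real.rpow_pos_of_pos (by linarith) _
  have hu1 : 1 ≤ u := by
    rw [hudef]
    have := Real.rpow_le_rpow zero_le_one hm1 (le_of_lt (by positivity : (0:ℝ) < 1/(q-1)))
    rwa [Real.one_rpow] at this
  have huT : u ≤ T := by
    rw [hudef]
    calc m^(1/(q-1)) ≤ (T^(q-1))^(1/(q-1)) :=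
          Real.rpow_le_rpow hm0 hmT (by positivity)
      _ = T := by
          rw [← Real.rpow_mul hT0.le, mul_one_div, div_self hq1.ne', Real.rpow_one]
  have hum : u^(q-1) = m := by
    rw [hudef, ← Real.rpow_mul hm0, one_div, inv_mul_cancel₀ hq1.ne', Real.rpow_one]
  have husplit : u^q = u^(q-1) * u := by
    rw [← Real.rpow_add_one hu0.ne' (q-1)]; norm_num
  -- pointwise bound and summation
  have hsum : ∑ x, μ x * (ρ * g x + (1-ρ))^q ≤
      phi0 q ρ + Bb q ρ u + Cc q ρ u * m := by
    have hpt : ∀ x, (ρ * g x + (1-ρ))^q ≤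
        phi0 q ρ + Bb q ρ u * g x + Cc q ρ u * (g x)^q := by
      intro x
      have := psi_nonneg hq hρ0 hρ1 hu1 (hg x)
      simp only [psi, phi] at this
      linarith
    calc ∑ x, μ x * (ρ * g x + (1-ρ))^q
        ≤ ∑ x, μ x * (phi0 q ρ + Bb q ρ u * g x + Cc q ρ u * (g x)^q) :=
          Finset.sum_le_sum fun x _ => mul_le_mul_of_nonneg_left (hpt x) (hμpos x).le
      _ = phi0 q ρ * (∑ x, μ x) + Bb q ρ u * (∑ x, μ x * g x)
          + Cc q ρ u * (∑ x, μ x * (g x)^q) := by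
          rw [Finset.mul_sum, Finset.mul_sum, Finset.mul_sum, ← Finset.sum_add_distrib,
            ← Finset.sum_add_distrib]
          congr 1; funext x; ring
      _ = phi0 q ρ + Bb q ρ u + Cc q ρ u * m := by rw [hμsum, hEg, hmdef]; ring
  -- identify with Qf u / u
  have hQu : phi0 q ρ + Bb q ρ u + Cc q ρ u * m = Qf q ρ u / u := by
    rw [← hum]
    simp only [Bb, Qf]
    field_simp
    rw [husplit]
    ring
  -- conclude via II_final
  have hII := II_final hq hρ0.le hρ1 hT1 hu1 huT
  have hfinal : ∑ x, μ x * (ρ * g x + (1-ρ))^q ≤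
      u ^ (Real.log (Qf q ρ T / T) / Real.log T) := by
    rw [hQu] at hsum
    linarith
  calc ∑ x, μ x * (ρ * g x + (1-ρ))^q ≤ u ^ (Real.log (Qf q ρ T / T) / Real.log T) := hfinal
    _ = m ^ (Real.log (Qf q ρ T / T) / Real.log T / (q-1)) := by
        rw [hudef, ← Real.rpow_mul hm0]
        congr 1
        field_simp

lemma scalar_core (hq : 2 ≤ q) (hρ0 : 0 < ρ) (hρ1 : ρ < 1)
    {Ω : Type*} [Fintype Ω] (μ : Ω → ℝ) (hμpos : ∀ x, 0 < μ x)
    (hμsum : ∑ x, μ x = 1) {μs : ℝ} (hμs_le : ∀ x, μs ≤ μ x) (hμs_pos : 0 < μs)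
    (hμs1 : μs < 1) {lam : ℝ}
    (hlam : lam = Real.log (Qf q ρ (1/μs) / (1/μs)) / Real.log (1/μs) / (q-1))
    (g : Ω → ℝ) (hg : ∀ x, 0 ≤ g x) :
    ∑ x, μ x * (ρ * g x + (1-ρ) * (∑ y, μ y * g y))^q ≤
      ((∑ y, μ y * g y)^q)^(1 - lam) * (∑ x, μ x * (g x)^q)^lam := by
  classical
  set a : ℝ := ∑ y, μ y * g y with hadef
  have ha0 : 0 ≤ a := Finset.sum_nonneg fun x _ => mul_nonneg (hμpos x).le (hg x)
  have hq0 : (0:ℝ) < q := by linarith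
  have hm0 : 0 ≤ ∑ x, μ x * (g x)^q := Finset.sum_nonneg fun x _ =>
    mul_nonneg (hμpos x).le (Real.rpow_nonneg (hg x) q)
  rcases eq_or_lt_of_le ha0 with haz | hapos
  · -- a = 0 : g ≡ 0
    have hg0 : ∀ x, g x = 0 := by
      intro x
      have h := (Finset.sum_eq_zero_iff_of_nonneg
        (fun y _ => mul_nonneg (hμpos y).le (hg y))).1 haz.symm x (Finset.mem_univ x)
      have := hμpos x
      nlinarith [hg x]
    have hLHS : ∑ x, μ x * (ρ * g x + (1-ρ) * a)^q = 0 := by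
      apply Finset.sum_eq_zero
      intro x _
      rw [hg0 x, ← haz]
      simp [Real.zero_rpow hq0.ne']
    rw [hLHS]
    have h1 : (0:ℝ) ≤ (a^q)^(1-lam) := Real.rpow_nonneg (Real.rpow_nonneg ha0 q) _
    have h2 : (0:ℝ) ≤ (∑ x, μ x * (g x)^q)^lam := Real.rpow_nonneg hm0 _
    positivity
  · -- a > 0 : normalize
    set g' : Ω → ℝ := fun x => g x / a with hg'def
    have hg' : ∀ x, 0 ≤ g' x := fun x => div_nonneg (hg x) ha0
    have hEg' : ∑ x, μ x * g' x = 1 := by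
      rw [hg'def]
      have : ∑ x, μ x * (g x / a) = (∑ x, μ x * g x) / a := by
        rw [Finset.sum_div]; congr 1; funext x; ring
      rw [this, ← hadef, div_self hapos.ne']
    have hcore := scalar_core_norm μ hμpos hμsum hμs_le hμs_pos hμs1 hq hρ0 hρ1 g' hg' hEg'
    rw [← hlam] at hcore
    have haq : (0:ℝ) < a^q := Real.rpow_pos_of_pos hapos q
    have hm' : ∑ x, μ x * (g' x)^q = (∑ x, μ x * (g x)^q) / a^q := by
      rw [Finset.sum_div]
      congr 1; funext x
      rw [hg'def]
      simp only []
      rw [Real.div_rpow (hg x) ha0]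
      ring
    rw [hm'] at hcore
    -- multiply by a^q
    have hmul := mul_le_mul_of_nonneg_left hcore haq.le
    have hLHS : a^q * ∑ x, μ x * (ρ * g' x + (1-ρ))^q
        = ∑ x, μ x * (ρ * g x + (1-ρ) * a)^q := by
      rw [Finset.mul_sum]
      congr 1; funext x
      have hbase : 0 ≤ ρ * g' x + (1-ρ) := by
        have := hg' x; nlinarith
      have : a^q * (ρ * g' x + (1-ρ))^q = (a * (ρ * g' x + (1-ρ)))^q := by
        rw [Real.mul_rpow ha0 hbase]
      rw [mul_left_comm, this, hg'def]
      simp only []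
      rw [mul_add, mul_comm a (ρ * (g x / a)), mul_assoc, div_mul_cancel₀ _ hapos.ne']
      ring_nf
    have hRHS : a^q * ((∑ x, μ x * (g x)^q) / a^q)^lam
        = ((a^q)^(1-lam)) * (∑ x, μ x * (g x)^q)^lam := by
      rw [Real.div_rpow hm0 haq.le, Real.rpow_sub haq, Real.rpow_one]
      field_simp
    rw [hLHS, hRHS] at hmul
    exact hmul

section Tensor
variable {Ω : Type*} [Fintype Ω] (μ : Ω → ℝ) {n : ℕ}

lemma w_pos (hμpos : ∀ x, 0 < μ x) (x : Fin n → Ω) : 0 < ∏ i, μ (x i) :=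
  Finset.prod_pos (fun i _ => hμpos _)

lemma sum_w (hμsum : ∑ x, μ x = 1) : ∑ x : Fin n → Ω, ∏ i, μ (x i) = 1 := by
  classical
  have h := Finset.prod_univ_sum (fun _ : Fin n => (Finset.univ : Finset Ω)) (fun _ ω => μ ω)
  rw [Fintype.piFinset_univ] at h
  rw [← h, hμsum]
  simp

lemma weight_update (x : Fin n → Ω) (i : Fin n) (ω : Ω) :
    (∏ j, μ (x j)) * μ ω = (∏ j, μ (Function.update x i ω j)) * μ (x i) := by
  classical
  have h1 : ∀ j, μ (Function.update x i ω j) = Function.update (fun j => μ (x j)) i (μ ω) j := by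
    intro j
    by_cases h : j = i
    · subst h; simp
    · simp [Function.update_of_ne h]
  have h2 := Finset.prod_update_of_mem (Finset.mem_univ i) (fun j => μ (x j)) (μ ω)
  have h3 := Finset.prod_eq_mul_prod_sdiff_singleton_of_mem (Finset.mem_univ i) (fun j => μ (x j))
  have h4 : (∏ j, μ (Function.update x i ω j))
      = ∏ j, Function.update (fun j => μ (x j)) i (μ ω) j :=
    Finset.prod_congr rfl (fun j _ => h1 j)
  rw [h4, h2, h3]; ring

lemma sum_update (hμsum : ∑ x, μ x = 1) (i : Fin n) (F : (Fin n → Ω) → ℝ) :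
    ∑ x : Fin n → Ω, (∏ j, μ (x j)) * (∑ ω : Ω, μ ω * F (Function.update x i ω))
      = ∑ x : Fin n → Ω, (∏ j, μ (x j)) * F x := by
  classical
  have step1 : ∀ x : Fin n → Ω,
      (∏ j, μ (x j)) * (∑ ω : Ω, μ ω * F (Function.update x i ω))
      = ∑ ω : Ω, (∏ j, μ (x j)) * μ ω * F (Function.update x i ω) := by
    intro x; rw [Finset.mul_sum]; congr 1; funext ω; ring
  simp_rw [step1]
  rw [← Finset.sum_product']
  have hbij : ∑ p ∈ (Finset.univ ×ˢ Finset.univ : Finset ((Fin n → Ω) × Ω)),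
      (∏ j, μ (p.1 j)) * μ p.2 * F (Function.update p.1 i p.2)
      = ∑ p ∈ (Finset.univ ×ˢ Finset.univ : Finset ((Fin n → Ω) × Ω)),
      (∏ j, μ (p.1 j)) * μ p.2 * F p.1 := by
    refine Finset.sum_nbij'
      (i := fun p : (Fin n → Ω) × Ω => ((Function.update p.1 i p.2, p.1 i) : (Fin n → Ω) × Ω))
      (j := fun p : (Fin n → Ω) × Ω => ((Function.update p.1 i p.2, p.1 i) : (Fin n → Ω) × Ω))
      (fun p _ => Finset.mem_product.2 ⟨Finset.mem_univ _, Finset.mem_univ _⟩)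
      (fun p _ => Finset.mem_product.2 ⟨Finset.mem_univ _, Finset.mem_univ _⟩)
      (fun p _ => ?_) (fun p _ => ?_) (fun p _ => ?_)
    · obtain ⟨y, τ⟩ := p
      simp [Prod.ext_iff, Function.update_idem, Function.update_eq_self]
    · obtain ⟨y, τ⟩ := p
      simp [Prod.ext_iff, Function.update_idem, Function.update_eq_self]
    · simp only []
      rw [weight_update μ p.1 i p.2]
  rw [hbij, Finset.sum_product]
  refine Finset.sum_congr rfl (fun x _ => ?_)
  rw [show (∑ ω : Ω, (∏ j, μ (x j)) * μ ω * F x) = ((∏ j, μ (x j)) * F x) * ∑ ω, μ ω from by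
    rw [Finset.mul_sum]; exact Finset.sum_congr rfl (fun ω _ => by ring)]
  rw [hμsum, mul_one]

lemma sum_eval (hμsum : ∑ x, μ x = 1) (i : Fin n) (H : Ω → ℝ) :
    ∑ y : Fin n → Ω, (∏ j, μ (y j)) * H (y i) = ∑ ω, μ ω * H ω := by
  have h1 := sum_update μ hμsum i (fun x => H (x i))
  simp only [Function.update_self] at h1
  rw [← h1, ← Finset.sum_mul, sum_w μ hμsum, one_mul]

lemma piecewise_compl_singleton (i : Fin n) (x y : Fin n → Ω) :
    ((({i} : Finset (Fin n))ᶜ : Finset (Fin n)).piecewise x y) = Function.update x i (y i) := by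
  classical
  funext j
  by_cases h : j = i
  · subst h
    simp [Finset.piecewise, Function.update_self]
  · simp [Finset.piecewise, h, Function.update_of_ne h]

lemma condExp_compl_singleton (hμsum : ∑ x, μ x = 1) (i : Fin n) (h : (Fin n → Ω) → ℝ)
    (x : Fin n → Ω) :
    condExp μ (({i} : Finset (Fin n))ᶜ) h x = ∑ ω, μ ω * h (Function.update x i ω) := by
  classical
  unfold condExp pExpct
  simp_rw [piecewise_compl_singleton]
  exact sum_eval μ hμsum i (fun ω => h (Function.update x i ω))

lemma weight_piecewise (B : Finset (Fin n)) (y z : Fin n → Ω) :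
    (∏ j, μ (y j)) * (∏ j, μ (z j))
      = (∏ j, μ (B.piecewise y z j)) * (∏ j, μ (B.piecewise z y j)) := by
  classical
  rw [← Finset.prod_mul_distrib, ← Finset.prod_mul_distrib]
  refine Finset.prod_congr rfl (fun j _ => ?_)
  by_cases h : j ∈ B
  · simp [Finset.piecewise_eq_of_mem _ _ _ h]
  · simp [Finset.piecewise_eq_of_notMem _ _ _ h]
    ring

lemma piecewise_invol (B : Finset (Fin n)) (y z : Fin n → Ω) :
    B.piecewise (B.piecewise y z) (B.piecewise z y) = y := by
  classical
  funext j
  by_cases h : j ∈ B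
  · simp [Finset.piecewise_eq_of_mem _ _ _ h]
  · simp [Finset.piecewise_eq_of_notMem _ _ _ h]

lemma sum_pair_piecewise (hμsum : ∑ x, μ x = 1) (B : Finset (Fin n))
    (G : (Fin n → Ω) → ℝ) :
    ∑ p ∈ (Finset.univ ×ˢ Finset.univ : Finset ((Fin n → Ω) × (Fin n → Ω))),
      ((∏ j, μ (p.1 j)) * (∏ j, μ (p.2 j))) * G (B.piecewise p.1 p.2)
    = ∑ t : Fin n → Ω, (∏ j, μ (t j)) * G t := by
  classical
  have hbij : ∑ p ∈ (Finset.univ ×ˢ Finset.univ : Finset ((Fin n → Ω) × (Fin n → Ω))),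
      ((∏ j, μ (p.1 j)) * (∏ j, μ (p.2 j))) * G (B.piecewise p.1 p.2)
      = ∑ p ∈ (Finset.univ ×ˢ Finset.univ : Finset ((Fin n → Ω) × (Fin n → Ω))),
      ((∏ j, μ (p.1 j)) * (∏ j, μ (p.2 j))) * G p.1 := by
    refine Finset.sum_nbij'
      (i := fun p : (Fin n → Ω) × (Fin n → Ω) => (B.piecewise p.1 p.2, B.piecewise p.2 p.1))
      (j := fun p : (Fin n → Ω) × (Fin n → Ω) => (B.piecewise p.1 p.2, B.piecewise p.2 p.1))
      (fun p _ => Finset.mem_product.2 ⟨Finset.mem_univ _, Finset.mem_univ _⟩)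
      (fun p _ => Finset.mem_product.2 ⟨Finset.mem_univ _, Finset.mem_univ _⟩)
      (fun p _ => ?_) (fun p _ => ?_) (fun p _ => ?_)
    · exact Prod.ext (piecewise_invol B p.1 p.2) (piecewise_invol B p.2 p.1)
    · exact Prod.ext (piecewise_invol B p.1 p.2) (piecewise_invol B p.2 p.1)
    · simp only []
      rw [weight_piecewise μ B p.1 p.2]
  rw [hbij, Finset.sum_product]
  refine Finset.sum_congr rfl (fun t _ => ?_)
  rw [show (∑ z : Fin n → Ω, ((∏ j, μ (t j)) * (∏ j, μ (z j))) * G t)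
      = ((∏ j, μ (t j)) * G t) * ∑ z : Fin n → Ω, (∏ j, μ (z j)) from by
    rw [Finset.mul_sum]; exact Finset.sum_congr rfl (fun z _ => by ring)]
  rw [sum_w μ hμsum, mul_one]

lemma condExp_comp (hμsum : ∑ x, μ x = 1) (A B : Finset (Fin n)) (f : (Fin n → Ω) → ℝ) :
    condExp μ A (condExp μ B f) = condExp μ (A ∩ B) f := by
  classical
  funext x
  unfold condExp pExpct
  have hpw : ∀ y z : Fin n → Ω,
      B.piecewise (A.piecewise x y) z = (A ∩ B).piecewise x (B.piecewise y z) := by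
    intro y z
    funext j
    by_cases hB : j ∈ B
    · by_cases hA : j ∈ A
      · simp [Finset.piecewise_eq_of_mem _ _ _ hB, Finset.piecewise_eq_of_mem _ _ _ hA,
          Finset.piecewise_eq_of_mem _ _ _ (Finset.mem_inter.2 ⟨hA, hB⟩)]
      · have : j ∉ A ∩ B := fun hc => hA (Finset.mem_inter.1 hc).1
        simp [Finset.piecewise_eq_of_mem _ _ _ hB, Finset.piecewise_eq_of_notMem _ _ _ hA,
          Finset.piecewise_eq_of_notMem _ _ _ this]
    · have : j ∉ A ∩ B := fun hc => hB (Finset.mem_inter.1 hc).2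
      simp [Finset.piecewise_eq_of_notMem _ _ _ hB,
        Finset.piecewise_eq_of_notMem _ _ _ this]
  simp_rw [hpw]
  have step : ∀ y : Fin n → Ω,
      (∏ j, μ (y j)) * (∑ z : Fin n → Ω, (∏ j, μ (z j)) * f ((A ∩ B).piecewise x (B.piecewise y z)))
      = ∑ z : Fin n → Ω, ((∏ j, μ (y j)) * (∏ j, μ (z j)))
          * f ((A ∩ B).piecewise x (B.piecewise y z)) := by
    intro y; rw [Finset.mul_sum]; exact Finset.sum_congr rfl (fun z _ => by ring)
  simp_rw [step]
  rw [← Finset.sum_product (s := (Finset.univ : Finset (Fin n → Ω)))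
    (t := (Finset.univ : Finset (Fin n → Ω)))
    (f := fun p => ((∏ j, μ (p.1 j)) * (∏ j, μ (p.2 j)))
      * f ((A ∩ B).piecewise x (B.piecewise p.1 p.2)))]
  exact sum_pair_piecewise μ hμsum B (fun t => f ((A ∩ B).piecewise x t))

lemma condExp_univ (hμsum : ∑ x, μ x = 1) (f : (Fin n → Ω) → ℝ) :
    condExp μ (Finset.univ : Finset (Fin n)) f = f := by
  classical
  funext x
  unfold condExp pExpct
  simp only [Finset.piecewise_univ]
  rw [← Finset.sum_mul, sum_w μ hμsum, one_mul]

lemma condExp_nonneg (hμpos : ∀ x, 0 < μ x) (S : Finset (Fin n)) {f : (Fin n → Ω) → ℝ}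
    (hf : ∀ x, 0 ≤ f x) (x : Fin n → Ω) : 0 ≤ condExp μ S f x := by
  unfold condExp pExpct
  exact Finset.sum_nonneg fun y _ => mul_nonneg (Finset.prod_pos (fun i _ => hμpos _)).le (hf _)

lemma condExp_finsum {ι : Type*} (𝒮 : Finset ι) (A : Finset (Fin n))
    (F : ι → (Fin n → Ω) → ℝ) (x : Fin n → Ω) :
    condExp μ A (fun y => ∑ S ∈ 𝒮, F S y) x = ∑ S ∈ 𝒮, condExp μ A (F S) x := by
  unfold condExp pExpct
  have step : ∀ y : Fin n → Ω, (∏ j, μ (y j)) * (∑ S ∈ 𝒮, F S (A.piecewise x y))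
      = ∑ S ∈ 𝒮, (∏ j, μ (y j)) * F S (A.piecewise x y) :=
    fun y => Finset.mul_sum _ _ _
  simp_rw [step]
  exact Finset.sum_comm

lemma condExp_smul (c : ℝ) (A : Finset (Fin n)) (F : (Fin n → Ω) → ℝ) (x : Fin n → Ω) :
    condExp μ A (fun y => c * F y) x = c * condExp μ A F x := by
  unfold condExp pExpct
  rw [Finset.mul_sum]
  exact Finset.sum_congr rfl (fun y _ => by ring)

lemma holder2 {ι : Type*} [Fintype ι] (w a b : ι → ℝ) (hw : ∀ i, 0 ≤ w i)
    (ha : ∀ i, 0 ≤ a i) (hb : ∀ i, 0 ≤ b i) {lam : ℝ} (h0 : 0 ≤ lam) (h1 : lam ≤ 1)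
    (hwsum : ∑ i, w i = 1) :
    ∑ i, w i * ((a i)^(1-lam) * (b i)^lam)
      ≤ (∑ i, w i * a i)^(1-lam) * (∑ i, w i * b i)^lam := by
  classical
  rcases eq_or_lt_of_le h0 with hl0 | hl0
  · simp [← hl0]
  rcases eq_or_lt_of_le h1 with hl1 | hl1
  · simp [hl1]
  have h1l : 0 < 1 - lam := by linarith
  set A := ∑ i, w i * a i with hAdef
  set B := ∑ i, w i * b i with hBdef
  have hA0 : 0 ≤ A := Finset.sum_nonneg fun i _ => mul_nonneg (hw i) (ha i)
  have hB0 : 0 ≤ B := Finset.sum_nonneg fun i _ => mul_nonneg (hw i) (hb i)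
  rcases eq_or_lt_of_le hA0 with hAz | hApos
  · have hz : ∀ i, w i * a i = 0 := fun i =>
      (Finset.sum_eq_zero_iff_of_nonneg (fun j _ => mul_nonneg (hw j) (ha j))).1 hAz.symm
        i (Finset.mem_univ i)
    have hLHS : ∑ i, w i * ((a i)^(1-lam) * (b i)^lam) = 0 := by
      apply Finset.sum_eq_zero
      intro i _
      rcases mul_eq_zero.1 (hz i) with h | h
      · rw [h, zero_mul]
      · rw [h, Real.zero_rpow h1l.ne', zero_mul, mul_zero]
    rw [hLHS, ← hAz, Real.zero_rpow h1l.ne', zero_mul]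
  rcases eq_or_lt_of_le hB0 with hBz | hBpos
  · have hz : ∀ i, w i * b i = 0 := fun i =>
      (Finset.sum_eq_zero_iff_of_nonneg (fun j _ => mul_nonneg (hw j) (hb j))).1 hBz.symm
        i (Finset.mem_univ i)
    have hLHS : ∑ i, w i * ((a i)^(1-lam) * (b i)^lam) = 0 := by
      apply Finset.sum_eq_zero
      intro i _
      rcases mul_eq_zero.1 (hz i) with h | h
      · rw [h, zero_mul]
      · rw [h, Real.zero_rpow hl0.ne', mul_zero, mul_zero]
    rw [hLHS, ← hBz, Real.zero_rpow hl0.ne', mul_zero]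
  have hKpos : 0 < A^(1-lam) * B^lam :=
    mul_pos (Real.rpow_pos_of_pos hApos _) (Real.rpow_pos_of_pos hBpos _)
  calc ∑ i, w i * ((a i)^(1-lam) * (b i)^lam)
      ≤ ∑ i, w i * ((A^(1-lam) * B^lam) * ((1-lam) * (a i / A) + lam * (b i / B))) := by
        refine Finset.sum_le_sum fun i _ => ?_
        refine mul_le_mul_of_nonneg_left ?_ (hw i)
        have hgm := Real.geom_mean_le_arith_mean2_weighted h1l.le h0
          (div_nonneg (ha i) hA0) (div_nonneg (hb i) hB0) (by ring)
        have heq : (a i)^(1-lam) * (b i)^lam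
            = (A^(1-lam) * B^lam) * ((a i / A)^(1-lam) * (b i / B)^lam) := by
          rw [Real.div_rpow (ha i) hA0, Real.div_rpow (hb i) hB0]
          field_simp
          try ring
        rw [heq]
        exact mul_le_mul_of_nonneg_left hgm hKpos.le
    _ = A^(1-lam) * B^lam := by
        have step : ∀ i, w i * ((A^(1-lam) * B^lam) * ((1-lam) * (a i / A) + lam * (b i / B)))
            = (A^(1-lam) * B^lam * (1-lam) / A) * (w i * a i)
              + (A^(1-lam) * B^lam * lam / B) * (w i * b i) := by
          intro i; field_simp
        simp_rw [step]
        rw [Finset.sum_add_distrib, ← Finset.mul_sum, ← Finset.mul_sum, ← hAdef, ← hBdef]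
        field_simp
        ring

lemma one_coord (hq : 2 ≤ q) (hρ0 : 0 < ρ) (hρ1 : ρ < 1)
    {Ω : Type*} [Fintype Ω] (μ : Ω → ℝ) (hμpos : ∀ x, 0 < μ x)
    (hμsum : ∑ x, μ x = 1) {μs : ℝ} (hμs_le : ∀ x, μs ≤ μ x) (hμs_pos : 0 < μs)
    (hμs1 : μs < 1) {lam : ℝ}
    (hlam : lam = Real.log (Qf q ρ (1/μs) / (1/μs)) / Real.log (1/μs) / (q-1))
    (hlam0 : 0 ≤ lam) (hlam1 : lam ≤ 1)
    {n : ℕ} (i : Fin n) (h : (Fin n → Ω) → ℝ) (hh : ∀ x, 0 ≤ h x) :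
    pqNorm μ q (fun x => ρ * h x + (1-ρ) * condExp μ ((({i} : Finset (Fin n)))ᶜ) h x)
      ≤ pqNorm μ q (condExp μ ((({i} : Finset (Fin n)))ᶜ) h) ^ (1-lam)
        * pqNorm μ q h ^ lam := by
  classical
  have hq0 : (0:ℝ) < q := by linarith
  set av : (Fin n → Ω) → ℝ := fun x => ∑ ω, μ ω * h (Function.update x i ω) with havdef
  have hav_eq : ∀ x, condExp μ ((({i} : Finset (Fin n)))ᶜ) h x = av x := fun x =>
    condExp_compl_singleton μ hμsum i h x
  have hav0 : ∀ x, 0 ≤ av x := fun x =>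
    Finset.sum_nonneg fun ω _ => mul_nonneg (hμpos ω).le (hh _)
  have hav_upd : ∀ (x : Fin n → Ω) (ω : Ω), av (Function.update x i ω) = av x := by
    intro x ω
    simp only [havdef]
    exact Finset.sum_congr rfl fun τ _ => by rw [Function.update_idem]
  set mv : (Fin n → Ω) → ℝ := fun x => ∑ ω, μ ω * (h (Function.update x i ω))^q with hmvdef
  have hmv0 : ∀ x, 0 ≤ mv x := fun x =>
    Finset.sum_nonneg fun ω _ => mul_nonneg (hμpos ω).le (Real.rpow_nonneg (hh _) q)
  set w : (Fin n → Ω) → ℝ := fun x => ∏ j, μ (x j) with hwdef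
  have hw0 : ∀ x, 0 ≤ w x := fun x => (w_pos μ hμpos x).le
  -- the three q-th power sums
  set X := ∑ x, w x * (av x)^q with hXdef
  set Y := ∑ x, w x * (h x)^q with hYdef
  have hX0 : 0 ≤ X := Finset.sum_nonneg fun x _ =>
    mul_nonneg (hw0 x) (Real.rpow_nonneg (hav0 x) q)
  have hY0 : 0 ≤ Y := Finset.sum_nonneg fun x _ =>
    mul_nonneg (hw0 x) (Real.rpow_nonneg (hh x) q)
  -- step : main sum inequality
  have hmain : ∑ x, w x * (ρ * h x + (1-ρ) * av x)^q ≤ (X^(1-lam)) * (Y^lam) := by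
    have e1 : ∑ x, w x * (ρ * h x + (1-ρ) * av x)^q
        = ∑ x, w x * (∑ ω, μ ω * (ρ * h (Function.update x i ω) + (1-ρ) * av x)^q) := by
      rw [show (∑ x, w x * (∑ ω, μ ω * (ρ * h (Function.update x i ω) + (1-ρ) * av x)^q))
          = ∑ x, w x * (∑ ω, μ ω * ((fun y => (ρ * h y + (1-ρ) * av y)^q) (Function.update x i ω)))
          from Finset.sum_congr rfl fun x _ => by
            congr 1
            exact Finset.sum_congr rfl fun ω _ => by
              simp only []
              rw [hav_upd x ω]]
      rw [sum_update μ hμsum i (fun y => (ρ * h y + (1-ρ) * av y)^q)]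
    have e2 : ∀ x, (∑ ω, μ ω * (ρ * h (Function.update x i ω) + (1-ρ) * av x)^q)
        ≤ ((av x)^q)^(1-lam) * (mv x)^lam := by
      intro x
      have := scalar_core hq hρ0 hρ1 μ hμpos hμsum hμs_le hμs_pos hμs1 hlam
        (fun ω => h (Function.update x i ω)) (fun ω => hh _)
      simpa using this
    calc ∑ x, w x * (ρ * h x + (1-ρ) * av x)^q
        = ∑ x, w x * (∑ ω, μ ω * (ρ * h (Function.update x i ω) + (1-ρ) * av x)^q) := e1
      _ ≤ ∑ x, w x * (((av x)^q)^(1-lam) * (mv x)^lam) :=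
          Finset.sum_le_sum fun x _ => mul_le_mul_of_nonneg_left (e2 x) (hw0 x)
      _ ≤ (∑ x, w x * (av x)^q)^(1-lam) * (∑ x, w x * mv x)^lam :=
          holder2 w (fun x => (av x)^q) mv hw0
            (fun x => Real.rpow_nonneg (hav0 x) q) hmv0 hlam0 hlam1 (sum_w μ hμsum)
      _ = X^(1-lam) * Y^lam := by
          rw [← hXdef]
          congr 2
          rw [hYdef]
          exact sum_update μ hμsum i (fun y => (h y)^q)
  -- identify pqNorms
  have habs : ∀ (F : (Fin n → Ω) → ℝ), (∀ x, 0 ≤ F x) →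
      pqNorm μ q F = (∑ x, w x * (F x)^q)^(1/q) := by
    intro F hF
    unfold pqNorm
    congr 1
    exact Finset.sum_congr rfl fun x _ => by rw [abs_of_nonneg (hF x)]
  have hLHSf : ∀ x, 0 ≤ ρ * h x + (1-ρ) * condExp μ ((({i} : Finset (Fin n)))ᶜ) h x := by
    intro x
    have := hh x
    have h2 := hav0 x
    rw [hav_eq x]
    nlinarith
  rw [habs _ hLHSf, habs _ (fun x => condExp_nonneg μ hμpos _ hh x), habs _ hh]
  have hrw : ∑ x, w x * (ρ * h x + (1-ρ) * condExp μ ((({i} : Finset (Fin n)))ᶜ) h x)^q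
      = ∑ x, w x * (ρ * h x + (1-ρ) * av x)^q :=
    Finset.sum_congr rfl fun x _ => by rw [hav_eq x]
  have hrwX : ∑ x, w x * (condExp μ ((({i} : Finset (Fin n)))ᶜ) h x)^q = X :=
    Finset.sum_congr rfl fun x _ => by rw [hav_eq x]
  rw [hrw, hrwX, ← hYdef]
  calc (∑ x, w x * (ρ * h x + (1-ρ) * av x)^q)^(1/q)
      ≤ (X^(1-lam) * Y^lam)^(1/q) := by
        refine Real.rpow_le_rpow ?_ hmain (by positivity)
        exact Finset.sum_nonneg fun x _ => mul_nonneg (hw0 x)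
          (Real.rpow_nonneg (by nlinarith [hh x, hav0 x]) q)
    _ = (X^(1/q))^(1-lam) * (Y^(1/q))^lam := by
        rw [Real.mul_rpow (Real.rpow_nonneg hX0 _) (Real.rpow_nonneg hY0 _),
          ← Real.rpow_mul hX0, ← Real.rpow_mul hY0, ← Real.rpow_mul hX0, ← Real.rpow_mul hY0]
        rw [mul_comm (1-lam) (1/q), mul_comm lam (1/q)]

end Tensor
noncomputable def Noi {Ω : Type*} [Fintype Ω] (μ : Ω → ℝ) {n : ℕ} (ρ : ℝ)
    (U : Finset (Fin n)) (f : (Fin n → Ω) → ℝ) : (Fin n → Ω) → ℝ :=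
  fun x => ∑ S ∈ U.powerset, ρ ^ S.card * (1 - ρ) ^ (U.card - S.card) * condExp μ (S ∪ Uᶜ) f x

section NoiLemmas
variable {Ω : Type*} [Fintype Ω] (μ : Ω → ℝ) {n : ℕ} {ρ : ℝ}

lemma pqNorm_nonneg (hμpos : ∀ x, 0 < μ x) (f : (Fin n → Ω) → ℝ) : 0 ≤ pqNorm μ q f := by
  unfold pqNorm
  apply Real.rpow_nonneg
  exact Finset.sum_nonneg fun x _ => mul_nonneg (w_pos μ hμpos x).le
    (Real.rpow_nonneg (abs_nonneg _) q)

lemma Noi_univ (f : (Fin n → Ω) → ℝ) : Noi μ ρ Finset.univ f = noiseOpN μ ρ f := by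
  funext x
  unfold Noi noiseOpN
  rw [Finset.powerset_univ]
  refine Finset.sum_congr rfl fun S _ => ?_
  rw [Finset.compl_univ, Finset.union_empty, Finset.card_univ, Fintype.card_fin]

lemma Noi_empty (hμsum : ∑ x, μ x = 1) (f : (Fin n → Ω) → ℝ) : Noi μ ρ ∅ f = f := by
  funext x
  unfold Noi
  rw [Finset.powerset_empty, Finset.sum_singleton]
  simp only [Finset.card_empty, pow_zero, one_mul, Nat.sub_zero, Finset.empty_union,
    Finset.compl_empty]
  rw [condExp_univ μ hμsum]

lemma Noi_nonneg (hμpos : ∀ x, 0 < μ x) (hρ0 : 0 ≤ ρ) (hρ1 : ρ ≤ 1) (U : Finset (Fin n))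
    {f : (Fin n → Ω) → ℝ} (hf : ∀ x, 0 ≤ f x) (x : Fin n → Ω) : 0 ≤ Noi μ ρ U f x := by
  unfold Noi
  refine Finset.sum_nonneg fun S _ => ?_
  have h1 : (0:ℝ) ≤ ρ ^ S.card := pow_nonneg hρ0 _
  have h2 : (0:ℝ) ≤ (1-ρ) ^ (U.card - S.card) := pow_nonneg (by linarith) _
  exact mul_nonneg (mul_nonneg h1 h2) (condExp_nonneg μ hμpos _ hf x)

lemma set1 {U : Finset (Fin n)} {i : Fin n} (hi : i ∉ U) {S : Finset (Fin n)} (hS : S ⊆ U) :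
    ((({i} : Finset (Fin n)))ᶜ) ∩ (S ∪ Uᶜ) = S ∪ (insert i U)ᶜ := by
  classical
  ext j
  simp only [Finset.mem_inter, Finset.mem_compl, Finset.mem_singleton, Finset.mem_union,
    Finset.mem_insert]
  constructor
  · rintro ⟨hji, hj⟩
    rcases hj with hj | hj
    · exact Or.inl hj
    · exact Or.inr (fun hc => hc.elim hji hj)
  · rintro (hj | hj)
    · exact ⟨fun hc => hi (hc ▸ hS hj), Or.inl hj⟩
    · exact ⟨fun hc => hj (Or.inl hc), Or.inr (fun hc => hj (Or.inr hc))⟩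

lemma set2 {U : Finset (Fin n)} {i : Fin n} (hi : i ∉ U) {S : Finset (Fin n)} (hS : S ⊆ U) :
    (insert i S) ∪ (insert i U)ᶜ = S ∪ Uᶜ := by
  classical
  ext j
  simp only [Finset.mem_union, Finset.mem_compl, Finset.mem_insert]
  constructor
  · rintro (hj | hj)
    · rcases hj with hj | hj
      · exact Or.inr (hj ▸ hi)
      · exact Or.inl hj
    · exact Or.inr (fun hc => hj (Or.inr hc))
  · rintro (hj | hj)
    · exact Or.inl (Or.inr hj)
    · by_cases hji : j = i
      · exact Or.inl (Or.inl hji)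
      · exact Or.inr (fun hc => hc.elim (fun h => hji h) hj)

lemma Noi_insert (hμsum : ∑ x, μ x = 1) {i : Fin n} {U : Finset (Fin n)} (hi : i ∉ U)
    (f : (Fin n → Ω) → ℝ) :
    Noi μ ρ (insert i U) f = fun x => ρ * Noi μ ρ U f x
      + (1-ρ) * condExp μ ((({i} : Finset (Fin n)))ᶜ) (Noi μ ρ U f) x := by
  classical
  funext x
  have hce : condExp μ ((({i} : Finset (Fin n)))ᶜ) (Noi μ ρ U f) x
      = ∑ S ∈ U.powerset, ρ^S.card * (1-ρ)^(U.card - S.card)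
          * condExp μ (S ∪ (insert i U)ᶜ) f x := by
    have h1 := condExp_finsum μ U.powerset ((({i} : Finset (Fin n)))ᶜ)
      (fun S y => ρ^S.card * (1-ρ)^(U.card - S.card) * condExp μ (S ∪ Uᶜ) f y) x
    rw [show Noi μ ρ U f = (fun y => ∑ S ∈ U.powerset,
        ρ^S.card * (1-ρ)^(U.card - S.card) * condExp μ (S ∪ Uᶜ) f y) from rfl, h1]
    refine Finset.sum_congr rfl fun S hS => ?_
    rw [show (fun y => ρ^S.card * (1-ρ)^(U.card - S.card) * condExp μ (S ∪ Uᶜ) f y)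
        = (fun y => (ρ^S.card * (1-ρ)^(U.card - S.card)) * condExp μ (S ∪ Uᶜ) f y) from by
          funext y; ring]
    rw [condExp_smul, condExp_comp μ hμsum, set1 hi (Finset.mem_powerset.1 hS)]
    try ring
  have hLHS : Noi μ ρ (insert i U) f x
      = (∑ S ∈ U.powerset, ρ^S.card * (1-ρ)^((insert i U).card - S.card)
          * condExp μ (S ∪ (insert i U)ᶜ) f x)
        + ∑ S ∈ U.powerset, ρ^(insert i S).card
          * (1-ρ)^((insert i U).card - (insert i S).card)
          * condExp μ ((insert i S) ∪ (insert i U)ᶜ) f x := by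
    unfold Noi
    exact Finset.sum_powerset_insert hi _
  have hfirst : ∑ S ∈ U.powerset, ρ^S.card * (1-ρ)^((insert i U).card - S.card)
        * condExp μ (S ∪ (insert i U)ᶜ) f x
      = (1-ρ) * ∑ S ∈ U.powerset, ρ^S.card * (1-ρ)^(U.card - S.card)
        * condExp μ (S ∪ (insert i U)ᶜ) f x := by
    rw [Finset.mul_sum]
    refine Finset.sum_congr rfl fun S hS => ?_
    have hSU := Finset.mem_powerset.1 hS
    have hcard : (insert i U).card - S.card = (U.card - S.card) + 1 := by
      rw [Finset.card_insert_of_notMem hi]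
      have := Finset.card_le_card hSU
      omega
    rw [hcard, pow_succ]
    ring
  have hsecond : ∑ S ∈ U.powerset, ρ^(insert i S).card
        * (1-ρ)^((insert i U).card - (insert i S).card)
        * condExp μ ((insert i S) ∪ (insert i U)ᶜ) f x
      = ρ * ∑ S ∈ U.powerset, ρ^S.card * (1-ρ)^(U.card - S.card)
        * condExp μ (S ∪ Uᶜ) f x := by
    rw [Finset.mul_sum]
    refine Finset.sum_congr rfl fun S hS => ?_
    have hSU := Finset.mem_powerset.1 hS
    have hiS : i ∉ S := fun hc => hi (hSU hc)
    rw [Finset.card_insert_of_notMem hiS, Finset.card_insert_of_notMem hi,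
      set2 hi hSU, pow_succ]
    have : U.card + 1 - (S.card + 1) = U.card - S.card := by omega
    rw [this]
    ring
  rw [hLHS, hfirst, hsecond, hce,
    show Noi μ ρ U f x = ∑ S ∈ U.powerset,
      ρ^S.card * (1-ρ)^(U.card - S.card) * condExp μ (S ∪ Uᶜ) f x from rfl]
  ring

end NoiLemmas


lemma main_claim (hq : 2 ≤ q) (hρ0 : 0 < ρ) (hρ1 : ρ < 1)
    {Ω : Type*} [Fintype Ω] (μ : Ω → ℝ) (hμpos : ∀ x, 0 < μ x)
    (hμsum : ∑ x, μ x = 1) {μs : ℝ} (hμs_le : ∀ x, μs ≤ μ x) (hμs_pos : 0 < μs)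
    (hμs1 : μs < 1) {lam : ℝ}
    (hlam : lam = Real.log (Qf q ρ (1/μs) / (1/μs)) / Real.log (1/μs) / (q-1))
    (hlam0 : 0 ≤ lam) (hlam1 : lam ≤ 1) {n : ℕ} (U : Finset (Fin n)) :
    ∀ f : (Fin n → Ω) → ℝ, (∀ x, 0 ≤ f x) →
    pqNorm μ q (Noi μ ρ U f) ≤
      ∏ S ∈ U.powerset, pqNorm μ q (condExp μ (S ∪ Uᶜ) f)
        ^ (lam^S.card * (1-lam)^(U.card - S.card)) := by
  classical
  induction U using Finset.induction_on with
  | empty =>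
      intro f hf
      rw [Noi_empty μ hμsum]
      rw [Finset.powerset_empty, Finset.prod_singleton]
      simp only [Finset.card_empty, pow_zero, one_mul, Nat.sub_zero, Finset.empty_union,
        Finset.compl_empty]
      rw [condExp_univ μ hμsum, Real.rpow_one]
  | @insert i U hi IH =>
      intro f hf
      have hh : ∀ x, 0 ≤ Noi μ ρ U f x := Noi_nonneg μ hμpos hρ0.le hρ1.le U hf
      have h1 := one_coord hq hρ0 hρ1 μ hμpos hμsum hμs_le hμs_pos hμs1 hlam hlam0 hlam1
        i (Noi μ ρ U f) hh
      have hswap : condExp μ ((({i} : Finset (Fin n)))ᶜ) (Noi μ ρ U f)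
          = Noi μ ρ U (condExp μ ((({i} : Finset (Fin n)))ᶜ) f) := by
        funext x
        have hL := condExp_finsum μ U.powerset ((({i} : Finset (Fin n)))ᶜ)
          (fun S y => (ρ^S.card * (1-ρ)^(U.card - S.card)) * condExp μ (S ∪ Uᶜ) f y) x
        rw [show Noi μ ρ U f = (fun y => ∑ S ∈ U.powerset,
            (ρ^S.card * (1-ρ)^(U.card - S.card)) * condExp μ (S ∪ Uᶜ) f y) from by
          funext y; unfold Noi; exact Finset.sum_congr rfl fun S _ => by ring, hL]
        rw [show Noi μ ρ U (condExp μ ((({i} : Finset (Fin n)))ᶜ) f) x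
            = ∑ S ∈ U.powerset, (ρ^S.card * (1-ρ)^(U.card - S.card))
              * condExp μ (S ∪ Uᶜ) (condExp μ ((({i} : Finset (Fin n)))ᶜ) f) x from by
          unfold Noi; exact Finset.sum_congr rfl fun S _ => by ring]
        refine Finset.sum_congr rfl fun S hS => ?_
        rw [condExp_smul, condExp_comp μ hμsum, condExp_comp μ hμsum, Finset.inter_comm]
      -- abbreviations
      set c : Finset (Fin n) → ℝ :=
        fun S => lam^S.card * (1-lam)^(U.card - S.card) with hcdef
      have hIH1 := IH (condExp μ ((({i} : Finset (Fin n)))ᶜ) f)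
        (fun x => condExp_nonneg μ hμpos _ hf x)
      have hIH2 := IH f hf
      -- rewrite the condExp in hIH1
      have hIH1' : pqNorm μ q (condExp μ ((({i} : Finset (Fin n)))ᶜ) (Noi μ ρ U f))
          ≤ ∏ S ∈ U.powerset,
            pqNorm μ q (condExp μ (S ∪ (insert i U)ᶜ) f) ^ (c S) := by
        rw [hswap]
        refine le_trans hIH1 (le_of_eq ?_)
        refine Finset.prod_congr rfl fun S hS => ?_
        rw [condExp_comp μ hμsum, Finset.inter_comm, set1 hi (Finset.mem_powerset.1 hS)]
      have hIH2' : pqNorm μ q (Noi μ ρ U f)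
          ≤ ∏ S ∈ U.powerset,
            pqNorm μ q (condExp μ ((insert i S) ∪ (insert i U)ᶜ) f) ^ (c S) := by
        refine le_trans hIH2 (le_of_eq ?_)
        refine Finset.prod_congr rfl fun S hS => ?_
        rw [set2 hi (Finset.mem_powerset.1 hS)]
      -- nonnegativity of products
      have hprod1 : 0 ≤ ∏ S ∈ U.powerset,
          pqNorm μ q (condExp μ (S ∪ (insert i U)ᶜ) f) ^ (c S) :=
        Finset.prod_nonneg fun S _ => Real.rpow_nonneg (pqNorm_nonneg μ hμpos _) _
      have hprod2 : 0 ≤ ∏ S ∈ U.powerset,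
          pqNorm μ q (condExp μ ((insert i S) ∪ (insert i U)ᶜ) f) ^ (c S) :=
        Finset.prod_nonneg fun S _ => Real.rpow_nonneg (pqNorm_nonneg μ hμpos _) _
      calc pqNorm μ q (Noi μ ρ (insert i U) f)
          = pqNorm μ q (fun x => ρ * Noi μ ρ U f x
              + (1-ρ) * condExp μ ((({i} : Finset (Fin n)))ᶜ) (Noi μ ρ U f) x) := by
            rw [Noi_insert μ hμsum hi f]
        _ ≤ pqNorm μ q (condExp μ ((({i} : Finset (Fin n)))ᶜ) (Noi μ ρ U f)) ^ (1-lam)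
            * pqNorm μ q (Noi μ ρ U f) ^ lam := h1
        _ ≤ (∏ S ∈ U.powerset,
              pqNorm μ q (condExp μ (S ∪ (insert i U)ᶜ) f) ^ (c S)) ^ (1-lam)
            * (∏ S ∈ U.powerset,
              pqNorm μ q (condExp μ ((insert i S) ∪ (insert i U)ᶜ) f) ^ (c S)) ^ lam := by
            refine mul_le_mul ?_ ?_ (Real.rpow_nonneg (pqNorm_nonneg μ hμpos _) _)
              (Real.rpow_nonneg hprod1 _)
            · exact Real.rpow_le_rpow (pqNorm_nonneg μ hμpos _) hIH1' (by linarith)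
            · exact Real.rpow_le_rpow (pqNorm_nonneg μ hμpos _) hIH2' hlam0
        _ = (∏ S ∈ U.powerset, pqNorm μ q (condExp μ (S ∪ (insert i U)ᶜ) f)
                ^ (lam^S.card * (1-lam)^((insert i U).card - S.card)))
            * (∏ S ∈ U.powerset, pqNorm μ q (condExp μ ((insert i S) ∪ (insert i U)ᶜ) f)
                ^ (lam^(insert i S).card * (1-lam)^((insert i U).card - (insert i S).card))) := by
            rw [← Real.finset_prod_rpow _ _
                (fun S _ => Real.rpow_nonneg (pqNorm_nonneg μ hμpos _) _) (1-lam),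
              ← Real.finset_prod_rpow _ _
                (fun S _ => Real.rpow_nonneg (pqNorm_nonneg μ hμpos _) _) lam]
            congr 1
            · refine Finset.prod_congr rfl fun S hS => ?_
              rw [← Real.rpow_mul (pqNorm_nonneg μ hμpos _)]
              congr 1
              have hSU := Finset.mem_powerset.1 hS
              have hcard : (insert i U).card - S.card = (U.card - S.card) + 1 := by
                rw [Finset.card_insert_of_notMem hi]
                have := Finset.card_le_card hSU
                omega
              rw [hcdef, hcard, pow_succ]
              ring
            · refine Finset.prod_congr rfl fun S hS => ?_
              rw [← Real.rpow_mul (pqNorm_nonneg μ hμpos _)]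
              congr 1
              have hSU := Finset.mem_powerset.1 hS
              have hiS : i ∉ S := fun hc => hi (hSU hc)
              have hc1 : (insert i S).card = S.card + 1 :=
                Finset.card_insert_of_notMem hiS
              have hc2 : (insert i U).card = U.card + 1 :=
                Finset.card_insert_of_notMem hi
              rw [hcdef, hc1, hc2, pow_succ]
              have : U.card + 1 - (S.card + 1) = U.card - S.card := by omega
              rw [this]
              ring
        _ = ∏ S ∈ (insert i U).powerset, pqNorm μ q (condExp μ (S ∪ (insert i U)ᶜ) f)
              ^ (lam^S.card * (1-lam)^((insert i U).card - S.card)) := by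
            rw [Finset.prod_powerset_insert hi]

end S4

theorem stmt4 {Ω : Type*} [Fintype Ω] (hΩ : 2 ≤ Fintype.card Ω)
    (μ : Ω → ℝ) (hμpos : ∀ x, 0 < μ x) (hμsum : ∑ x, μ x = 1)
    (μs : ℝ) (hμs_le : ∀ x, μs ≤ μ x) (hμs_mem : ∃ x, μ x = μs)
    (q ρ lam : ℝ) (hq : 2 ≤ q) (hρ0 : 0 ≤ ρ) (hρ1 : ρ ≤ 1)
    (hlam : lam = Real.log (μs * (1 + ρ * (1 / μs - 1)) ^ q + (1 - μs) * (1 - ρ) ^ q) /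
      ((q - 1) * Real.log (1 / μs)))
    (n : ℕ) (f : (Fin n → Ω) → ℝ) (hf : ∀ x, 0 ≤ f x) :
    pqNorm μ q (noiseOpN μ ρ f) ≤
      ∏ S : Finset (Fin n),
        pqNorm μ q (condExp μ S f) ^ (lam ^ S.card * (1 - lam) ^ (n - S.card)) := by
  classical
  obtain ⟨x0, hx0⟩ := hμs_mem
  have hμs_pos : 0 < μs := hx0 ▸ hμpos x0
  have hμs1 : μs < 1 := by
    obtain ⟨a, b, hab⟩ := Fintype.exists_pair_of_one_lt_card (α := Ω) (by omega)
    have hsub : ({a, b} : Finset Ω) ⊆ Finset.univ := Finset.subset_univ _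
    have hsum2 : μ a + μ b ≤ 1 := by
      rw [← hμsum, ← Finset.sum_pair hab]
      exact Finset.sum_le_sum_of_subset_of_nonneg hsub (fun x _ _ => (hμpos x).le)
    have h1 := hμs_le a
    have h2 := hμs_le b
    have h3 := hμpos a
    have h4 := hμpos b
    linarith
  have hq0 : (0:ℝ) < q := by linarith
  have hq1 : (0:ℝ) < q - 1 := by linarith
  have hT1 : 1 < 1/μs := by rw [lt_div_iff₀ hμs_pos]; linarith
  have hT0 : (0:ℝ) < 1/μs := by linarith
  have hlogT : 0 < Real.log (1/μs) := Real.log_pos hT1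
  rcases eq_or_lt_of_le hρ0 with hz | hρ0'
  · -- ρ = 0
    have hρz : ρ = 0 := hz.symm
    subst hρz
    have hlam0 : lam = 0 := by
      have e1 : (1:ℝ) + 0 * (1 / μs - 1) = 1 := by ring
      have e2 : (1:ℝ) - 0 = 1 := by ring
      have e : μs * ((1:ℝ) + 0 * (1 / μs - 1)) ^ q + (1 - μs) * ((1:ℝ) - 0) ^ q = 1 := by
        rw [e1, e2, Real.one_rpow]; ring
      rw [hlam, e, Real.log_one, zero_div]
    have hLHS : noiseOpN μ 0 f = condExp μ (∅ : Finset (Fin n)) f := by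
      funext x
      unfold noiseOpN
      rw [Finset.sum_eq_single (∅ : Finset (Fin n))]
      · simp
      · intro S _ hS
        have : S.card ≠ 0 := fun hc => hS (Finset.card_eq_zero.1 hc)
        rw [zero_pow this, zero_mul, zero_mul]
      · intro h; exact absurd (Finset.mem_univ _) h
    rw [hLHS, hlam0]
    have hRHS : ∏ S : Finset (Fin n),
        pqNorm μ q (condExp μ S f) ^ ((0:ℝ) ^ S.card * (1 - 0) ^ (n - S.card))
        = pqNorm μ q (condExp μ (∅ : Finset (Fin n)) f) := by
      rw [Finset.prod_eq_single (∅ : Finset (Fin n))]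
      · simp
      · intro S _ hS
        have : S.card ≠ 0 := fun hc => hS (Finset.card_eq_zero.1 hc)
        rw [zero_pow this, zero_mul, Real.rpow_zero]
      · intro h; exact absurd (Finset.mem_univ _) h
    rw [hRHS]
  rcases eq_or_lt_of_le hρ1 with ho | hρ1'
  · -- ρ = 1
    subst ho
    have hlam1 : lam = 1 := by
      rw [hlam]
      have e1 : (1 + 1 * (1 / μs - 1)) = 1/μs := by ring
      have e2 : ((1:ℝ) - 1) = 0 := by ring
      rw [e1, e2, Real.zero_rpow hq0.ne']
      have e3 : μs * (1/μs) ^ q + (1 - μs) * 0 = (1/μs) ^ (q-1) := by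
        rw [Real.rpow_sub hT0, Real.rpow_one]
        field_simp
        try ring
      rw [e3, Real.log_rpow hT0]
      exact div_self (mul_ne_zero hq1.ne' hlogT.ne')
    have hLHS : noiseOpN μ 1 f = condExp μ (Finset.univ : Finset (Fin n)) f := by
      funext x
      unfold noiseOpN
      rw [Finset.sum_eq_single (Finset.univ : Finset (Fin n))]
      · simp
      · intro S _ hS
        have hlt : S.card < n := by
          have := Finset.card_lt_card (Finset.ssubset_univ_iff.2 hS)
          simpa using this
        have : n - S.card ≠ 0 := by omega
        rw [sub_self, zero_pow this, mul_zero, zero_mul]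
      · intro h; exact absurd (Finset.mem_univ _) h
    rw [hLHS, hlam1]
    have hRHS : ∏ S : Finset (Fin n),
        pqNorm μ q (condExp μ S f) ^ ((1:ℝ) ^ S.card * (1 - 1) ^ (n - S.card))
        = pqNorm μ q (condExp μ (Finset.univ : Finset (Fin n)) f) := by
      rw [Finset.prod_eq_single (Finset.univ : Finset (Fin n))]
      · simp
      · intro S _ hS
        have hlt : S.card < n := by
          have := Finset.card_lt_card (Finset.ssubset_univ_iff.2 hS)
          simpa using this
        have : n - S.card ≠ 0 := by omega
        rw [sub_self, zero_pow this, mul_zero, Real.rpow_zero]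
      · intro h; exact absurd (Finset.mem_univ _) h
    rw [hRHS]
  -- main case 0 < ρ < 1
  have hc1 : (1:ℝ) ≤ 1 + ρ * (1/μs - 1) := by nlinarith
  have hc0 : (0:ℝ) ≤ 1 + ρ * (1/μs - 1) := by linarith
  have hKid : μs * (1 + ρ * (1 / μs - 1)) ^ q + (1 - μs) * (1 - ρ) ^ q
      = S4.Qf q ρ (1/μs) / (1/μs) := by
    unfold S4.Qf S4.phi S4.phi0
    have e1 : ρ * (1/μs) + (1 - ρ) = 1 + ρ * (1/μs - 1) := by ring
    rw [e1]
    field_simp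
    ring
  have hlam' : lam = Real.log (S4.Qf q ρ (1/μs) / (1/μs)) / Real.log (1/μs) / (q-1) := by
    rw [hlam, hKid]
    rw [div_div]
    ring_nf
  -- bounds on lam
  have hcomb : μs * (1 + ρ * (1/μs - 1)) + (1 - μs) * (1 - ρ) = 1 := by
    field_simp
    ring
  have hK1 : (1:ℝ) ≤ μs * (1 + ρ * (1 / μs - 1)) ^ q + (1 - μs) * (1 - ρ) ^ q := by
    have hcvx := convexOn_rpow (by linarith : (1:ℝ) ≤ q)
    have h := hcvx.2 (Set.mem_Ici.2 hc0) (Set.mem_Ici.2 (by linarith : (0:ℝ) ≤ 1 - ρ))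
      hμs_pos.le (by linarith : (0:ℝ) ≤ 1 - μs) (by ring)
    simp only [smul_eq_mul] at h
    rw [hcomb, Real.one_rpow] at h
    exact h
  have hKM : μs * (1 + ρ * (1 / μs - 1)) ^ q + (1 - μs) * (1 - ρ) ^ q ≤ (1/μs) ^ (q-1) := by
    set c := 1 + ρ * (1/μs - 1) with hcdef
    have hcT : c ≤ 1/μs := by
      rw [hcdef]
      nlinarith
    have hcq : c ^ q ≤ (1/μs)^(q-1) * c := by
      have e : c ^ q = c^(q-1) * c := by
        rw [← Real.rpow_add_one (by linarith : c ≠ 0) (q-1)]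
        norm_num
      rw [e]
      exact mul_le_mul_of_nonneg_right
        (Real.rpow_le_rpow (by linarith) hcT (by linarith)) (by linarith)
    have h1ρq : ((1:ℝ) - ρ) ^ q ≤ (1/μs)^(q-1) * (1 - ρ) := by
      have e1 : ((1:ℝ) - ρ) ^ q ≤ (1 - ρ) ^ (1:ℝ) :=
        Real.rpow_le_rpow_of_exponent_ge (by linarith) (by linarith) (by linarith)
      rw [Real.rpow_one] at e1
      have e2 : (1:ℝ) ≤ (1/μs)^(q-1) := by
        calc (1:ℝ) = (1/μs) ^ (0:ℝ) := by rw [Real.rpow_zero]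
          _ ≤ (1/μs)^(q-1) := Real.rpow_le_rpow_of_exponent_le hT1.le (by linarith)
      nlinarith
    calc μs * c ^ q + (1 - μs) * (1 - ρ) ^ q
        ≤ μs * ((1/μs)^(q-1) * c) + (1 - μs) * ((1/μs)^(q-1) * (1 - ρ)) := by
          have := mul_le_mul_of_nonneg_left hcq hμs_pos.le
          have := mul_le_mul_of_nonneg_left h1ρq (by linarith : (0:ℝ) ≤ 1 - μs)
          linarith
      _ = (1/μs)^(q-1) * (μs * c + (1 - μs) * (1 - ρ)) := by ring
      _ = (1/μs)^(q-1) := by rw [hcomb, mul_one]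
  have hlam0 : 0 ≤ lam := by
    rw [hlam]
    apply div_nonneg
    · exact Real.log_nonneg hK1
    · positivity
  have hlam1 : lam ≤ 1 := by
    rw [hlam, div_le_one (by positivity)]
    calc Real.log (μs * (1 + ρ * (1 / μs - 1)) ^ q + (1 - μs) * (1 - ρ) ^ q)
        ≤ Real.log ((1/μs) ^ (q-1)) := Real.log_le_log (by linarith) hKM
      _ = (q-1) * Real.log (1/μs) := Real.log_rpow hT0 _
  -- apply main claim
  have hmain := S4.main_claim hq hρ0' hρ1' μ hμpos hμsum hμs_le hμs_pos hμs1 hlam'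
    hlam0 hlam1 (Finset.univ : Finset (Fin n)) f hf
  rw [S4.Noi_univ] at hmain
  refine le_trans hmain (le_of_eq ?_)
  rw [Finset.powerset_univ]
  refine Finset.prod_congr rfl fun S _ => ?_
  rw [Finset.compl_univ, Finset.union_empty, Finset.card_univ, Fintype.card_fin]
end
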